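/- arXiv:math/9803130 — 2 statements merged into one kernel-verified Lean document; each statement's English description precedes it below -/
import Mathlib

section
/- Let a_{2m}(q) = Σ_P q^{area(P)}, summed over translation-classes of r-symmetric convex polyominoes P of half-perimeter 2m, with the convention a₀(q) = 1. Then a₀(q) = 1, a₂(q) = q, a₄(q) = q⁴, and these polynomials satisfy: (a) a_{2m}(q) = q^{2m−1}·a_{2m−2}(q) + Σ_{j=1}^{m−2} q^{(m−2)² + 4 − j²}·a_{2j}(q) for all m ≥ 1 (empty sum for m ≤ 2); (b) a_{2m}(q) = q^{2m−5}(1+q⁴)·a_{2m−2}(q) + q⁴(1 − q^{4m−12})·a_{2m−4}(q) for all m ≥ 3. -/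
/-- A cell of the square lattice. -/
abbrev Cell : Type := ℤ × ℤ

/-- Translation of a finite set of cells by a vector `v`. -/
def cellTranslate (v : Cell) (P : Finset Cell) : Finset Cell :=
  P.image fun c => (c.1 + v.1, c.2 + v.2)

/-- A polyomino: a finite nonempty set of cells, connected under edge-adjacency. -/
def IsPolyomino (P : Finset Cell) : Prop :=
  P.Nonempty ∧ ∀ a ∈ P, ∀ b ∈ P,
    Relation.ReflTransGen
      (fun c d => c ∈ P ∧ d ∈ P ∧ (c.1 - d.1).natAbs + (c.2 - d.2).natAbs = 1) a b

/-- Convexity: the cells in each column and in each row form a contiguous interval. -/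
def IsConvexPoly (P : Finset Cell) : Prop :=
  (∀ x y₁ y₂ y : ℤ, (x, y₁) ∈ P → (x, y₂) ∈ P → y₁ ≤ y → y ≤ y₂ → (x, y) ∈ P) ∧
  (∀ y x₁ x₂ x : ℤ, (x₁, y) ∈ P → (x₂, y) ∈ P → x₁ ≤ x → x ≤ x₂ → (x, y) ∈ P)

/-- The width: number of distinct first coordinates. -/
def width (P : Finset Cell) : ℕ := (P.image Prod.fst).card

/-- The height: number of distinct second coordinates. -/
def height (P : Finset Cell) : ℕ := (P.image Prod.snd).card

/-- The area: number of cells. -/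
def area (P : Finset Cell) : ℕ := P.card

/-- Rotation by a right angle: `r(i,j) = (-j,i)`. -/
def rotMap : Cell → Cell := fun c => (-c.2, c.1)

/-- Horizontal reflection: `h(i,j) = (i,-j)`. -/
def hMap : Cell → Cell := fun c => (c.1, -c.2)

/-- Vertical reflection: `v(i,j) = (-i,j)`. -/
def vMap : Cell → Cell := fun c => (-c.1, c.2)

/-- Diagonal reflection `d₁(i,j) = (-j,-i)`. -/
def d1Map : Cell → Cell := fun c => (-c.2, -c.1)

/-- Diagonal reflection `d₂(i,j) = (j,i)`. -/
def d2Map : Cell → Cell := fun c => (c.2, c.1)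

/-- `P` is `g`-symmetric: `g·P` is a cellTranslate of `P`. -/
def SymBy (g : Cell → Cell) (P : Finset Cell) : Prop :=
  ∃ v : Cell, P.image g = cellTranslate v P

/-- The translation class of `P`: the set of all its translates. -/
def transClass (P : Finset Cell) : Set (Finset Cell) :=
  {Q | ∃ v : Cell, Q = cellTranslate v P}

/-- The number of translation classes of finite cell-sets satisfying the
(translation-invariant) predicate `Φ`. -/
noncomputable def classCount (Φ : Finset Cell → Prop) : ℕ :=
  Set.ncard {O : Set (Finset Cell) | ∃ P : Finset Cell, Φ P ∧ O = transClass P}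

namespace Stmt8


/-- conjugate profile of an antitone function -/
noncomputable def cnj (ν : ℕ → ℕ) (t : ℕ) : ℕ := sInf {z | ν z ≤ t}

structure ValidData (m : ℕ) (ν : ℕ → ℕ) : Prop where
  anti : Antitone ν
  exz : ∃ z, ν z = 0
  bound : ν 0 + cnj ν 0 + 1 ≤ m

theorem cnj_le_iff {ν : ℕ → ℕ} (anti : Antitone ν) (exz : ∃ z, ν z = 0)
    {t x : ℕ} : cnj ν t ≤ x ↔ ν x ≤ t := by
  constructor
  · intro h
    have hne : {z | ν z ≤ t}.Nonempty := by
      obtain ⟨z, hz⟩ := exz; exact ⟨z, by simp [hz]⟩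
    have := Nat.sInf_mem hne
    exact le_trans (anti h) this
  · intro h
    exact Nat.sInf_le h

theorem lt_cnj_iff {ν : ℕ → ℕ} (anti : Antitone ν) (exz : ∃ z, ν z = 0)
    {t x : ℕ} : x < cnj ν t ↔ t < ν x := by
  rw [← not_le, ← not_le, cnj_le_iff anti exz]

theorem cnj_anti {ν : ℕ → ℕ} (anti : Antitone ν) (exz : ∃ z, ν z = 0) :
    Antitone (cnj ν) := by
  intro s t hst
  rw [cnj_le_iff anti exz]
  have hne : {z | ν z ≤ s}.Nonempty := by
    obtain ⟨z, hz⟩ := exz; exact ⟨z, by simp [hz]⟩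
  have hmem : ν (sInf {z | ν z ≤ s}) ≤ s := Nat.sInf_mem hne
  exact le_trans (show ν (cnj ν s) ≤ s from hmem) hst

theorem nu_zero_of_cnj {ν : ℕ → ℕ} (anti : Antitone ν) (exz : ∃ z, ν z = 0)
    {y : ℕ} (h : cnj ν 0 ≤ y) : ν y = 0 :=
  Nat.le_zero.mp ((cnj_le_iff anti exz).mp h)

theorem lt_cnj_zero {ν : ℕ → ℕ} (anti : Antitone ν) (exz : ∃ z, ν z = 0)
    {y : ℕ} (h : 1 ≤ ν y) : y < cnj ν 0 := (lt_cnj_iff anti exz).mpr h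

theorem lt_nu_zero {ν : ℕ → ℕ} (anti : Antitone ν) (exz : ∃ z, ν z = 0)
    {t : ℕ} (h : 1 ≤ cnj ν t) : t < ν 0 := by
  have := (lt_cnj_iff anti exz).mp (show 0 < cnj ν t from h)
  exact this

/-- weight = sum of the profile -/
noncomputable def wt (ν : ℕ → ℕ) : ℕ := ∑ y ∈ Finset.range (cnj ν 0), ν y

theorem wt_eq {ν : ℕ → ℕ} (anti : Antitone ν) (exz : ∃ z, ν z = 0)
    {m : ℕ} (h : cnj ν 0 ≤ m) : ∑ y ∈ Finset.range m, ν y = wt ν := by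
  rw [wt]
  symm
  apply Finset.sum_subset
  · intro y hy
    simp only [Finset.mem_range] at *
    omega
  · intro y _ hy
    simp only [Finset.mem_range, not_lt] at hy
    exact nu_zero_of_cnj anti exz hy

theorem wt_le' {ν : ℕ → ℕ} (anti : Antitone ν) : wt ν ≤ cnj ν 0 * ν 0 := by
  calc wt ν ≤ ∑ _y ∈ Finset.range (cnj ν 0), ν 0 :=
        Finset.sum_le_sum (fun i _ => anti (Nat.zero_le i))
    _ = cnj ν 0 * ν 0 := by simp [mul_comm]

theorem sum_cnj {ν : ℕ → ℕ} (anti : Antitone ν) (exz : ∃ z, ν z = 0)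
    {m : ℕ} (h1 : ν 0 ≤ m) (h2 : cnj ν 0 ≤ m) :
    ∑ t ∈ Finset.range m, cnj ν t = ∑ y ∈ Finset.range m, ν y := by
  have key : ∀ t, cnj ν t = ∑ z ∈ Finset.range m, if t < ν z then 1 else 0 := by
    intro t
    rw [← Finset.card_filter]
    have : Finset.filter (fun z => t < ν z) (Finset.range m) = Finset.range (cnj ν t) := by
      ext z
      simp only [Finset.mem_filter, Finset.mem_range]
      constructor
      · rintro ⟨_, hz⟩; exact (lt_cnj_iff anti exz).mpr hz
      · intro hz
        refine ⟨lt_of_lt_of_le hz (le_trans (cnj_anti anti exz (Nat.zero_le t)) h2),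
          (lt_cnj_iff anti exz).mp hz⟩
    rw [this, Finset.card_range]
  have key2 : ∀ z, ν z = ∑ t ∈ Finset.range m, if t < ν z then 1 else 0 := by
    intro z
    rw [← Finset.card_filter]
    have : Finset.filter (fun t => t < ν z) (Finset.range m) = Finset.range (ν z) := by
      ext t
      simp only [Finset.mem_filter, Finset.mem_range]
      constructor
      · rintro ⟨_, ht⟩; exact ht
      · intro ht; exact ⟨lt_of_lt_of_le ht (le_trans (anti (Nat.zero_le z)) h1), ht⟩
    rw [this, Finset.card_range]
  calc ∑ t ∈ Finset.range m, cnj ν t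
      = ∑ t ∈ Finset.range m, ∑ z ∈ Finset.range m, if t < ν z then 1 else 0 := by
        exact Finset.sum_congr rfl (fun t _ => key t)
    _ = ∑ z ∈ Finset.range m, ∑ t ∈ Finset.range m, if t < ν z then 1 else 0 :=
        Finset.sum_comm
    _ = ∑ y ∈ Finset.range m, ν y := by
        exact Finset.sum_congr rfl (fun z _ => (key2 z).symm)

-- ### PART 2
theorem cnj_eq_zero_iff {ν : ℕ → ℕ} (anti : Antitone ν) (exz : ∃ z, ν z = 0)
    {t : ℕ} : cnj ν t = 0 ↔ ν 0 ≤ t := by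
  rw [← Nat.le_zero, cnj_le_iff anti exz]

namespace ValidData
variable {m : ℕ} {ν : ℕ → ℕ} (V : ValidData m ν)

theorem nu_nu (V : ValidData m ν) {a b : ℕ} (hab : m ≤ a + b + 2) :
    ν a + ν b + 1 ≤ m := by
  have ha0 : ν a ≤ ν 0 := V.anti (Nat.zero_le a)
  have hb0 : ν b ≤ ν 0 := V.anti (Nat.zero_le b)
  have hB := V.bound
  rcases Nat.eq_zero_or_pos (ν a) with h | h
  · omega
  rcases Nat.eq_zero_or_pos (ν b) with h' | h'
  · omega
  have h1 := lt_cnj_zero V.anti V.exz h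
  have h2 := lt_cnj_zero V.anti V.exz h'
  omega

theorem cnj_cnj (V : ValidData m ν) {a b : ℕ} (hab : m ≤ a + b + 2) :
    cnj ν a + cnj ν b + 1 ≤ m := by
  have ha0 : cnj ν a ≤ cnj ν 0 := cnj_anti V.anti V.exz (Nat.zero_le a)
  have hb0 : cnj ν b ≤ cnj ν 0 := cnj_anti V.anti V.exz (Nat.zero_le b)
  have hB := V.bound
  rcases Nat.eq_zero_or_pos (cnj ν a) with h | h
  · omega
  rcases Nat.eq_zero_or_pos (cnj ν b) with h' | h'
  · omega
  have h1 := lt_nu_zero V.anti V.exz h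
  have h2 := lt_nu_zero V.anti V.exz h'
  omega

theorem mixed (V : ValidData m ν) (a b : ℕ) : ν a + cnj ν b + 1 ≤ m := by
  have ha0 : ν a ≤ ν 0 := V.anti (Nat.zero_le a)
  have hb0 : cnj ν b ≤ cnj ν 0 := cnj_anti V.anti V.exz (Nat.zero_le b)
  have hB := V.bound
  omega

end ValidData

/-- left cut of row `y` -/
noncomputable def Lo (m : ℕ) (ν : ℕ → ℕ) (y : ℕ) : ℕ := max (ν y) (cnj ν (m - 1 - y))
/-- right cut of row `y` -/
noncomputable def Rc (m : ℕ) (ν : ℕ → ℕ) (y : ℕ) : ℕ := max (ν (m - 1 - y)) (cnj ν y)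

theorem lo_hi {m : ℕ} {ν : ℕ → ℕ} (V : ValidData m ν) (y : ℕ) :
    Lo m ν y + Rc m ν y + 1 ≤ m := by
  have h1 : ν y + ν (m - 1 - y) + 1 ≤ m := V.nu_nu (by omega)
  have h2 : cnj ν (m - 1 - y) + cnj ν y + 1 ≤ m := V.cnj_cnj (by omega)
  have h3 := V.mixed y y
  have h4 := V.mixed (m - 1 - y) (m - 1 - y)
  rw [Lo, Rc]
  omega

theorem overlap1 {m : ℕ} {ν : ℕ → ℕ} (V : ValidData m ν) (y : ℕ) :
    Lo m ν (y + 1) + Rc m ν y + 1 ≤ m := by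
  have h1 : ν (y + 1) + ν (m - 1 - y) + 1 ≤ m := V.nu_nu (by omega)
  have h2 : cnj ν (m - 1 - (y + 1)) + cnj ν y + 1 ≤ m := V.cnj_cnj (by omega)
  have h3 := V.mixed (y + 1) y
  have h4 := V.mixed (m - 1 - y) (m - 1 - (y + 1))
  rw [Lo, Rc]
  omega

theorem overlap2 {m : ℕ} {ν : ℕ → ℕ} (V : ValidData m ν) (y : ℕ) :
    Lo m ν y + Rc m ν (y + 1) + 1 ≤ m := by
  have h1 : ν y + ν (m - 1 - (y + 1)) + 1 ≤ m := V.nu_nu (by omega)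
  have h2 : cnj ν (m - 1 - y) + cnj ν (y + 1) + 1 ≤ m := V.cnj_cnj (by omega)
  have h3 := V.mixed y (y + 1)
  have h4 := V.mixed (m - 1 - (y + 1)) (m - 1 - y)
  rw [Lo, Rc]
  omega

/-- the canonical shape, in ℕ coordinates -/
noncomputable def shapeN (m : ℕ) (ν : ℕ → ℕ) : Finset (ℕ × ℕ) :=
  (Finset.range m ×ˢ Finset.range m).filter (fun c =>
    ν c.2 ≤ c.1 ∧ cnj ν (m - 1 - c.2) ≤ c.1 ∧
    ν (m - 1 - c.2) + c.1 + 1 ≤ m ∧ cnj ν c.2 + c.1 + 1 ≤ m)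

theorem mem_shapeN {m : ℕ} {ν : ℕ → ℕ} {x y : ℕ} :
    (x, y) ∈ shapeN m ν ↔ y < m ∧ Lo m ν y ≤ x ∧ x + Rc m ν y + 1 ≤ m := by
  simp only [shapeN, Finset.mem_filter, Finset.mem_product, Finset.mem_range, Lo, Rc]
  omega

theorem row_mem {m : ℕ} {ν : ℕ → ℕ} (V : ValidData m ν) {y : ℕ} (hy : y < m) :
    (Lo m ν y, y) ∈ shapeN m ν := by
  rw [mem_shapeN]
  exact ⟨hy, le_refl _, lo_hi V y⟩

theorem shapeN_nonempty {m : ℕ} {ν : ℕ → ℕ} (V : ValidData m ν) (hm : 1 ≤ m) :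
    (shapeN m ν).Nonempty := ⟨_, row_mem V hm⟩

theorem rot_memN {m : ℕ} {ν : ℕ → ℕ} (V : ValidData m ν) {x y : ℕ}
    (hx : x < m) (hy : y < m) :
    (x, y) ∈ shapeN m ν ↔ (m - 1 - y, x) ∈ shapeN m ν := by
  have anti := V.anti; have exz := V.exz
  simp only [shapeN, Finset.mem_filter, Finset.mem_product, Finset.mem_range]
  constructor
  · rintro ⟨-, ⟨c1, c2, c3, c4⟩⟩
    have r1 : ν x ≤ m - 1 - y := (cnj_le_iff anti exz).mp c2
    have r2 : cnj ν (m - 1 - x) ≤ m - 1 - y := by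
      rw [cnj_le_iff anti exz]; omega
    have r3 : ν (m - 1 - x) ≤ y := by
      rw [← cnj_le_iff anti exz]; omega
    have r4 : cnj ν x ≤ y := (cnj_le_iff anti exz).mpr c1
    exact ⟨⟨by omega, hx⟩, r1, r2, by omega, by omega⟩
  · rintro ⟨-, ⟨c1, c2, c3, c4⟩⟩
    have r1 : ν y ≤ x := by
      rw [← cnj_le_iff anti exz] at *; omega
    have r2 : cnj ν (m - 1 - y) ≤ x := by
      rw [cnj_le_iff anti exz]; exact c1
    have r3 : ν (m - 1 - y) + x + 1 ≤ m := by
      have : ν (m - 1 - y) ≤ m - 1 - x := by rw [← cnj_le_iff anti exz]; exact c2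
      omega
    have r4 : cnj ν y + x + 1 ≤ m := by
      have : cnj ν y ≤ m - 1 - x := by
        rw [cnj_le_iff anti exz]; omega
      omega
    exact ⟨⟨hx, hy⟩, r1, r2, r3, r4⟩

theorem max_sum_left {m : ℕ} {ν : ℕ → ℕ} (V : ValidData m ν) {y : ℕ} (hy : y < m) :
    Lo m ν y = ν y + cnj ν (m - 1 - y) := by
  rcases Nat.eq_zero_or_pos (ν y) with h | h
  · rw [Lo, h]; omega
  rcases Nat.eq_zero_or_pos (cnj ν (m - 1 - y)) with h' | h'
  · rw [Lo, h']; omega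
  have h1 := lt_cnj_zero V.anti V.exz h
  have h2 := lt_nu_zero V.anti V.exz h'
  have := V.bound
  omega

theorem max_sum_right {m : ℕ} {ν : ℕ → ℕ} (V : ValidData m ν) {y : ℕ} (hy : y < m) :
    Rc m ν y = ν (m - 1 - y) + cnj ν y := by
  rcases Nat.eq_zero_or_pos (ν (m - 1 - y)) with h | h
  · rw [Rc, h]; omega
  rcases Nat.eq_zero_or_pos (cnj ν y) with h' | h'
  · rw [Rc, h']; omega
  have h1 := lt_cnj_zero V.anti V.exz h
  have h2 := lt_nu_zero V.anti V.exz h'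
  have := V.bound
  omega

theorem card_shapeN {m : ℕ} {ν : ℕ → ℕ} (V : ValidData m ν) :
    (shapeN m ν).card + 4 * wt ν = m * m := by
  have anti := V.anti; have exz := V.exz
  have hcard : (shapeN m ν).card =
      ∑ y ∈ Finset.range m, (Finset.filter (fun c => c.2 = y) (shapeN m ν)).card := by
    apply Finset.card_eq_sum_card_fiberwise
    intro c hc
    rcases c with ⟨x, y⟩
    rw [Finset.mem_coe, mem_shapeN] at hc
    exact Finset.mem_range.mpr hc.1
  have hfiber : ∀ y < m, (Finset.filter (fun c => c.2 = y) (shapeN m ν)).card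
      = m - (Lo m ν y + Rc m ν y) := by
    intro y hy
    have : Finset.filter (fun c => c.2 = y) (shapeN m ν) =
        (Finset.Icc (Lo m ν y) (m - 1 - Rc m ν y)).map
          ⟨fun x => (x, y), fun a b h => by simpa using h⟩ := by
      ext ⟨x, y'⟩
      simp only [Finset.mem_filter, Finset.mem_map, Finset.mem_Icc,
        Function.Embedding.coeFn_mk, mem_shapeN]
      constructor
      · rintro ⟨⟨-, h1, h2⟩, rfl⟩
        exact ⟨x, ⟨h1, by omega⟩, rfl⟩
      · rintro ⟨x', ⟨h1, h2⟩, h3⟩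
        obtain ⟨rfl, rfl⟩ := h3
        have := lo_hi V y
        exact ⟨⟨hy, h1, by omega⟩, rfl⟩
    rw [this, Finset.card_map, Nat.card_Icc]
    have := lo_hi V y
    omega
  have hpoint : ∀ y ∈ Finset.range m,
      (Finset.filter (fun c => c.2 = y) (shapeN m ν)).card
        + (ν y + ν (m - 1 - y) + (cnj ν y + cnj ν (m - 1 - y))) = m := by
    intro y hy
    rw [Finset.mem_range] at hy
    rw [hfiber y hy]
    have h1 := lo_hi V y
    have h2 := max_sum_left V hy
    have h3 := max_sum_right V hy
    omega
  have hsum := Finset.sum_congr rfl hpoint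
  rw [Finset.sum_add_distrib, ← hcard] at hsum
  have e1 : ∑ y ∈ Finset.range m, ν (m - 1 - y) = ∑ y ∈ Finset.range m, ν y := by
    exact Finset.sum_range_reflect (fun i => ν i) m
  have e2 : ∑ y ∈ Finset.range m, cnj ν (m - 1 - y) = ∑ y ∈ Finset.range m, cnj ν y := by
    exact Finset.sum_range_reflect (fun i => cnj ν i) m
  have e3 : ∑ t ∈ Finset.range m, cnj ν t = ∑ y ∈ Finset.range m, ν y :=
    sum_cnj anti exz (by have := V.bound; omega) (by have := V.bound; omega)
  have e4 : ∑ y ∈ Finset.range m, ν y = wt ν := wt_eq anti exz (by have := V.bound; omega)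
  rw [Finset.sum_add_distrib, Finset.sum_add_distrib, Finset.sum_add_distrib, e1, e2, e3, e4] at hsum
  rw [Finset.sum_const, Finset.card_range, smul_eq_mul] at hsum
  omega

theorem lo_sz {m : ℕ} {ν : ℕ → ℕ} (V : ValidData m ν) : Lo m ν (cnj ν 0) = 0 := by
  have h1 : ν (cnj ν 0) = 0 := nu_zero_of_cnj V.anti V.exz (le_refl _)
  have h2 : cnj ν (m - 1 - cnj ν 0) = 0 := by
    rw [cnj_eq_zero_iff V.anti V.exz]
    have := V.bound; omega
  rw [Lo, h1, h2]
  simp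

-- ### PART 3
/-- normalized finite cell set: contained in upper-right quadrant, touching both axes -/
def Norm (P : Finset Cell) : Prop :=
  (∀ c ∈ P, 0 ≤ c.1 ∧ 0 ≤ c.2) ∧ (∃ c ∈ P, c.1 = 0) ∧ (∃ c ∈ P, c.2 = 0)

noncomputable def shape (m : ℕ) (ν : ℕ → ℕ) : Finset Cell :=
  (shapeN m ν).image (fun p => ((p.1 : ℤ), (p.2 : ℤ)))

theorem mem_shape {m : ℕ} {ν : ℕ → ℕ} {a : Cell} :
    a ∈ shape m ν ↔ 0 ≤ a.1 ∧ 0 ≤ a.2 ∧ (a.1.toNat, a.2.toNat) ∈ shapeN m ν := by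
  constructor
  · rintro ha
    simp only [shape, Finset.mem_image] at ha
    obtain ⟨⟨x, y⟩, hm, rfl⟩ := ha
    simpa using hm
  · rintro ⟨h1, h2, h3⟩
    simp only [shape, Finset.mem_image]
    exact ⟨(a.1.toNat, a.2.toNat), h3, by simp [h1, h2]⟩

theorem mem_shape_natCast {m : ℕ} {ν : ℕ → ℕ} {x y : ℕ} :
    ((x : ℤ), (y : ℤ)) ∈ shape m ν ↔ (x, y) ∈ shapeN m ν := by
  rw [mem_shape]; simp

theorem shape_subset_box {m : ℕ} {ν : ℕ → ℕ} {a : Cell} (ha : a ∈ shape m ν) :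
    0 ≤ a.1 ∧ a.1 < m ∧ 0 ≤ a.2 ∧ a.2 < m := by
  rw [mem_shape] at ha
  obtain ⟨h1, h2, h3⟩ := ha
  rw [mem_shapeN] at h3
  refine ⟨h1, ?_, h2, ?_⟩ <;> omega

/-- generic connectivity criterion -/
theorem connected_of (Q : Finset Cell)
    (hrow : ∀ c ∈ Q, ∀ d ∈ Q, c.2 = d.2 → ∀ x : ℤ, min c.1 d.1 ≤ x → x ≤ max c.1 d.1 →
      (x, c.2) ∈ Q)
    (hcross : ∀ c ∈ Q, ∀ d ∈ Q, c.2 < d.2 → ∃ x, (x, c.2) ∈ Q ∧ (x, c.2 + 1) ∈ Q) :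
    ∀ a ∈ Q, ∀ b ∈ Q, Relation.ReflTransGen
      (fun c d => c ∈ Q ∧ d ∈ Q ∧ (c.1 - d.1).natAbs + (c.2 - d.2).natAbs = 1) a b := by
  set r := fun c d : Cell => c ∈ Q ∧ d ∈ Q ∧ (c.1 - d.1).natAbs + (c.2 - d.2).natAbs = 1
    with hr
  have rowpath : ∀ n : ℕ, ∀ x x' y : ℤ, (x, y) ∈ Q → (x', y) ∈ Q →
      (x' - x).natAbs = n → Relation.ReflTransGen r (x, y) (x', y) := by
    intro n
    induction n using Nat.strong_induction_on with
    | _ n ih =>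
      intro x x' y hx hx' hn
      rcases lt_trichotomy x x' with h | h | h
      · have hmid : (x + 1, y) ∈ Q := by
          have := hrow _ hx _ hx' rfl (x + 1) (by first | omega | (simp; omega) | simp) (by first | omega | (simp; omega) | simp)
          exact this
        have hstep : r (x, y) (x + 1, y) := ⟨hx, hmid, by first | omega | (simp; omega) | simp⟩
        exact Relation.ReflTransGen.head hstep
          (ih (x' - (x + 1)).natAbs (by omega) _ _ _ hmid hx' rfl)
      · subst h; exact Relation.ReflTransGen.refl
      · have hmid : (x - 1, y) ∈ Q := by
          have := hrow _ hx' _ hx rfl (x - 1) (by first | omega | (simp; omega) | simp) (by first | omega | (simp; omega) | simp)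
          exact this
        have hstep : r (x, y) (x - 1, y) := ⟨hx, hmid, by first | omega | (simp; omega) | simp⟩
        exact Relation.ReflTransGen.head hstep
          (ih (x' - (x - 1)).natAbs (by omega) _ _ _ hmid hx' rfl)
  have main : ∀ n : ℕ, ∀ a ∈ Q, ∀ b ∈ Q, (b.2 - a.2).natAbs = n →
      Relation.ReflTransGen r a b := by
    intro n
    induction n using Nat.strong_induction_on with
    | _ n ih =>
      rintro ⟨ax, ay⟩ ha ⟨bx, by'⟩ hb hn
      rcases lt_trichotomy ay by' with h | h | h
      · obtain ⟨x, h1, h2⟩ := hcross _ ha _ hb (by simpa using h)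
        have p1 : Relation.ReflTransGen r (ax, ay) (x, ay) := rowpath _ _ _ _ ha h1 rfl
        have hstep : r (x, ay) (x, ay + 1) := ⟨h1, h2, by simp⟩
        have p2 : Relation.ReflTransGen r (x, ay + 1) (bx, by') :=
          ih (by' - (ay + 1)).natAbs (by omega) _ h2 _ hb (by first | omega | (simp; omega) | simp)
        exact (p1.trans (Relation.ReflTransGen.head hstep p2))
      · subst h; exact rowpath _ _ _ _ ha hb rfl
      · obtain ⟨x, h1, h2⟩ := hcross _ hb _ ha (by simpa using h)
        have p1 : Relation.ReflTransGen r (ax, ay) (x, by' + 1) :=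
          ih (by' + 1 - ay).natAbs (by omega) _ ha _ h2 (by first | omega | (simp; omega) | simp)
        have hstep : r (x, by' + 1) (x, by') := ⟨h2, h1, by simp⟩
        have p2 : Relation.ReflTransGen r (x, by') (bx, by') := rowpath _ _ _ _ h1 hb rfl
        exact p1.trans (Relation.ReflTransGen.head hstep p2)
  intro a ha b hb
  exact main _ a ha b hb rfl

theorem shape_poly {m : ℕ} {ν : ℕ → ℕ} (V : ValidData m ν) (hm : 1 ≤ m) :
    IsPolyomino (shape m ν) := by
  constructor
  · refine ⟨((Lo m ν 0 : ℤ), (0 : ℤ)), ?_⟩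
    rw [show ((Lo m ν 0 : ℤ), (0:ℤ)) = (((Lo m ν 0 : ℕ) : ℤ), ((0:ℕ) : ℤ)) by simp,
      mem_shape_natCast, mem_shapeN]
    exact ⟨hm, le_refl _, lo_hi V 0⟩
  · apply connected_of
    · rintro ⟨cx, cy⟩ hc ⟨dx, dy⟩ hd h x hx1 hx2
      simp only at h; subst h
      rw [mem_shape] at hc hd ⊢
      obtain ⟨e1, e2, e3⟩ := hc; obtain ⟨f1, f2, f3⟩ := hd
      rw [mem_shapeN] at e3 f3 ⊢
      dsimp only at *
      constructor
      · omega
      constructor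
      · omega
      refine ⟨e3.1, ?_, ?_⟩ <;> omega
    · rintro ⟨cx, cy⟩ hc ⟨dx, dy⟩ hd h
      rw [mem_shape] at hc hd
      obtain ⟨e1, e2, e3⟩ := hc; obtain ⟨f1, f2, f3⟩ := hd
      dsimp only at e1 e2 e3 f1 f2 f3 h
      rw [mem_shapeN] at e3 f3
      set y := cy.toNat with hy
      have hy1 : y + 1 < m := by omega
      refine ⟨(max (Lo m ν y) (Lo m ν (y+1)) : ℕ), ?_, ?_⟩
      · rw [show ((max (Lo m ν y) (Lo m ν (y+1)) : ℕ) : ℤ) = (((max (Lo m ν y) (Lo m ν (y+1)) : ℕ)) : ℤ) from rfl]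
        have : (((max (Lo m ν y) (Lo m ν (y+1)) : ℕ) : ℤ), cy) = (((max (Lo m ν y) (Lo m ν (y+1)) : ℕ) : ℤ), ((y : ℕ) : ℤ)) := by
          rw [Prod.mk.injEq]
          exact ⟨rfl, by rw [hy]; omega⟩
        rw [this, mem_shape_natCast, mem_shapeN]
        have o1 := overlap1 V y
        have o2 := lo_hi V y
        exact ⟨by omega, by omega, by omega⟩
      · have : (((max (Lo m ν y) (Lo m ν (y+1)) : ℕ) : ℤ), cy + 1) = (((max (Lo m ν y) (Lo m ν (y+1)) : ℕ) : ℤ), (((y+1) : ℕ) : ℤ)) := by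
          rw [Prod.mk.injEq]
          exact ⟨rfl, by rw [hy]; push_cast; omega⟩
        rw [this, mem_shape_natCast, mem_shapeN]
        have o1 := overlap2 V y
        have o2 := lo_hi V (y+1)
        exact ⟨by omega, by omega, by omega⟩

theorem shape_convex {m : ℕ} {ν : ℕ → ℕ} (V : ValidData m ν) :
    IsConvexPoly (shape m ν) := by
  constructor
  · -- columns
    intro x y1 y2 y h1 h2 hy1 hy2
    rw [mem_shape] at h1 h2 ⊢
    obtain ⟨e1, e2, e3⟩ := h1; obtain ⟨f1, f2, f3⟩ := h2
    dsimp only at *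
    refine ⟨e1, by omega, ?_⟩
    have hx : x.toNat < m := by
      rw [mem_shapeN] at e3; omega
    have hy1' : y1.toNat < m := by
      rw [mem_shapeN] at e3; omega
    have hy2' : y2.toNat < m := by
      rw [mem_shapeN] at f3; omega
    have hym : y.toNat < m := by omega
    rw [rot_memN V hx (by omega : y.toNat < m), mem_shapeN]
    rw [rot_memN V hx hy1', mem_shapeN] at e3
    rw [rot_memN V hx hy2', mem_shapeN] at f3
    refine ⟨e3.1, ?_, ?_⟩ <;> omega
  · intro y x1 x2 x h1 h2 hx1 hx2
    rw [mem_shape] at h1 h2 ⊢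
    obtain ⟨e1, e2, e3⟩ := h1; obtain ⟨f1, f2, f3⟩ := h2
    dsimp only at *
    refine ⟨by omega, e2, ?_⟩
    rw [mem_shapeN] at e3 f3 ⊢
    refine ⟨e3.1, ?_, ?_⟩ <;> omega

theorem shape_rot_cell {m : ℕ} {ν : ℕ → ℕ} (V : ValidData m ν) {a : Cell}
    (ha : a ∈ shape m ν) : ((m : ℤ) - 1 - a.2, a.1) ∈ shape m ν := by
  have hbox := shape_subset_box ha
  rw [mem_shape] at ha ⊢
  obtain ⟨e1, e2, e3⟩ := ha
  have h1 : ((m:ℤ) - 1 - a.2).toNat = m - 1 - a.2.toNat := by omega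
  have h2 : (a.1).toNat < m := by rw [mem_shapeN] at e3; omega
  have h3 : (a.2).toNat < m := by rw [mem_shapeN] at e3; omega
  refine ⟨by omega, e1, ?_⟩
  simp only [h1]
  exact (rot_memN V h2 h3).mp e3

theorem shape_symby {m : ℕ} {ν : ℕ → ℕ} (V : ValidData m ν) :
    SymBy rotMap (shape m ν) := by
  refine ⟨(-(m - 1 : ℤ), 0), ?_⟩
  ext a
  simp only [Finset.mem_image, cellTranslate, rotMap]
  constructor
  · rintro ⟨c, hc, rfl⟩
    refine ⟨((m : ℤ) - 1 - c.2, c.1), shape_rot_cell V hc, ?_⟩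
    simp only [Prod.mk.injEq]
    constructor <;> ring
  · rintro ⟨c, hc, rfl⟩
    have hbox := shape_subset_box hc
    -- c = (x, y); target a = (x - (m-1), y) should be rot of (y, m-1-x)?
    -- rot (u, v) = (-v, u); want (-v, u) = (c.1 - (m-1), c.2) so u = c.2, v = m-1-c.1
    refine ⟨(c.2, (m:ℤ) - 1 - c.1), ?_, ?_⟩
    · -- (c.2, m-1-c.1) ∈ shape : apply shape_rot_cell three times? use inverse:
      -- rot_cell maps (x,y) ↦ (m-1-y, x). Applying to (c.2, m-1-c.1) gives
      -- (m-1-(m-1-c.1), c.2) = (c.1, c.2) = c. So we need the inverse direction.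
      have h3 := shape_rot_cell V (shape_rot_cell V (shape_rot_cell V hc))
      dsimp only at h3
      have e : (m:ℤ) - 1 - ((m:ℤ) - 1 - c.2) = c.2 := by omega
      rwa [e] at h3
    · simp only [Prod.mk.injEq]
      constructor <;> ring
  
theorem shape_norm {m : ℕ} {ν : ℕ → ℕ} (V : ValidData m ν) (hm : 1 ≤ m) :
    Norm (shape m ν) := by
  have hsz : cnj ν 0 < m := by have := V.bound; omega
  have hmem : ((0:ℕ), cnj ν 0) ∈ shapeN m ν := by
    have := lo_sz V
    rw [mem_shapeN]
    refine ⟨hsz, by omega, ?_⟩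
    have := lo_hi V (cnj ν 0)
    omega
  refine ⟨fun c hc => ?_, ?_, ?_⟩
  · have := shape_subset_box hc; exact ⟨this.1, this.2.2.1⟩
  · refine ⟨((0:ℤ), (cnj ν 0 : ℤ)), ?_, rfl⟩
    rw [show ((0:ℤ), (cnj ν 0 : ℤ)) = (((0:ℕ):ℤ), ((cnj ν 0 : ℕ) : ℤ)) by simp,
      mem_shape_natCast]
    exact hmem
  · have h2 : ((m - 1 - cnj ν 0 : ℕ), (0:ℕ)) ∈ shapeN m ν := by
      have := (rot_memN V (by omega : (0:ℕ) < m) hsz).mp hmem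
      exact this
    refine ⟨(((m - 1 - cnj ν 0 : ℕ) : ℤ), (0:ℤ)), ?_, rfl⟩
    rw [show (((m - 1 - cnj ν 0 : ℕ) : ℤ), (0:ℤ)) = (((m - 1 - cnj ν 0:ℕ):ℤ), ((0:ℕ):ℤ)) by simp,
      mem_shape_natCast]
    exact h2

theorem shape_width {m : ℕ} {ν : ℕ → ℕ} (V : ValidData m ν) :
    width (shape m ν) = m := by
  have himg : (shape m ν).image Prod.fst = (Finset.range m).image (fun x : ℕ => (x : ℤ)) := by
    ext z
    simp only [Finset.mem_image, Finset.mem_range]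
    constructor
    · rintro ⟨c, hc, rfl⟩
      have := shape_subset_box hc
      exact ⟨c.1.toNat, by omega, by omega⟩
    · rintro ⟨x, hx, rfl⟩
      -- column x nonempty: rot of row m-1-x
      have hrow : ((Lo m ν (m - 1 - x) : ℕ), (m - 1 - x : ℕ)) ∈ shapeN m ν := by
        rw [mem_shapeN]; exact ⟨by omega, le_refl _, lo_hi V _⟩
      have := (rot_memN V (by
        have := lo_hi V (m - 1 - x); omega) (by omega : m - 1 - x < m)).mp hrow
      have hxx : m - 1 - (m - 1 - x) = x := by omega
      rw [hxx] at this
      exact ⟨((x : ℤ), (Lo m ν (m - 1 - x) : ℤ)), mem_shape_natCast.mpr this, rfl⟩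
  rw [width, himg, Finset.card_image_of_injective _ (fun a b h => by exact_mod_cast h),
    Finset.card_range]

theorem shape_height {m : ℕ} {ν : ℕ → ℕ} (V : ValidData m ν) :
    height (shape m ν) = m := by
  have himg : (shape m ν).image Prod.snd = (Finset.range m).image (fun x : ℕ => (x : ℤ)) := by
    ext z
    simp only [Finset.mem_image, Finset.mem_range]
    constructor
    · rintro ⟨c, hc, rfl⟩
      have := shape_subset_box hc
      exact ⟨c.2.toNat, by omega, by omega⟩
    · rintro ⟨y, hy, rfl⟩
      refine ⟨((Lo m ν y : ℕ), (y : ℤ)), ?_, rfl⟩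
      rw [show (((Lo m ν y : ℕ) : ℤ), (y:ℤ)) = (((Lo m ν y : ℕ):ℤ), ((y:ℕ):ℤ)) by simp,
        mem_shape_natCast, mem_shapeN]
      exact ⟨hy, le_refl _, lo_hi V y⟩
  rw [height, himg, Finset.card_image_of_injective _ (fun a b h => by exact_mod_cast h),
    Finset.card_range]

theorem shape_area {m : ℕ} {ν : ℕ → ℕ} (V : ValidData m ν) :
    area (shape m ν) + 4 * wt ν = m * m := by
  rw [area, shape, Finset.card_image_of_injective _ (fun a b h => by
    simp only [Prod.mk.injEq] at h
    exact Prod.ext (by exact_mod_cast h.1) (by exact_mod_cast h.2))]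
  exact card_shapeN V

-- ### PART 4a
theorem mem_cellTranslate {v : Cell} {P : Finset Cell} {a : Cell} :
    a ∈ cellTranslate v P ↔ (a.1 - v.1, a.2 - v.2) ∈ P := by
  simp only [cellTranslate, Finset.mem_image]
  constructor
  · rintro ⟨c, hc, rfl⟩
    simpa using hc
  · intro h
    exact ⟨_, h, by simp⟩

theorem cellTranslate_zero {P : Finset Cell} : cellTranslate (0, 0) P = P := by
  ext a
  rw [mem_cellTranslate]
  simp

theorem cellTranslate_comp {v w : Cell} {P : Finset Cell} :
    cellTranslate v (cellTranslate w P) = cellTranslate (w.1 + v.1, w.2 + v.2) P := by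
  ext a
  rw [mem_cellTranslate, mem_cellTranslate, mem_cellTranslate]
  constructor <;> intro h <;> convert h using 2 <;> ring

theorem area_cellTranslate {v : Cell} {P : Finset Cell} :
    area (cellTranslate v P) = area P := by
  rw [area, area, cellTranslate, Finset.card_image_of_injective]
  intro a b h
  simp only [Prod.mk.injEq] at h
  exact Prod.ext (by omega) (by omega)

theorem width_cellTranslate {v : Cell} {P : Finset Cell} :
    width (cellTranslate v P) = width P := by
  rw [width, width]
  have : (cellTranslate v P).image Prod.fst = (P.image Prod.fst).image (· + v.1) := by
    ext z
    simp only [Finset.mem_image, cellTranslate]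
    constructor
    · rintro ⟨c, ⟨d, hd, rfl⟩, rfl⟩
      exact ⟨d.1, ⟨d, hd, rfl⟩, rfl⟩
    · rintro ⟨x, ⟨d, hd, rfl⟩, rfl⟩
      exact ⟨(d.1 + v.1, d.2 + v.2), ⟨d, hd, rfl⟩, rfl⟩
  rw [this, Finset.card_image_of_injective _ (add_left_injective v.1)]

theorem height_cellTranslate {v : Cell} {P : Finset Cell} :
    height (cellTranslate v P) = height P := by
  rw [height, height]
  have : (cellTranslate v P).image Prod.snd = (P.image Prod.snd).image (· + v.2) := by
    ext z
    simp only [Finset.mem_image, cellTranslate]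
    constructor
    · rintro ⟨c, ⟨d, hd, rfl⟩, rfl⟩
      exact ⟨d.2, ⟨d, hd, rfl⟩, rfl⟩
    · rintro ⟨x, ⟨d, hd, rfl⟩, rfl⟩
      exact ⟨(d.1 + v.1, d.2 + v.2), ⟨d, hd, rfl⟩, rfl⟩
  rw [this, Finset.card_image_of_injective _ (add_left_injective v.2)]

theorem poly_cellTranslate {v : Cell} {P : Finset Cell} (h : IsPolyomino P) :
    IsPolyomino (cellTranslate v P) := by
  obtain ⟨⟨c, hc⟩, hconn⟩ := h
  constructor
  · exact ⟨(c.1 + v.1, c.2 + v.2), by rw [mem_cellTranslate]; simpa using hc⟩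
  · intro a ha b hb
    rw [mem_cellTranslate] at ha hb
    have := hconn _ ha _ hb
    have lift := Relation.ReflTransGen.lift (fun c : Cell => (c.1 + v.1, c.2 + v.2))
      (r := fun c d => c ∈ P ∧ d ∈ P ∧ (c.1 - d.1).natAbs + (c.2 - d.2).natAbs = 1)
      (p := fun c d => c ∈ cellTranslate v P ∧ d ∈ cellTranslate v P ∧
        (c.1 - d.1).natAbs + (c.2 - d.2).natAbs = 1)
      (fun c d ⟨h1, h2, h3⟩ => ⟨by rw [mem_cellTranslate]; simpa using h1,
        by rw [mem_cellTranslate]; simpa using h2, by simpa using h3⟩) _ _ this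
    simpa [Function.onFun] using lift

theorem convex_cellTranslate {v : Cell} {P : Finset Cell} (h : IsConvexPoly P) :
    IsConvexPoly (cellTranslate v P) := by
  constructor
  · intro x y1 y2 y h1 h2 hy1 hy2
    rw [mem_cellTranslate] at h1 h2 ⊢
    exact h.1 _ _ _ _ h1 h2 (by simpa using hy1) (by simpa using hy2)
  · intro y x1 x2 x h1 h2 hx1 hx2
    rw [mem_cellTranslate] at h1 h2 ⊢
    exact h.2 _ _ _ _ h1 h2 (by simpa using hx1) (by simpa using hx2)

theorem mem_image_rot {P : Finset Cell} {a : Cell} :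
    a ∈ P.image rotMap ↔ (a.2, -a.1) ∈ P := by
  simp only [Finset.mem_image, rotMap]
  constructor
  · rintro ⟨c, hc, rfl⟩; simpa using hc
  · intro h; exact ⟨(a.2, -a.1), h, by simp⟩

theorem symby_cellTranslate {u : Cell} {P : Finset Cell} (h : SymBy rotMap P) :
    SymBy rotMap (cellTranslate u P) := by
  obtain ⟨v, hv⟩ := h
  have key : ∀ b : Cell, (b.2, -b.1) ∈ P ↔ (b.1 - v.1, b.2 - v.2) ∈ P := by
    intro b
    have hb := Finset.ext_iff.mp hv b
    rw [mem_image_rot, mem_cellTranslate] at hb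
    exact hb
  refine ⟨(v.1 - u.2 - u.1, v.2 + u.1 - u.2), ?_⟩
  ext a
  rw [mem_image_rot, mem_cellTranslate, mem_cellTranslate, mem_cellTranslate]
  dsimp only
  have k := key (a.1 + u.2, a.2 - u.1)
  dsimp only at k
  rw [show a.2 - u.1 - v.2 = a.2 - (v.2 + u.1 - u.2) - u.2 by ring,
      show a.1 + u.2 - v.1 = a.1 - (v.1 - u.2 - u.1) - u.1 by ring,
      show -(a.1 + u.2) = -a.1 - u.2 by ring] at k
  exact k

theorem transClass_self {P : Finset Cell} : P ∈ transClass P :=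
  ⟨(0, 0), cellTranslate_zero.symm⟩

theorem transClass_cellTranslate {v : Cell} {P : Finset Cell} :
    transClass (cellTranslate v P) = transClass P := by
  ext O
  constructor
  · rintro ⟨w, rfl⟩
    exact ⟨(v.1 + w.1, v.2 + w.2), by rw [cellTranslate_comp]⟩
  · rintro ⟨w, rfl⟩
    refine ⟨(w.1 - v.1, w.2 - v.2), ?_⟩
    rw [cellTranslate_comp,
      show (v.1 + (w.1 - v.1), v.2 + (w.2 - v.2)) = (w.1, w.2) by
        rw [Prod.mk.injEq]; constructor <;> ring]

theorem norm_unique {P Q : Finset Cell} (hP : Norm P) (hQ : Norm Q)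
    {v : Cell} (h : Q = cellTranslate v P) : P = Q := by
  obtain ⟨hP1, ⟨c1, hc1, hc1'⟩, ⟨c2, hc2, hc2'⟩⟩ := hP
  obtain ⟨hQ1, ⟨d1, hd1, hd1'⟩, ⟨d2, hd2, hd2'⟩⟩ := hQ
  have hv1 : v.1 = 0 := by
    have h1 : (c1.1 + v.1, c1.2 + v.2) ∈ Q := by
      rw [h, mem_cellTranslate]; simpa using hc1
    have h2 := (hQ1 _ h1).1
    rw [h, mem_cellTranslate] at hd1
    have h3 := (hP1 _ hd1).1
    simp only at h2 h3
    omega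
  have hv2 : v.2 = 0 := by
    have h1 : (c2.1 + v.1, c2.2 + v.2) ∈ Q := by
      rw [h, mem_cellTranslate]; simpa using hc2
    have h2 := (hQ1 _ h1).2
    rw [h, mem_cellTranslate] at hd2
    have h3 := (hP1 _ hd2).2
    simp only at h2 h3
    omega
  rw [h]
  ext a
  rw [mem_cellTranslate, hv1, hv2]
  simp

theorem exists_norm {P : Finset Cell} (h : P.Nonempty) :
    ∃ v : Cell, Norm (cellTranslate v P) := by
  have h1 : (P.image Prod.fst).Nonempty := h.image _
  have h2 : (P.image Prod.snd).Nonempty := h.image _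
  refine ⟨(-(P.image Prod.fst).min' h1, -(P.image Prod.snd).min' h2), ?_⟩
  refine ⟨?_, ?_, ?_⟩
  · intro c hc
    rw [mem_cellTranslate] at hc
    constructor
    · have := Finset.min'_le _ _ (Finset.mem_image_of_mem Prod.fst hc)
      simp only at this ⊢
      omega
    · have := Finset.min'_le _ _ (Finset.mem_image_of_mem Prod.snd hc)
      simp only at this ⊢
      omega
  · obtain ⟨c, hc, hc'⟩ := Finset.mem_image.mp (Finset.min'_mem (P.image Prod.fst) h1)
    refine ⟨(c.1 - (P.image Prod.fst).min' h1, c.2 - (P.image Prod.snd).min' h2), ?_, ?_⟩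
    · rw [mem_cellTranslate]
      simpa using hc
    · simp only
      omega
  · obtain ⟨c, hc, hc'⟩ := Finset.mem_image.mp (Finset.min'_mem (P.image Prod.snd) h2)
    refine ⟨(c.1 - (P.image Prod.fst).min' h1, c.2 - (P.image Prod.snd).min' h2), ?_, ?_⟩
    · rw [mem_cellTranslate]
      simpa using hc
    · simp only
      omega

theorem width_eq_height_of_symby {P : Finset Cell} (hS : SymBy rotMap P) :
    width P = height P := by
  obtain ⟨v, hv⟩ := hS
  have h1 : (P.image rotMap).image Prod.fst = (P.image Prod.snd).image Neg.neg := by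
    ext z
    simp only [Finset.mem_image, rotMap]
    constructor
    · rintro ⟨a, ⟨d, hd, rfl⟩, rfl⟩
      exact ⟨d.2, ⟨d, hd, rfl⟩, rfl⟩
    · rintro ⟨y, ⟨d, hd, rfl⟩, rfl⟩
      exact ⟨(-d.2, d.1), ⟨d, hd, rfl⟩, rfl⟩
  have h2 : width (P.image rotMap) = height P := by
    rw [width, height, h1, Finset.card_image_of_injective _ neg_injective]
  rw [← h2, hv, width_cellTranslate]

theorem shape_inj {m : ℕ} {ν₁ ν₂ : ℕ → ℕ} (V₁ : ValidData m ν₁) (V₂ : ValidData m ν₂)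
    (h : shape m ν₁ = shape m ν₂) : ν₁ = ν₂ := by
  have hN : shapeN m ν₁ = shapeN m ν₂ := by
    ext ⟨x, y⟩
    rw [← mem_shape_natCast, ← mem_shape_natCast, h]
  have hrec : ∀ (ν : ℕ → ℕ), ValidData m ν → ∀ y, y < m →
      ν y = sInf {x | ∃ y' ≤ y, (x, y') ∈ shapeN m ν} := by
    intro ν V y hy
    apply le_antisymm
    · apply le_csInf
      · refine ⟨Lo m ν y, y, le_refl _, ?_⟩
        rw [mem_shapeN]
        exact ⟨hy, le_refl _, lo_hi V y⟩
      · rintro x ⟨y', hy', hmem⟩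
        rw [mem_shapeN] at hmem
        have h1 : ν y ≤ ν y' := V.anti hy'
        have h2 : ν y' ≤ Lo m ν y' := le_max_left _ _
        omega
    · apply Nat.sInf_le
      by_cases hc : cnj ν (m - 1 - y) ≤ ν y
      · refine ⟨y, le_refl _, ?_⟩
        rw [mem_shapeN]
        have hLo : Lo m ν y = ν y := by rw [Lo]; omega
        have := lo_hi V y
        exact ⟨hy, by omega, by omega⟩
      · push_neg at hc
        have h1 : m - 1 - y < ν 0 := lt_nu_zero V.anti V.exz (by omega)
        have hB := V.bound
        have h2 : cnj ν 0 ≤ y := by omega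
        have h3 : ν y = 0 := nu_zero_of_cnj V.anti V.exz h2
        rw [h3]
        refine ⟨cnj ν 0, h2, ?_⟩
        rw [mem_shapeN]
        have h4 := lo_sz V
        have h5 := lo_hi V (cnj ν 0)
        exact ⟨by omega, by omega, by omega⟩
  funext y
  by_cases hy : y < m
  · rw [hrec ν₁ V₁ y hy, hrec ν₂ V₂ y hy, hN]
  · have h1 : ν₁ y = 0 := nu_zero_of_cnj V₁.anti V₁.exz (by have := V₁.bound; omega)
    have h2 : ν₂ y = 0 := nu_zero_of_cnj V₂.anti V₂.exz (by have := V₂.bound; omega)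
    rw [h1, h2]

-- ### PART 4b-i : basic structure facts
structure GoodP (m : ℕ) (P : Finset Cell) : Prop where
  hm : 1 ≤ m
  conn : ∀ a ∈ P, ∀ b ∈ P, Relation.ReflTransGen
      (fun c d => c ∈ P ∧ d ∈ P ∧ (c.1 - d.1).natAbs + (c.2 - d.2).natAbs = 1) a b
  convC : ∀ x y₁ y₂ y : ℤ, (x, y₁) ∈ P → (x, y₂) ∈ P → y₁ ≤ y → y ≤ y₂ → (x, y) ∈ P
  convR : ∀ y x₁ x₂ x : ℤ, (x₁, y) ∈ P → (x₂, y) ∈ P → x₁ ≤ x → x ≤ x₂ → (x, y) ∈ P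
  nonneg : ∀ c ∈ P, 0 ≤ c.1 ∧ 0 ≤ c.2
  fst_lt : ∀ c ∈ P, c.1 < m
  snd_lt : ∀ c ∈ P, c.2 < m
  row_ne : ∀ y : ℕ, y < m → ∃ c ∈ P, c.2 = (y : ℤ)
  col_ne : ∀ x : ℕ, x < m → ∃ c ∈ P, c.1 = (x : ℤ)
  rot : ∀ c ∈ P, ((m : ℤ) - 1 - c.2, c.1) ∈ P

theorem between_snd {P : Finset Cell} {a b : Cell}
    (h : Relation.ReflTransGen
      (fun c d => c ∈ P ∧ d ∈ P ∧ (c.1 - d.1).natAbs + (c.2 - d.2).natAbs = 1) a b)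
    (ha : a ∈ P) :
    ∀ t : ℤ, (a.2 ≤ t ∧ t ≤ b.2) ∨ (b.2 ≤ t ∧ t ≤ a.2) → ∃ d ∈ P, d.2 = t := by
  induction h with
  | refl =>
    intro t ht
    exact ⟨a, ha, by omega⟩
  | tail hac hcb ih =>
    intro t ht
    obtain ⟨hc, hb, hdist⟩ := hcb
    rename_i c b'
    by_cases hbt : t = b'.2
    · exact ⟨b', hb, hbt.symm⟩
    · apply ih
      omega

theorem between_fst {P : Finset Cell} {a b : Cell}
    (h : Relation.ReflTransGen
      (fun c d => c ∈ P ∧ d ∈ P ∧ (c.1 - d.1).natAbs + (c.2 - d.2).natAbs = 1) a b)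
    (ha : a ∈ P) :
    ∀ t : ℤ, (a.1 ≤ t ∧ t ≤ b.1) ∨ (b.1 ≤ t ∧ t ≤ a.1) → ∃ d ∈ P, d.1 = t := by
  induction h with
  | refl =>
    intro t ht
    exact ⟨a, ha, by omega⟩
  | tail hac hcb ih =>
    intro t ht
    obtain ⟨hc, hb, hdist⟩ := hcb
    rename_i c b'
    by_cases hbt : t = b'.1
    · exact ⟨b', hb, hbt.symm⟩
    · apply ih
      omega

theorem snd_image_Icc {m : ℕ} {P : Finset Cell}
    (hP : IsPolyomino P) (hN : Norm P) (hh : height P = m) :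
    P.image Prod.snd = Finset.Icc (0 : ℤ) ((m : ℤ) - 1) := by
  obtain ⟨hpos, ⟨c1, hc1, hc1'⟩, ⟨c2, hc2, hc2'⟩⟩ := hN
  have hne : (P.image Prod.snd).Nonempty := ⟨c2.2, Finset.mem_image_of_mem _ hc2⟩
  set M := (P.image Prod.snd).max' hne with hM
  have hMmem := Finset.max'_mem (P.image Prod.snd) hne
  obtain ⟨cM, hcM, hcM'⟩ := Finset.mem_image.mp hMmem
  have hQ : P.image Prod.snd = Finset.Icc (0 : ℤ) M := by
    ext t
    simp only [Finset.mem_image, Finset.mem_Icc]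
    constructor
    · rintro ⟨c, hc, rfl⟩
      exact ⟨(hpos c hc).2, Finset.le_max' _ _ (Finset.mem_image_of_mem _ hc)⟩
    · rintro ⟨h0, hM'⟩
      obtain ⟨d, hd, hd'⟩ := between_snd (hP.2 c2 hc2 cM hcM) hc2 t (by omega)
      exact ⟨d, hd, hd'⟩
  have hMn : 0 ≤ M := by
    have := Finset.le_max' _ _ (Finset.mem_image_of_mem Prod.snd hc2)
    omega
  have hcard : ((M + 1 - 0 : ℤ)).toNat = m := by
    rw [← Int.card_Icc, ← hQ]; exact hh
  have : M = (m : ℤ) - 1 := by omega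
  rw [hQ, this]

theorem fst_image_Icc {m : ℕ} {P : Finset Cell}
    (hP : IsPolyomino P) (hN : Norm P) (hw : width P = m) :
    P.image Prod.fst = Finset.Icc (0 : ℤ) ((m : ℤ) - 1) := by
  obtain ⟨hpos, ⟨c1, hc1, hc1'⟩, ⟨c2, hc2, hc2'⟩⟩ := hN
  have hne : (P.image Prod.fst).Nonempty := ⟨c1.1, Finset.mem_image_of_mem _ hc1⟩
  set M := (P.image Prod.fst).max' hne with hM
  have hMmem := Finset.max'_mem (P.image Prod.fst) hne
  obtain ⟨cM, hcM, hcM'⟩ := Finset.mem_image.mp hMmem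
  have hQ : P.image Prod.fst = Finset.Icc (0 : ℤ) M := by
    ext t
    simp only [Finset.mem_image, Finset.mem_Icc]
    constructor
    · rintro ⟨c, hc, rfl⟩
      exact ⟨(hpos c hc).1, Finset.le_max' _ _ (Finset.mem_image_of_mem _ hc)⟩
    · rintro ⟨h0, hM'⟩
      obtain ⟨d, hd, hd'⟩ := between_fst (hP.2 c1 hc1 cM hcM) hc1 t (by omega)
      exact ⟨d, hd, hd'⟩
  have hMn : 0 ≤ M := by
    have := Finset.le_max' _ _ (Finset.mem_image_of_mem Prod.fst hc1)
    omega
  have hcard : ((M + 1 - 0 : ℤ)).toNat = m := by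
    rw [← Int.card_Icc, ← hQ]; exact hw
  have : M = (m : ℤ) - 1 := by omega
  rw [hQ, this]

theorem goodP_of {m : ℕ} (hm : 1 ≤ m) {P : Finset Cell}
    (hP : IsPolyomino P) (hC : IsConvexPoly P) (hS : SymBy rotMap P) (hN : Norm P)
    (hw : width P = m) (hh : height P = m) : GoodP m P := by
  have hsnd := snd_image_Icc hP hN hh
  have hfst := fst_image_Icc hP hN hw
  have snd_mem : ∀ c ∈ P, 0 ≤ c.2 ∧ c.2 ≤ (m:ℤ) - 1 := by
    intro c hc
    have : c.2 ∈ P.image Prod.snd := Finset.mem_image_of_mem _ hc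
    rw [hsnd, Finset.mem_Icc] at this
    exact this
  have fst_mem : ∀ c ∈ P, 0 ≤ c.1 ∧ c.1 ≤ (m:ℤ) - 1 := by
    intro c hc
    have : c.1 ∈ P.image Prod.fst := Finset.mem_image_of_mem _ hc
    rw [hfst, Finset.mem_Icc] at this
    exact this
  have row_ne : ∀ y : ℕ, y < m → ∃ c ∈ P, c.2 = (y : ℤ) := by
    intro y hy
    have : (y : ℤ) ∈ P.image Prod.snd := by
      rw [hsnd, Finset.mem_Icc]; omega
    obtain ⟨c, hc, hc'⟩ := Finset.mem_image.mp this
    exact ⟨c, hc, hc'⟩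
  have col_ne : ∀ x : ℕ, x < m → ∃ c ∈ P, c.1 = (x : ℤ) := by
    intro x hx
    have : (x : ℤ) ∈ P.image Prod.fst := by
      rw [hfst, Finset.mem_Icc]; omega
    obtain ⟨c, hc, hc'⟩ := Finset.mem_image.mp this
    exact ⟨c, hc, hc'⟩
  -- determine the translation vector of the rotation symmetry
  obtain ⟨v, hv⟩ := hS
  have hv' : ∀ a : Cell, (a.2, -a.1) ∈ P ↔ (a.1 - v.1, a.2 - v.2) ∈ P := by
    intro a
    have := Finset.ext_iff.mp hv a
    rw [mem_image_rot, mem_cellTranslate] at this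
    exact this
  have hv1 : v.1 = -((m : ℤ) - 1) := by
    obtain ⟨cM, hcM, hcM'⟩ := row_ne (m - 1) (by omega)
    have hMc : cM.2 = (m : ℤ) - 1 := by rw [hcM']; omega
    -- rot cM has fst = -(m-1)
    have h1 : ((-((m:ℤ) - 1)) - v.1, cM.1 - v.2) ∈ P := by
      have := (hv' (-((m:ℤ)-1), cM.1)).mp (by dsimp only; rw [neg_neg, ← hMc]; exact hcM)
      exact this
    have h2 := (fst_mem _ h1).1
    -- element with fst = v.1 in the translate
    obtain ⟨c0, hc0, hc0'⟩ := hN.2.1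
    have h3 : ((c0.2 + v.2), -v.1) ∈ P := by
      have := (hv' (c0.1 + v.1, c0.2 + v.2)).mpr (by
        dsimp only
        rw [show c0.1 + v.1 - v.1 = c0.1 by ring, show c0.2 + v.2 - v.2 = c0.2 by ring]
        exact hc0)
      dsimp only at this
      rw [show -(c0.1 + v.1) = -v.1 by rw [hc0']; ring] at this
      exact this
    have h4 := (snd_mem _ h3).2
    dsimp only at h2 h4
    omega
  have hv2 : v.2 = 0 := by
    obtain ⟨c0, hc0, hc0'⟩ := hN.2.1
    have h1 : (-c0.2 - v.1, c0.1 - v.2) ∈ P := by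
      have := (hv' (-c0.2, c0.1)).mp (by dsimp only; rw [neg_neg]; exact hc0)
      exact this
    have h2 := (snd_mem _ h1).1
    obtain ⟨c2, hc2, hc2'⟩ := hN.2.2
    have h3 : ((c2.2 + v.2), -(c2.1 + v.1)) ∈ P := by
      have := (hv' (c2.1 + v.1, c2.2 + v.2)).mpr (by
        dsimp only
        rw [show c2.1 + v.1 - v.1 = c2.1 by ring, show c2.2 + v.2 - v.2 = c2.2 by ring]
        exact hc2)
      exact this
    have h4 := (fst_mem _ h3).1
    dsimp only at h2 h4
    rw [hc0'] at h2
    rw [hc2'] at h4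
    omega
  refine ⟨hm, hP.2, hC.1, hC.2, fun c hc => ⟨(fst_mem c hc).1, (snd_mem c hc).1⟩,
    fun c hc => by have := (fst_mem c hc).2; omega,
    fun c hc => by have := (snd_mem c hc).2; omega,
    row_ne, col_ne, ?_⟩
  intro c hc
  have := (hv' (-c.2, c.1)).mp (by dsimp only; rw [neg_neg]; exact hc)
  dsimp only at this
  rw [hv1, hv2] at this
  rw [show -c.2 - -((m:ℤ) - 1) = (m:ℤ) - 1 - c.2 by ring, show c.1 - 0 = c.1 by ring] at this
  exact this

-- ### PART 4b-ii
variable {m : ℕ} {P : Finset Cell}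

/-- membership in ℕ coordinates -/
def memN (P : Finset Cell) (x y : ℕ) : Prop := ((x : ℤ), (y : ℤ)) ∈ P

noncomputable def Ld (P : Finset Cell) (y : ℕ) : ℕ := sInf {x | memN P x y}
noncomputable def Rd (P : Finset Cell) (y : ℕ) : ℕ := sSup {x | memN P x y}

namespace GoodP
variable (G : GoodP m P)
include G

theorem rowSet_ne {y : ℕ} (hy : y < m) : {x | memN P x y}.Nonempty := by
  obtain ⟨c, hc, hc'⟩ := G.row_ne y hy
  have h0 := (G.nonneg c hc).1
  refine ⟨c.1.toNat, ?_⟩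
  have heq : ((c.1.toNat : ℤ), (y : ℤ)) = c := by
    rw [← hc']
    exact Prod.ext (by omega) rfl
  show ((c.1.toNat : ℤ), (y : ℤ)) ∈ P
  rw [heq]
  exact hc

theorem rowSet_bdd : BddAbove {x | memN P x y} := by
  refine ⟨m, ?_⟩
  rintro x hx
  have := G.fst_lt _ hx
  simp only at this
  omega

theorem Ld_mem {y : ℕ} (hy : y < m) : memN P (Ld P y) y :=
  Nat.sInf_mem (G.rowSet_ne hy)

theorem Rd_mem {y : ℕ} (hy : y < m) : memN P (Rd P y) y :=
  Nat.sSup_mem (G.rowSet_ne hy) G.rowSet_bdd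

theorem Ld_le {x y : ℕ} (h : memN P x y) : Ld P y ≤ x := Nat.sInf_le h

theorem le_Rd {x y : ℕ} (h : memN P x y) : x ≤ Rd P y := le_csSup G.rowSet_bdd h

theorem mem_of_range {x y : ℕ} (hy : y < m) (h1 : Ld P y ≤ x) (h2 : x ≤ Rd P y) :
    memN P x y := by
  have hL := G.Ld_mem hy
  have hR := G.Rd_mem hy
  exact G.convR _ _ _ _ hL hR (by exact_mod_cast h1) (by exact_mod_cast h2)

theorem Rd_lt {y : ℕ} (hy : y < m) : Rd P y < m := by
  have := G.fst_lt _ (G.Rd_mem hy)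
  simp only at this
  omega

theorem Ld_le_Rd {y : ℕ} (hy : y < m) : Ld P y ≤ Rd P y := G.le_Rd (G.Ld_mem hy)

theorem memN_lt {x y : ℕ} (h : memN P x y) : x < m ∧ y < m := by
  have h1 := G.fst_lt _ h
  have h2 := G.snd_lt _ h
  simp only at h1 h2
  omega

/-- the rotation identity in ℕ coordinates -/
theorem rotN {x y : ℕ} (h : memN P x y) : memN P (m - 1 - y) x := by
  have hlt := G.memN_lt h
  have := G.rot _ h
  simp only at this
  rw [memN]
  have e : ((m - 1 - y : ℕ) : ℤ) = (m : ℤ) - 1 - (y : ℤ) := by omega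
  rw [e]
  exact this

/-- the 180°-rotation identity -/
theorem rot2N {x y : ℕ} (h : memN P x y) : memN P (m - 1 - x) (m - 1 - y) :=
  G.rotN (G.rotN h)

/-- L and R determine each other through the half-turn -/
theorem LR {y : ℕ} (hy : y < m) : Ld P (m - 1 - y) + Rd P y = m - 1 := by
  have h1 : Ld P (m - 1 - y) ≤ m - 1 - Rd P y := by
    apply G.Ld_le
    exact G.rot2N (G.Rd_mem hy)
  have h2 : m - 1 - Ld P (m - 1 - y) ≤ Rd P y := by
    apply G.le_Rd
    have := G.rot2N (G.Ld_mem (show m - 1 - y < m by omega))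
    have e : m - 1 - (m - 1 - y) = y := by omega
    rwa [e] at this
  have h3 := G.Rd_lt hy
  have h4 : Ld P (m - 1 - y) < m := by
    have := G.memN_lt (G.Ld_mem (show m - 1 - y < m by omega))
    exact this.1
  omega

/-- crossing lemma from connectivity -/
theorem crossing {y : ℕ} (hy1 : y + 1 < m) :
    ∃ x : ℕ, memN P x y ∧ memN P x (y + 1) := by
  obtain ⟨c, hc, hc'⟩ := G.row_ne y (by omega)
  obtain ⟨d, hd, hd'⟩ := G.row_ne (y + 1) hy1
  have key : ∀ a b : Cell, Relation.ReflTransGen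
      (fun c d => c ∈ P ∧ d ∈ P ∧ (c.1 - d.1).natAbs + (c.2 - d.2).natAbs = 1) a b →
      ∀ t : ℤ, a.2 ≤ t → t < b.2 → ∃ x : ℤ, (x, t) ∈ P ∧ (x, t + 1) ∈ P := by
    intro a b h
    induction h with
    | refl => intro t h1 h2; omega
    | tail hac hcb ih =>
      rename_i c' b'
      intro t h1 h2
      obtain ⟨hcm, hbm, hdist⟩ := hcb
      by_cases hct : c'.2 ≤ t
      · have h3 : b'.2 = c'.2 + 1 := by omega
        have h4 : c'.2 = t := by omega
        have h5 : b'.1 = c'.1 := by omega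
        refine ⟨c'.1, ?_, ?_⟩
        · rw [← h4]; exact hcm
        · rw [← h4, ← h3, ← h5]; exact hbm
      · exact ih t h1 (by omega)
  obtain ⟨x, hx1, hx2⟩ := key c d (G.conn c hc d hd) (y : ℤ) (by omega) (by omega)
  have hx0 : 0 ≤ x := (G.nonneg _ hx1).1
  refine ⟨x.toNat, ?_, ?_⟩
  · rw [memN, show ((x.toNat : ℤ), ((y:ℕ) : ℤ)) = (x, (y:ℤ)) by exact Prod.ext (by omega) rfl]
    exact hx1
  · rw [memN, show ((x.toNat : ℤ), (((y+1):ℕ) : ℤ)) = (x, (y:ℤ)+1) by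
      exact Prod.ext (by omega) (by omega)]
    exact hx2

theorem overlap_up {y : ℕ} (hy1 : y + 1 < m) : Ld P (y + 1) ≤ Rd P y := by
  obtain ⟨x, h1, h2⟩ := G.crossing hy1
  exact le_trans (G.Ld_le h2) (G.le_Rd h1)

theorem overlap_dn {y : ℕ} (hy1 : y + 1 < m) : Ld P y ≤ Rd P (y + 1) := by
  obtain ⟨x, h1, h2⟩ := G.crossing hy1
  exact le_trans (G.Ld_le h1) (G.le_Rd h2)

/-- quasiconvexity of the left boundary -/
theorem qc : ∀ d y1 y y2 : ℕ, y1 ≤ y → y ≤ y2 → y2 < m → y2 - y1 = d →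
    Ld P y ≤ max (Ld P y1) (Ld P y2) := by
  intro d
  induction d using Nat.strong_induction_on with
  | _ d ih =>
    intro y1 y y2 h1 h2 h3 hd
    rcases eq_or_lt_of_le h1 with rfl | hlt1
    · exact le_max_left _ _
    rcases eq_or_lt_of_le h2 with rfl | hlt2
    · exact le_max_right _ _
    -- y1 < y < y2
    set c := max (Ld P y1) (Ld P y2) with hc
    by_cases hcase : c ≤ Rd P y1 ∧ c ≤ Rd P y2
    · -- column c has cells in rows y1 and y2
      have m1 : memN P c y1 := G.mem_of_range (by omega) (le_max_left _ _) hcase.1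
      have m2 : memN P c y2 := G.mem_of_range h3 (le_max_right _ _) hcase.2
      have : memN P c y := G.convC _ _ _ _ m1 m2 (by exact_mod_cast h1) (by exact_mod_cast h2)
      exact G.Ld_le this
    · rcases not_and_or.mp hcase with hA | hB
      · -- c > Rd y1, so c = Ld y2 > Rd y1
        push_neg at hA
        have hcy2 : Ld P y2 > Rd P y1 := by
          have := G.Ld_le_Rd (show y1 < m by omega)
          omega
        -- least u in (y1, y2] with Ld y2 ≤ Rd u
        have hex : ∃ u, y1 < u ∧ u ≤ y2 - 1 ∧ Ld P y2 ≤ Rd P u := by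
          refine ⟨y2 - 1, by omega, le_refl _, ?_⟩
          have := G.overlap_up (show (y2 - 1) + 1 < m by omega)
          have e : y2 - 1 + 1 = y2 := by omega
          rwa [e] at this
        set u := Nat.find hex with hu
        obtain ⟨hu1, hu2, hu3⟩ := Nat.find_spec hex
        have hprev : Rd P (u - 1) < Ld P y2 := by
          rcases eq_or_lt_of_le (Nat.succ_le_of_lt hu1) with heq | hlt
          · have e : u - 1 = y1 := by omega
            rw [e]; omega
          · have hmin := Nat.find_min hex (m := u - 1) (by omega)
            push_neg at hmin
            exact hmin (by omega) (by omega)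
        have humem : memN P (Ld P y2) u := by
          apply G.mem_of_range (by omega)
          · have h5 := G.overlap_up (show (u - 1) + 1 < m by omega)
            have e : u - 1 + 1 = u := by omega
            rw [e] at h5
            omega
          · exact hu3
        by_cases huy : u ≤ y
        · have : memN P (Ld P y2) y := G.convC _ _ _ _ humem
            (G.mem_of_range h3 (le_refl _) (G.Ld_le_Rd h3))
            (by exact_mod_cast huy) (by exact_mod_cast h2)
          have := G.Ld_le this
          omega
        · push_neg at huy
          have hih := ih (u - y1) (by omega) y1 y u h1 (by omega) (by omega) rfl
          have h6 := G.le_Rd humem  -- Ld y2 ≤ Rd u? no: gives nothing new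
          have h7 : Ld P u ≤ Rd P (u - 1) := by
            have h5 := G.overlap_up (show (u - 1) + 1 < m by omega)
            have e : u - 1 + 1 = u := by omega
            rwa [e] at h5
          omega
      · -- mirror: c > Rd y2, so c = Ld y1 > Rd y2
        push_neg at hB
        have hcy1 : Ld P y1 > Rd P y2 := by
          have := G.Ld_le_Rd h3
          omega
        have hex : ∃ k, 1 ≤ k ∧ k ≤ y2 - y1 - 1 ∧ Ld P y1 ≤ Rd P (y2 - k) := by
          refine ⟨y2 - y1 - 1, by omega, le_refl _, ?_⟩
          have := G.overlap_dn (show y1 + 1 < m by omega)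
          have e : y2 - (y2 - y1 - 1) = y1 + 1 := by omega
          rw [e]
          omega
        set k0 := Nat.find hex with hk0
        obtain ⟨hk1, hk2, hk3⟩ := Nat.find_spec hex
        set u := y2 - k0 with hudef
        have hnext : Rd P (u + 1) < Ld P y1 := by
          rcases eq_or_lt_of_le hk1 with heq | hlt
          · have e : u + 1 = y2 := by omega
            rw [e]; omega
          · have hmin := Nat.find_min hex (m := k0 - 1) (by omega)
            push_neg at hmin
            have e : y2 - (k0 - 1) = u + 1 := by omega
            have hres := hmin (by omega) (by omega)
            rwa [e] at hres
        have humem : memN P (Ld P y1) u := by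
          apply G.mem_of_range (by omega)
          · have h5 := G.overlap_dn (show u + 1 < m by omega)
            omega
          · exact hk3
        by_cases huy : y ≤ u
        · have : memN P (Ld P y1) y := G.convC _ _ _ _
            (G.mem_of_range (by omega) (le_refl _) (G.Ld_le_Rd (by omega))) humem
            (by exact_mod_cast h1) (by exact_mod_cast huy)
          have := G.Ld_le this
          omega
        · push_neg at huy
          have hih := ih (y2 - u) (by omega) u y y2 (by omega) h2 h3 rfl
          have h7 : Ld P u ≤ Rd P (u + 1) := G.overlap_dn (by omega)
          omega

end GoodP
-- ### PART 4b-iii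
noncomputable def nuP (P : Finset Cell) (m : ℕ) (y : ℕ) : ℕ :=
  sInf ((Ld P) '' {y' | y' ≤ min y (m - 1)})
noncomputable def alP (P : Finset Cell) (m : ℕ) (t : ℕ) : ℕ :=
  sInf ((Ld P) '' {y' | m - 1 - t ≤ y' ∧ y' ≤ m - 1})

namespace GoodP
variable {m : ℕ} {P : Finset Cell} (G : GoodP m P)
include G

theorem nuP_le {y y' : ℕ} (h1 : y' ≤ y) (h2 : y' ≤ m - 1) : nuP P m y ≤ Ld P y' :=
  Nat.sInf_le ⟨y', by simp only [Set.mem_setOf_eq]; omega, rfl⟩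

theorem nuP_ne (y : ℕ) : ((Ld P) '' {y' | y' ≤ min y (m - 1)}).Nonempty :=
  ⟨Ld P 0, 0, by simp only [Set.mem_setOf_eq]; omega, rfl⟩

theorem nuP_attain (y : ℕ) : ∃ y', y' ≤ min y (m - 1) ∧ nuP P m y = Ld P y' := by
  have := Nat.sInf_mem (G.nuP_ne y)
  obtain ⟨y', hy', he⟩ := this
  exact ⟨y', hy', he.symm⟩

theorem nuP_anti : Antitone (nuP P m) := by
  intro a b hab
  obtain ⟨y', hy', he⟩ := G.nuP_attain a
  rw [he]
  exact G.nuP_le (by omega) (by omega)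

theorem nuP_exz : nuP P m (m - 1) = 0 := by
  obtain ⟨c, hc, hc'⟩ := G.col_ne 0 G.hm
  have h2 := (G.nonneg c hc).2
  have h3 := G.snd_lt c hc
  have hmem : memN P 0 c.2.toNat := by
    show (((0:ℕ):ℤ), ((c.2.toNat : ℕ):ℤ)) ∈ P
    have heq : (((0:ℕ):ℤ), ((c.2.toNat : ℕ):ℤ)) = c := by
      rw [← hc']
      exact Prod.ext (by omega) (by omega)
    rw [heq]
    exact hc
  have h4 := G.Ld_le hmem
  have h5 := G.nuP_le (show c.2.toNat ≤ m - 1 by omega) (by omega)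
  omega

theorem alP_le {t y' : ℕ} (h1 : m - 1 - t ≤ y') (h2 : y' ≤ m - 1) : alP P m t ≤ Ld P y' :=
  Nat.sInf_le ⟨y', by simp only [Set.mem_setOf_eq]; omega, rfl⟩

theorem alP_attain (t : ℕ) : ∃ y', m - 1 - t ≤ y' ∧ y' ≤ m - 1 ∧ alP P m t = Ld P y' := by
  have hne : ((Ld P) '' {y' | m - 1 - t ≤ y' ∧ y' ≤ m - 1}).Nonempty :=
    ⟨Ld P (m - 1), m - 1, by simp only [Set.mem_setOf_eq]; omega, rfl⟩
  obtain ⟨y', hy', he⟩ := Nat.sInf_mem hne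
  exact ⟨y', hy'.1, hy'.2, he.symm⟩

theorem nuP_exz' : ∃ z, nuP P m z = 0 := ⟨m - 1, G.nuP_exz⟩

theorem cnj0_le : cnj (nuP P m) 0 ≤ m - 1 :=
  (cnj_le_iff G.nuP_anti G.nuP_exz').mpr (le_of_eq G.nuP_exz)

theorem halph {t : ℕ} (ht : t < m) : alP P m t = cnj (nuP P m) t := by
  have anti := G.nuP_anti
  have exz := G.nuP_exz'
  apply le_antisymm
  · set z0 := cnj (nuP P m) t with hz0def
    have hz0 : nuP P m z0 ≤ t := (cnj_le_iff anti exz).mp (le_refl _)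
    have hz0m : z0 ≤ m - 1 := le_trans (cnj_anti anti exz (Nat.zero_le t)) G.cnj0_le
    obtain ⟨y'', hy''1, hy''2⟩ := G.nuP_attain z0
    have hLt : Ld P y'' ≤ t := by omega
    have hy''m : y'' < m := by omega
    have hcell : memN P (Ld P y'') y'' := G.Ld_mem hy''m
    have hrot : memN P (m - 1 - y'') (Ld P y'') := G.rotN hcell
    have hYm : Ld P y'' < m := (G.memN_lt hcell).1
    have h1 : m - 1 - y'' ≤ Rd P (Ld P y'') := G.le_Rd hrot
    have h2 : Ld P (m - 1 - Ld P y'') + Rd P (Ld P y'') = m - 1 := G.LR hYm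
    have h3 : alP P m t ≤ Ld P (m - 1 - Ld P y'') :=
      G.alP_le (by omega) (by omega)
    have h4 : y'' ≤ min z0 (m - 1) := hy''1
    omega
  · rw [cnj_le_iff anti exz]
    obtain ⟨y', hy'1, hy'2, hy'3⟩ := G.alP_attain t
    have hy'm : y' < m := by omega
    have hcell : memN P (Ld P y') y' := G.Ld_mem hy'm
    have hrot : memN P (m - 1 - y') (Ld P y') := G.rotN hcell
    have h1 : Ld P (Ld P y') ≤ m - 1 - y' := G.Ld_le hrot
    have h2 : Ld P y' < m := (G.memN_lt hcell).1
    have h3 : nuP P m (alP P m t) ≤ Ld P (alP P m t) := G.nuP_le (le_refl _) (by omega)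
    rw [hy'3] at h3 ⊢
    omega

theorem hLmax {y : ℕ} (hy : y < m) :
    Ld P y = max (alP P m (m - 1 - y)) (nuP P m y) := by
  have h1 : nuP P m y ≤ Ld P y := G.nuP_le (le_refl _) (by omega)
  have h2 : alP P m (m - 1 - y) ≤ Ld P y := G.alP_le (by omega) (by omega)
  obtain ⟨y1, hy1, he1⟩ := G.nuP_attain y
  obtain ⟨y2, hy2a, hy2b, he2⟩ := G.alP_attain (m - 1 - y)
  have h3 : Ld P y ≤ max (Ld P y1) (Ld P y2) :=
    G.qc (y2 - y1) y1 y y2 (by omega) (by omega) (by omega) rfl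
  omega

theorem validData : ValidData m (nuP P m) := by
  refine ⟨G.nuP_anti, G.nuP_exz', ?_⟩
  have h0 : nuP P m 0 = Ld P 0 := by
    apply le_antisymm (G.nuP_le (le_refl _) (by omega))
    obtain ⟨y', hy', he⟩ := G.nuP_attain 0
    rw [he]
    have : y' = 0 := by omega
    rw [this]
  have h1 : cnj (nuP P m) 0 = Ld P (m - 1) := by
    rw [← G.halph G.hm]
    apply le_antisymm (G.alP_le (by omega) (le_refl _))
    obtain ⟨y', hy'1, hy'2, he⟩ := G.alP_attain 0
    rw [he]
    have : y' = m - 1 := by omega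
    rw [this]
  have h2 : Ld P (m - 1) + Rd P 0 = m - 1 := by
    have := G.LR (show 0 < m from G.hm)
    simpa using this
  have h3 : Ld P 0 ≤ Rd P 0 := G.Ld_le_Rd G.hm
  have hm := G.hm
  rw [h0, h1]
  omega

theorem struct_mem {x y : ℕ} : memN P x y ↔ (x, y) ∈ shapeN m (nuP P m) := by
  have anti := G.nuP_anti
  have exz := G.nuP_exz'
  constructor
  · intro h
    obtain ⟨hx, hy⟩ := G.memN_lt h
    rw [mem_shapeN]
    have e1 : Lo m (nuP P m) y = Ld P y := by
      rw [Lo, ← G.halph (show m - 1 - y < m by omega)]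
      have := G.hLmax hy
      omega
    have e2 : Rc m (nuP P m) y = Ld P (m - 1 - y) := by
      rw [Rc, ← G.halph hy]
      have := G.hLmax (show m - 1 - y < m by omega)
      have e : m - 1 - (m - 1 - y) = y := by omega
      rw [e] at this
      omega
    have e3 : Ld P (m - 1 - y) + Rd P y = m - 1 := G.LR hy
    have h4 := G.Ld_le h
    have h5 := G.le_Rd h
    have h6 := G.Rd_lt hy
    rw [e1, e2]
    refine ⟨hy, h4, by omega⟩
  · intro h
    rw [mem_shapeN] at h
    obtain ⟨hy, h1, h2⟩ := h
    have e1 : Lo m (nuP P m) y = Ld P y := by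
      rw [Lo, ← G.halph (show m - 1 - y < m by omega)]
      have := G.hLmax hy
      omega
    have e2 : Rc m (nuP P m) y = Ld P (m - 1 - y) := by
      rw [Rc, ← G.halph hy]
      have := G.hLmax (show m - 1 - y < m by omega)
      have e : m - 1 - (m - 1 - y) = y := by omega
      rw [e] at this
      omega
    have e3 : Ld P (m - 1 - y) + Rd P y = m - 1 := G.LR hy
    have h6 := G.Rd_lt hy
    rw [e1] at h1
    rw [e2] at h2
    exact G.mem_of_range hy h1 (by omega)

end GoodP

theorem struct_thm {m : ℕ} (hm : 1 ≤ m) {P : Finset Cell}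
    (hP : IsPolyomino P) (hC : IsConvexPoly P) (hS : SymBy rotMap P) (hN : Norm P)
    (hw : width P = m) (hh : height P = m) :
    ∃ ν : ℕ → ℕ, ValidData m ν ∧ P = shape m ν := by
  have G := goodP_of hm hP hC hS hN hw hh
  refine ⟨nuP P m, G.validData, ?_⟩
  ext a
  rw [mem_shape]
  constructor
  · intro ha
    have h0 := G.nonneg a ha
    refine ⟨h0.1, h0.2, ?_⟩
    rw [← G.struct_mem]
    show ((a.1.toNat : ℤ), (a.2.toNat : ℤ)) ∈ P
    have heq : ((a.1.toNat : ℤ), (a.2.toNat : ℤ)) = a := Prod.ext (by omega) (by omega)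
    rw [heq]
    exact ha
  · rintro ⟨h1, h2, h3⟩
    rw [← G.struct_mem] at h3
    have heq : ((a.1.toNat : ℤ), (a.2.toNat : ℤ)) = a := Prod.ext (by omega) (by omega)
    rw [memN, heq] at h3
    exact h3

-- ### PART 5
def S (m n : ℕ) : Set (ℕ → ℕ) := {ν | ValidData m ν ∧ n + 4 * wt ν = m * m}

theorem zero_valid {m : ℕ} (hm : 1 ≤ m) : ValidData m (fun _ => 0) := by
  refine ⟨fun a b _ => le_refl _, ⟨0, rfl⟩, ?_⟩
  have : cnj (fun _ => 0) 0 = 0 := by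
    rw [cnj_eq_zero_iff (fun a b _ => le_refl _) ⟨0, rfl⟩]
  omega

theorem wt_zero : wt (fun _ => 0) = 0 := by
  have : cnj (fun _ => 0) 0 = 0 := by
    rw [cnj_eq_zero_iff (fun a b _ => le_refl _) ⟨0, rfl⟩]
  rw [wt, this]
  simp

theorem eq_zero_of_nu0 {ν : ℕ → ℕ} (anti : Antitone ν) (h : ν 0 = 0) :
    ν = fun _ => 0 := by
  funext y
  have := anti (Nat.zero_le y)
  omega

theorem S_one {n : ℕ} : S 1 n = if n = 1 then {fun _ => 0} else ∅ := by
  ext ν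
  constructor
  · rintro ⟨V, hn⟩
    have h0 : ν 0 = 0 := by have := V.bound; omega
    have hz := eq_zero_of_nu0 V.anti h0
    subst hz
    rw [wt_zero] at hn
    have : n = 1 := by omega
    simp [this]
  · intro h
    by_cases hn : n = 1
    · rw [hn] at h ⊢
      simp only [if_pos rfl, Set.mem_singleton_iff] at h
      subst h
      exact ⟨zero_valid (le_refl 1), by rw [wt_zero]⟩
    · simp [hn] at h

theorem S_two {n : ℕ} : S 2 n = if n = 4 then {fun _ => 0} else ∅ := by
  ext ν
  constructor
  · rintro ⟨V, hn⟩
    have h0 : ν 0 = 0 := by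
      by_contra h
      have h1 : 1 ≤ ν 0 := by omega
      have h2 : 1 ≤ cnj ν 0 := by
        by_contra h2
        have : cnj ν 0 = 0 := by omega
        rw [cnj_eq_zero_iff V.anti V.exz] at this
        omega
      have := V.bound
      omega
    have hz := eq_zero_of_nu0 V.anti h0
    subst hz
    rw [wt_zero] at hn
    have : n = 4 := by omega
    simp [this]
  · intro h
    by_cases hn : n = 4
    · rw [hn] at h ⊢
      simp only [if_pos rfl, Set.mem_singleton_iff] at h
      subst h
      exact ⟨zero_valid (by omega), by rw [wt_zero]⟩
    · simp [hn] at h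

theorem S_finite {m n : ℕ} (hm : 1 ≤ m) : (S m n).Finite := by
  apply Set.Finite.of_finite_image (f := fun ν => fun i : Fin m =>
    (⟨min (ν i) (m - 1), by omega⟩ : Fin m))
  · exact Set.toFinite _
  · rintro ν₁ ⟨V₁, -⟩ ν₂ ⟨V₂, -⟩ heq
    have key : ∀ (ν : ℕ → ℕ), ValidData m ν → ∀ y, y < m → min (ν y) (m - 1) = ν y := by
      intro ν V y hy
      have h1 : ν y ≤ ν 0 := V.anti (Nat.zero_le y)
      have := V.bound
      omega
    funext y
    by_cases hy : y < m
    · have h1 := congrFun heq ⟨y, hy⟩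
      have h2 := congrArg Fin.val h1
      simp only at h2
      rw [key ν₁ V₁ y hy, key ν₂ V₂ y hy] at h2
      exact h2
    · have h1 : ν₁ y = 0 := nu_zero_of_cnj V₁.anti V₁.exz (by have := V₁.bound; omega)
      have h2 : ν₂ y = 0 := nu_zero_of_cnj V₂.anti V₂.exz (by have := V₂.bound; omega)
      rw [h1, h2]

/-- subclass with small profile (`class 1`) -/
def S1 (m n : ℕ) : Set (ℕ → ℕ) := {ν ∈ S m n | ν 0 + cnj ν 0 + 2 ≤ m}
/-- subclass with extremal profile (`class 2`) -/
def S2 (m n : ℕ) : Set (ℕ → ℕ) := {ν ∈ S m n | ν 0 + cnj ν 0 + 1 = m}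

theorem S_split {m n : ℕ} : S m n = S1 m n ∪ S2 m n := by
  ext ν
  simp only [S1, S2, Set.mem_union, Set.mem_setOf_eq]
  constructor
  · intro h
    have := h.1.bound
    by_cases hc : ν 0 + cnj ν 0 + 1 = m
    · exact Or.inr ⟨h, hc⟩
    · exact Or.inl ⟨h, by omega⟩
  · rintro (⟨h, -⟩ | ⟨h, -⟩) <;> exact h

theorem S_disj {m n : ℕ} : Disjoint (S1 m n) (S2 m n) := by
  rw [Set.disjoint_left]
  rintro ν ⟨-, h1⟩ ⟨-, h2⟩
  omega

theorem four_mul_le_sq {a b : ℕ} : 4 * (a * b) ≤ (a + b) * (a + b) := by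
  zify
  nlinarith [sq_nonneg ((a : ℤ) - b)]

/-- class 1 weight bound forces large area -/
theorem S1_area {m n : ℕ} {ν : ℕ → ℕ} (hm : 3 ≤ m) (h : ν ∈ S1 m n) :
    2 * m - 1 ≤ n := by
  obtain ⟨⟨V, hn⟩, hb⟩ := h
  have h1 : wt ν ≤ cnj ν 0 * ν 0 := wt_le' V.anti
  have h2 : 4 * (cnj ν 0 * ν 0) ≤ (cnj ν 0 + ν 0) * (cnj ν 0 + ν 0) := four_mul_le_sq
  have h3 : cnj ν 0 + ν 0 ≤ m - 2 := by omega
  have h4 : (cnj ν 0 + ν 0) * (cnj ν 0 + ν 0) ≤ (m - 2) * (m - 2) :=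
    Nat.mul_le_mul h3 h3
  obtain ⟨k, rfl⟩ : ∃ k, m = k + 3 := ⟨m - 3, by omega⟩
  have e1 : k + 3 - 2 = k + 1 := by omega
  rw [e1] at h4
  have h5 : (k + 1) * (k + 1) + (4 * k + 8) = (k + 3) * (k + 3) := by ring
  omega

theorem S1_eq {m n : ℕ} (hm : 3 ≤ m) (hn : 2 * m - 1 ≤ n) :
    S1 m n = S (m - 1) (n - (2 * m - 1)) := by
  ext ν
  simp only [S1, S, Set.mem_setOf_eq]
  obtain ⟨k, rfl⟩ : ∃ k, m = k + 3 := ⟨m - 3, by omega⟩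
  have e1 : k + 3 - 1 = k + 2 := by omega
  have h5 : (k + 2) * (k + 2) + (2 * k + 5) = (k + 3) * (k + 3) := by ring
  rw [e1]
  constructor
  · rintro ⟨⟨V, harea⟩, hb⟩
    exact ⟨⟨V.anti, V.exz, by omega⟩, by omega⟩
  · rintro ⟨V, harea⟩
    exact ⟨⟨⟨V.anti, V.exz, by have := V.bound; omega⟩, by omega⟩, by have := V.bound; omega⟩

theorem S1_empty {m n : ℕ} (hm : 3 ≤ m) (hn : ¬ (2 * m - 1 ≤ n)) : S1 m n = ∅ := by
  ext ν
  simp only [Set.mem_empty_iff_false, iff_false]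
  intro h
  exact hn (S1_area hm h)

def Phi (m n : ℕ) (P : Finset Cell) : Prop :=
  IsPolyomino P ∧ IsConvexPoly P ∧ SymBy rotMap P ∧
    width P + height P = 2 * m ∧ area P = n

theorem classCount_eq {m n : ℕ} (hm : 1 ≤ m) :
    classCount (Phi m n) = (S m n).ncard := by
  have himg : {O : Set (Finset Cell) | ∃ P, Phi m n P ∧ O = transClass P}
      = (fun ν => transClass (shape m ν)) '' (S m n) := by
    ext O
    constructor
    · rintro ⟨P, ⟨hP, hC, hS, hwh, har⟩, rfl⟩
      have hweq := width_eq_height_of_symby hS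
      have hw : width P = m := by omega
      have hh : height P = m := by omega
      obtain ⟨v, hNv⟩ := exists_norm hP.1
      obtain ⟨ν, hV, hshape⟩ := struct_thm hm (poly_cellTranslate hP)
        (convex_cellTranslate hC) (symby_cellTranslate hS) hNv
        (by rw [width_cellTranslate]; exact hw)
        (by rw [height_cellTranslate]; exact hh)
      refine ⟨ν, ⟨hV, ?_⟩, ?_⟩
      · have ha1 := shape_area hV
        have ha2 : area (cellTranslate v P) = n := by rw [area_cellTranslate]; exact har
        rw [hshape] at ha2
        omega
      · dsimp only
        rw [← hshape, transClass_cellTranslate]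
    · rintro ⟨ν, ⟨hV, hn⟩, rfl⟩
      refine ⟨shape m ν, ⟨shape_poly hV hm, shape_convex hV, shape_symby hV, ?_, ?_⟩, rfl⟩
      · rw [shape_width hV, shape_height hV]; ring
      · have := shape_area hV; rw [area]; rw [area] at this; omega
  rw [classCount, himg, Set.ncard_image_of_injOn]
  intro ν₁ h₁ ν₂ h₂ heq
  have heq' : transClass (shape m ν₁) = transClass (shape m ν₂) := heq
  have hmem : shape m ν₁ ∈ transClass (shape m ν₂) := by
    rw [← heq']; exact transClass_self
  obtain ⟨w, hw⟩ := hmem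
  exact (shape_inj h₂.1 h₁.1 (norm_unique (shape_norm h₂.1 hm) (shape_norm h₁.1 hm) hw)).symm

-- ### PART 6 : the hook bijection
def down (ν : ℕ → ℕ) : ℕ → ℕ := fun t => ν (t + 1) - 1
noncomputable def jmap (ν : ℕ → ℕ) : ℕ := cnj ν 0 + (ν 1 - 1)
noncomputable def up (m j : ℕ) (μ : ℕ → ℕ) : ℕ → ℕ :=
  fun t => if t = 0 then m - 1 - (j - μ 0) else μ (t - 1) + (if t < j - μ 0 then 1 else 0)

section Down
variable {m : ℕ} {ν : ℕ → ℕ} (V : ValidData m ν) (hx : ν 0 + cnj ν 0 + 1 = m)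
  (hm : 3 ≤ m)
include V hx hm

theorem pos_pos : 1 ≤ ν 0 ∧ 1 ≤ cnj ν 0 := by
  by_cases h : ν 0 = 0
  · have : cnj ν 0 = 0 := (cnj_eq_zero_iff V.anti V.exz).mpr (by omega)
    omega
  · have : ¬ (cnj ν 0 = 0) := by
      intro hc
      have := (cnj_eq_zero_iff V.anti V.exz).mp hc
      omega
    omega

theorem down_anti : Antitone (down ν) :=
  fun a b hab => Nat.sub_le_sub_right (V.anti (by omega)) 1

theorem down_exz : ∃ z, down ν z = 0 :=
  ⟨cnj ν 0, by rw [down, nu_zero_of_cnj V.anti V.exz (by omega)]⟩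

theorem cnj_down_le : cnj (down ν) 0 + 1 ≤ cnj ν 0 := by
  have hp := pos_pos V hx hm
  have h1 : down ν (cnj ν 0 - 1) = 0 := by
    rw [down, show cnj ν 0 - 1 + 1 = cnj ν 0 by omega,
      nu_zero_of_cnj V.anti V.exz (le_refl _)]
  have h2 : cnj (down ν) 0 ≤ cnj ν 0 - 1 := Nat.sInf_le (by simp [h1])
  omega

theorem jmap_range : 1 ≤ jmap ν ∧ jmap ν ≤ m - 2 := by
  have hp := pos_pos V hx hm
  have h1 : ν 1 ≤ ν 0 := V.anti (by omega)
  rw [jmap]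
  omega

theorem valid_down : ValidData (jmap ν) (down ν) := by
  refine ⟨down_anti V hx hm, down_exz V hx hm, ?_⟩
  have h1 := cnj_down_le V hx hm
  have h2 : down ν 0 = ν 1 - 1 := rfl
  rw [jmap]
  omega

theorem wt_down : wt (down ν) + (m - 2) = wt ν := by
  have hp := pos_pos V hx hm
  have h1 : ∑ y ∈ Finset.range (cnj ν 0 - 1), down ν y = wt (down ν) :=
    wt_eq (down_anti V hx hm) (down_exz V hx hm) (by have := cnj_down_le V hx hm; omega)
  have h2 : ∑ y ∈ Finset.range (cnj ν 0 - 1), (down ν y + 1)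
      = ∑ y ∈ Finset.range (cnj ν 0 - 1), ν (y + 1) := by
    apply Finset.sum_congr rfl
    intro y hy
    rw [Finset.mem_range] at hy
    have : 0 < ν (y + 1) := (lt_cnj_iff V.anti V.exz).mp (by omega)
    rw [down]
    omega
  have h3 : ∑ y ∈ Finset.range (cnj ν 0 - 1 + 1), ν y
      = ∑ y ∈ Finset.range (cnj ν 0 - 1), ν (y + 1) + ν 0 := Finset.sum_range_succ' ν _
  have h4 : cnj ν 0 - 1 + 1 = cnj ν 0 := by omega
  rw [h4] at h3
  have h5 : ∑ y ∈ Finset.range (cnj ν 0), ν y = wt ν := rfl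
  rw [Finset.sum_add_distrib, h1, Finset.sum_const, Finset.card_range, smul_eq_mul,
    mul_one] at h2
  omega

theorem up_down : up m (jmap ν) (down ν) = ν := by
  have hp := pos_pos V hx hm
  have hmu0 : down ν 0 = ν 1 - 1 := rfl
  have hlam : jmap ν - down ν 0 = cnj ν 0 := by rw [jmap, hmu0]; omega
  funext t
  cases t with
  | zero =>
    show (if (0:ℕ) = 0 then _ else _) = ν 0
    rw [if_pos rfl, hlam]
    omega
  | succ t =>
    show (if t + 1 = 0 then _ else _) = ν (t + 1)
    rw [if_neg (by omega), hlam]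
    have e1 : t + 1 - 1 = t := rfl
    rw [e1]
    show down ν t + _ = _
    rw [down]
    by_cases hc : t + 1 < cnj ν 0
    · have : 0 < ν (t + 1) := (lt_cnj_iff V.anti V.exz).mp hc
      rw [if_pos hc]
      omega
    · have : ν (t + 1) = 0 := nu_zero_of_cnj V.anti V.exz (by omega)
      rw [if_neg hc]
      omega

end Down

section Up
variable {m j : ℕ} {μ : ℕ → ℕ} (Vμ : ValidData j μ) (hj1 : 1 ≤ j) (hj2 : j ≤ m - 2)
  (hm : 3 ≤ m)

theorem up_zero : up m j μ 0 = m - 1 - (j - μ 0) := by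
  show (if (0:ℕ) = 0 then _ else _) = _
  rw [if_pos rfl]

theorem up_succ (t : ℕ) : up m j μ (t + 1) = μ t + (if t + 1 < j - μ 0 then 1 else 0) := by
  show (if t + 1 = 0 then _ else _) = _
  rw [if_neg (by omega)]
  rfl

include Vμ hj1 hj2 hm

theorem lam_facts : μ 0 < j ∧ cnj μ 0 + 1 ≤ j - μ 0 ∧ 1 ≤ j - μ 0 := by
  have := Vμ.bound
  omega

theorem up_anti : Antitone (up m j μ) := by
  apply antitone_nat_of_succ_le
  intro t
  have hf := lam_facts Vμ hj1 hj2 hm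
  cases t with
  | zero =>
    rw [up_zero, up_succ]
    by_cases hc : 0 + 1 < j - μ 0
    · rw [if_pos hc]
      omega
    · rw [if_neg hc]
      omega
  | succ t =>
    rw [up_succ, up_succ]
    have h1 : μ (t + 1) ≤ μ t := Vμ.anti (by omega)
    by_cases hc : t + 1 + 1 < j - μ 0
    · rw [if_pos hc, if_pos (by omega)]
      omega
    · rw [if_neg hc]
      by_cases hc2 : t + 1 < j - μ 0
      · rw [if_pos hc2]; omega
      · rw [if_neg hc2]; omega

theorem up_at_lam : up m j μ (j - μ 0) = 0 := by
  have hf := lam_facts Vμ hj1 hj2 hm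
  have e1 : j - μ 0 = (j - μ 0 - 1) + 1 := by omega
  rw [e1, up_succ]
  have h1 : μ (j - μ 0 - 1) = 0 := nu_zero_of_cnj Vμ.anti Vμ.exz (by omega)
  rw [if_neg (by omega), h1]

theorem up_pos : ∀ z < j - μ 0, 1 ≤ up m j μ z := by
  intro z hz
  have hf := lam_facts Vμ hj1 hj2 hm
  cases z with
  | zero =>
    rw [up_zero]
    omega
  | succ z =>
    rw [up_succ, if_pos hz]
    omega

theorem up_cnj : cnj (up m j μ) 0 = j - μ 0 := by
  have hf := lam_facts Vμ hj1 hj2 hm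
  apply le_antisymm
  · exact Nat.sInf_le (by simp [up_at_lam Vμ hj1 hj2 hm])
  · apply le_csInf ⟨j - μ 0, by simp [up_at_lam Vμ hj1 hj2 hm]⟩
    intro z hz
    simp only [Set.mem_setOf_eq] at hz
    by_contra hc
    push_neg at hc
    have := up_pos Vμ hj1 hj2 hm z hc
    omega

theorem up_valid : ValidData m (up m j μ) ∧ up m j μ 0 + cnj (up m j μ) 0 + 1 = m := by
  have hf := lam_facts Vμ hj1 hj2 hm
  have h0 : up m j μ 0 = m - 1 - (j - μ 0) := up_zero
  have hc := up_cnj Vμ hj1 hj2 hm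
  have heq : up m j μ 0 + cnj (up m j μ) 0 + 1 = m := by
    rw [h0, hc]
    omega
  exact ⟨⟨up_anti Vμ hj1 hj2 hm, ⟨j - μ 0, up_at_lam Vμ hj1 hj2 hm⟩, by omega⟩, heq⟩

theorem jmap_up : jmap (up m j μ) = j := by
  have hf := lam_facts Vμ hj1 hj2 hm
  rw [jmap, up_cnj Vμ hj1 hj2 hm]
  have h1 : up m j μ 1 = μ 0 + (if 0 + 1 < j - μ 0 then 1 else 0) := up_succ 0
  by_cases hc : 0 + 1 < j - μ 0
  · rw [h1, if_pos hc]
    omega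
  · have h2 : j - μ 0 = 1 := by omega
    have h3 : cnj μ 0 = 0 := by omega
    have h4 : μ 0 = 0 := by
      have := (cnj_eq_zero_iff Vμ.anti Vμ.exz).mp h3
      omega
    rw [h1, if_neg hc, h4]
    omega

theorem down_up : down (up m j μ) = μ := by
  have hf := lam_facts Vμ hj1 hj2 hm
  funext t
  rw [down, up_succ]
  by_cases hc : t + 1 < j - μ 0
  · rw [if_pos hc]
    omega
  · rw [if_neg hc]
    have : μ t = 0 := nu_zero_of_cnj Vμ.anti Vμ.exz (by omega)
    omega

end Up
-- ### PART 7 : master counting identity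
theorem fiber_guard {m n j : ℕ} (hm : 3 ≤ m) {ν : ℕ → ℕ} (hν : ν ∈ S2 m n)
    (hj : jmap ν = j) : (m - 2) ^ 2 + 4 - j ^ 2 ≤ n := by
  obtain ⟨⟨V, harea⟩, hx⟩ := hν
  obtain ⟨hj1, hj2⟩ := jmap_range V hx hm
  rw [hj] at hj1 hj2
  have Vd := valid_down V hx hm
  rw [hj] at Vd
  have hwd := wt_down V hx hm
  have hb1 : 4 * wt (down ν) ≤ (cnj (down ν) 0 + down ν 0) * (cnj (down ν) 0 + down ν 0) := by
    have := wt_le' Vd.anti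
    have := four_mul_le_sq (a := cnj (down ν) 0) (b := down ν 0)
    omega
  have hb2 : cnj (down ν) 0 + down ν 0 ≤ j - 1 := by
    have := Vd.bound
    omega
  have hb3 : (cnj (down ν) 0 + down ν 0) * (cnj (down ν) 0 + down ν 0) ≤ (j - 1) * (j - 1) :=
    Nat.mul_le_mul hb2 hb2
  have hb4 : (j - 1) * (j - 1) ≤ j * j := Nat.mul_le_mul (by omega) (by omega)
  obtain ⟨k, rfl⟩ : ∃ k, m = k + 3 := ⟨m - 3, by omega⟩
  have E1 : (k + 3) * (k + 3) = (k + 1) * (k + 1) + 4 * (k + 1) + 4 := by ring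
  have E2 : j * j ≤ (k + 1) * (k + 1) := Nat.mul_le_mul (by omega) (by omega)
  rw [show k + 3 - 2 = k + 1 by omega, pow_two, pow_two]
  omega

theorem fiber_inj {m n j : ℕ} (hm : 3 ≤ m) :
    Set.InjOn down {a | a ∈ S2 m n ∧ jmap a = j} := by
  rintro ν ⟨⟨⟨V, -⟩, hx⟩, hj⟩ ν' ⟨⟨⟨V', -⟩, hx'⟩, hj'⟩ heq
  have h1 := up_down V hx hm
  have h2 := up_down V' hx' hm
  rw [hj] at h1
  rw [hj'] at h2
  rw [← h1, ← h2, heq]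

theorem fiber_image {m n j : ℕ} (hm : 3 ≤ m) (hj1 : 1 ≤ j) (hj2 : j ≤ m - 2)
    (hg : (m - 2) ^ 2 + 4 - j ^ 2 ≤ n) :
    down '' {a | a ∈ S2 m n ∧ jmap a = j} = S j (n - ((m - 2) ^ 2 + 4 - j ^ 2)) := by
  obtain ⟨k, rfl⟩ : ∃ k, m = k + 3 := ⟨m - 3, by omega⟩
  have hk2 : k + 3 - 2 = k + 1 := by omega
  rw [hk2] at hj2 hg ⊢
  rw [pow_two, pow_two] at hg ⊢
  have E1 : (k + 3) * (k + 3) = (k + 1) * (k + 1) + 4 * (k + 1) + 4 := by ring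
  have E2 : j * j ≤ (k + 1) * (k + 1) := Nat.mul_le_mul (by omega) (by omega)
  ext μ
  constructor
  · rintro ⟨ν, ⟨⟨⟨V, harea⟩, hx⟩, hj⟩, rfl⟩
    have Vd := valid_down V hx hm
    rw [hj] at Vd
    have hwd := wt_down V hx hm
    rw [show k + 3 - 2 = k + 1 by omega] at hwd
    refine ⟨Vd, ?_⟩
    omega
  · intro hμ
    obtain ⟨Vμ, harea⟩ := hμ
    have hj2' : j ≤ k + 3 - 2 := by omega
    obtain ⟨Vu, hxu⟩ := up_valid Vμ hj1 hj2' hm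
    refine ⟨up (k + 3) j μ, ⟨⟨⟨Vu, ?_⟩, hxu⟩, jmap_up Vμ hj1 hj2' hm⟩,
      down_up Vμ hj1 hj2' hm⟩
    have hwd := wt_down Vu hxu hm
    rw [down_up Vμ hj1 hj2' hm, hk2] at hwd
    omega

theorem ncard_partition {α : Type*} {s : Set α} (hs : s.Finite) (f : α → ℕ) {I : Finset ℕ}
    (hf : ∀ a ∈ s, f a ∈ I) :
    s.ncard = ∑ j ∈ I, {a | a ∈ s ∧ f a = j}.ncard := by
  classical
  have h1 : s.ncard = hs.toFinset.card := by
    rw [← Set.ncard_coe_finset hs.toFinset, Set.Finite.coe_toFinset]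
  rw [h1, Finset.card_eq_sum_card_fiberwise (f := f) (t := I)
    (fun a ha => hf a (hs.mem_toFinset.mp ha))]
  apply Finset.sum_congr rfl
  intro j _
  have h2 : {a | a ∈ s ∧ f a = j} = ↑(hs.toFinset.filter (fun a => f a = j)) := by
    ext a
    simp [hs.mem_toFinset]
  rw [h2, Set.ncard_coe_finset]

theorem master {m n : ℕ} (hm : 3 ≤ m) :
    (S m n).ncard =
      (if 2 * m - 1 ≤ n then (S (m - 1) (n - (2 * m - 1))).ncard else 0) +
      ∑ j ∈ Finset.Icc 1 (m - 2),
        (if (m - 2) ^ 2 + 4 - j ^ 2 ≤ n then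
          (S j (n - ((m - 2) ^ 2 + 4 - j ^ 2))).ncard else 0) := by
  have hfin : (S m n).Finite := S_finite (by omega)
  have hfin1 : (S1 m n).Finite := hfin.subset (fun ν hν => hν.1)
  have hfin2 : (S2 m n).Finite := hfin.subset (fun ν hν => hν.1)
  rw [S_split, Set.ncard_union_eq S_disj hfin1 hfin2]
  congr 1
  · by_cases hg : 2 * m - 1 ≤ n
    · rw [if_pos hg, S1_eq hm hg]
    · rw [if_neg hg, S1_empty hm hg, Set.ncard_empty]
  · rw [ncard_partition hfin2 jmap (I := Finset.Icc 1 (m - 2))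
      (fun ν hν => by
        rw [Finset.mem_Icc]
        exact jmap_range hν.1.1 hν.2 hm)]
    apply Finset.sum_congr rfl
    intro j hj
    rw [Finset.mem_Icc] at hj
    by_cases hg : (m - 2) ^ 2 + 4 - j ^ 2 ≤ n
    · rw [if_pos hg, ← fiber_image hm hj.1 hj.2 hg,
        Set.ncard_image_of_injOn (fiber_inj hm)]
    · rw [if_neg hg]
      have h2 : {a | a ∈ S2 m n ∧ jmap a = j} = ∅ := by
        ext ν
        simp only [Set.mem_setOf_eq, Set.mem_empty_iff_false, iff_false, not_and]
        intro h1 h2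
        exact hg (fiber_guard hm h1 h2)
      rw [h2, Set.ncard_empty]

end Stmt8

open Stmt8 Polynomial in
/-- With `a m` the area generating polynomial `a_{2m}(q)` of `r`-symmetric convex
polyominoes of half-perimeter `2m` (and `a 0 = 1` by convention), one has
`a₂ = q`, `a₄ = q⁴`, and the recurrences (a) and (b). -/
theorem stmt8
    (a : ℕ → Polynomial ℤ)
    (h0 : a 0 = 1)
    (ha : ∀ m : ℕ, 1 ≤ m → ∀ j : ℕ,
      (a m).coeff j = (classCount (fun P => IsPolyomino P ∧ IsConvexPoly P ∧
        SymBy rotMap P ∧ width P + height P = 2 * m ∧ area P = j) : ℤ)) :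
    a 1 = Polynomial.X ∧ a 2 = Polynomial.X ^ 4 ∧
    (∀ m : ℕ, 1 ≤ m →
      a m = Polynomial.X ^ (2 * m - 1) * a (m - 1) +
        ∑ j ∈ Finset.Icc 1 (m - 2),
          Polynomial.X ^ ((m - 2) ^ 2 + 4 - j ^ 2) * a j) ∧
    (∀ m : ℕ, 3 ≤ m →
      a m = Polynomial.X ^ (2 * m - 5) * (1 + Polynomial.X ^ 4) * a (m - 1) +
        Polynomial.X ^ 4 * (1 - Polynomial.X ^ (4 * m - 12)) * a (m - 2)) := by
  have hcoeff : ∀ m : ℕ, 1 ≤ m → ∀ n : ℕ, (a m).coeff n = ((S m n).ncard : ℤ) := by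
    intro m hm n
    have h1 : classCount (Phi m n) = (S m n).ncard := classCount_eq hm
    rw [ha m hm n]
    exact_mod_cast congrArg (Nat.cast (R := ℤ)) h1
  have hA1 : a 1 = Polynomial.X := by
    ext n
    rw [hcoeff 1 (le_refl 1) n, Polynomial.coeff_X, S_one]
    by_cases hn : n = 1
    · subst hn
      rw [if_pos rfl, if_pos rfl, Set.ncard_singleton]
      norm_num
    · rw [if_neg hn, if_neg (fun h => hn h.symm), Set.ncard_empty]
      norm_num
  have hA2 : a 2 = Polynomial.X ^ 4 := by
    ext n
    rw [hcoeff 2 (by omega) n, Polynomial.coeff_X_pow, S_two]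
    by_cases hn : n = 4
    · subst hn
      rw [if_pos rfl, if_pos rfl, Set.ncard_singleton]
      norm_num
    · rw [if_neg hn, if_neg hn, Set.ncard_empty]
      norm_num
  have hXp : ∀ (k n : ℕ) (p : Polynomial ℤ),
      (Polynomial.X ^ k * p).coeff n = if k ≤ n then p.coeff (n - k) else 0 := by
    intro k n p
    rw [mul_comm, Polynomial.coeff_mul_X_pow']
  have hrecA : ∀ m : ℕ, 1 ≤ m →
      a m = Polynomial.X ^ (2 * m - 1) * a (m - 1) +
        ∑ j ∈ Finset.Icc 1 (m - 2),
          Polynomial.X ^ ((m - 2) ^ 2 + 4 - j ^ 2) * a j := by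
    intro m hm
    rcases eq_or_lt_of_le hm with rfl | hm1
    · rw [Finset.Icc_eq_empty (by omega), Finset.sum_empty, h0, hA1]
      norm_num
    rcases eq_or_lt_of_le (show 2 ≤ m by omega) with rfl | hm2
    · rw [Finset.Icc_eq_empty (by omega), Finset.sum_empty, hA2]
      norm_num [hA1]
      try ring
    have hm3 : 3 ≤ m := by omega
    ext n
    rw [Polynomial.coeff_add, Polynomial.finset_sum_coeff, hXp, hcoeff m (by omega) n]
    have hT1 : (if 2 * m - 1 ≤ n then (a (m - 1)).coeff (n - (2 * m - 1)) else 0)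
        = ((if 2 * m - 1 ≤ n then (S (m - 1) (n - (2 * m - 1))).ncard else 0 : ℕ) : ℤ) := by
      by_cases hg : 2 * m - 1 ≤ n
      · rw [if_pos hg, if_pos hg, hcoeff (m - 1) (by omega)]
      · rw [if_neg hg, if_neg hg]
        norm_num
    rw [hT1]
    have hT2 : ∀ j ∈ Finset.Icc 1 (m - 2),
        (Polynomial.X ^ ((m - 2) ^ 2 + 4 - j ^ 2) * a j).coeff n
        = ((if (m - 2) ^ 2 + 4 - j ^ 2 ≤ n then
            (S j (n - ((m - 2) ^ 2 + 4 - j ^ 2))).ncard else 0 : ℕ) : ℤ) := by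
      intro j hj
      rw [Finset.mem_Icc] at hj
      rw [hXp]
      by_cases hg : (m - 2) ^ 2 + 4 - j ^ 2 ≤ n
      · rw [if_pos hg, if_pos hg, hcoeff j (by omega)]
      · rw [if_neg hg, if_neg hg]
        norm_num
    rw [Finset.sum_congr rfl hT2, master hm3]
    push_cast
    ring
  refine ⟨hA1, hA2, hrecA, ?_⟩
  intro m hm3
  obtain ⟨k, rfl⟩ : ∃ k, m = k + 3 := ⟨m - 3, by omega⟩
  have ha3 := hrecA (k + 3) (by omega)
  have ha2 := hrecA (k + 2) (by omega)
  rw [show 2 * (k + 3) - 1 = 2 * k + 5 by omega, show k + 3 - 1 = k + 2 by omega,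
    show k + 3 - 2 = k + 1 by omega] at ha3
  rw [show 2 * (k + 2) - 1 = 2 * k + 3 by omega, show k + 2 - 1 = k + 1 by omega,
    show k + 2 - 2 = k by omega] at ha2
  have hsplit : ∑ j ∈ Finset.Icc 1 (k + 1), Polynomial.X ^ ((k + 1) ^ 2 + 4 - j ^ 2) * a j
      = (∑ j ∈ Finset.Icc 1 k, Polynomial.X ^ ((k + 1) ^ 2 + 4 - j ^ 2) * a j)
        + Polynomial.X ^ 4 * a (k + 1) := by
    rw [Finset.sum_Icc_succ_top (by omega : 1 ≤ k + 1)]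
    congr 1
    rw [show (k + 1) ^ 2 + 4 - (k + 1) ^ 2 = 4 by omega]
  have hfactor : ∑ j ∈ Finset.Icc 1 k, Polynomial.X ^ ((k + 1) ^ 2 + 4 - j ^ 2) * a j
      = Polynomial.X ^ (2 * k + 1) *
        ∑ j ∈ Finset.Icc 1 k, Polynomial.X ^ (k ^ 2 + 4 - j ^ 2) * a j := by
    rw [Finset.mul_sum]
    apply Finset.sum_congr rfl
    intro j hj
    rw [Finset.mem_Icc] at hj
    rw [← mul_assoc, ← pow_add]
    congr 2
    have h1 : j ^ 2 ≤ k ^ 2 := Nat.pow_le_pow_left hj.2 2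
    have h2 : (k + 1) ^ 2 = k ^ 2 + 2 * k + 1 := by ring
    omega
  have hsum2 : ∑ j ∈ Finset.Icc 1 k, Polynomial.X ^ (k ^ 2 + 4 - j ^ 2) * a j
      = a (k + 2) - Polynomial.X ^ (2 * k + 3) * a (k + 1) := by
    rw [ha2]
    ring
  rw [show 2 * (k + 3) - 5 = 2 * k + 1 by omega, show k + 3 - 1 = k + 2 by omega,
    show k + 3 - 2 = k + 1 by omega, show 4 * (k + 3) - 12 = 4 * k by omega]
  rw [ha3, hsplit, hfactor, hsum2]
  ring
end

section
/- For all integers p ≥ 1 and A ≥ 1, the number of translation-classes of r-symmetric convex polyominoes with half-perimeter p and area A equals the number of pairs (m, (a₁,…,a_m)) where m ≥ 1 and (a₁,…,a_m) is a unimodal sequence of nonnegative integers satisfying p = 2m + 4·(max_i a_i) and A = m² + 4·(Σ_i a_i). -/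
/-- A sequence of length `n` is unimodal if it weakly increases then weakly decreases. -/
def Unimodal {n : ℕ} (a : Fin n → ℕ) : Prop :=
  ∃ p : Fin n, (∀ i j : Fin n, i ≤ j → j ≤ p → a i ≤ a j) ∧
    (∀ i j : Fin n, p ≤ i → i ≤ j → a j ≤ a i)



open Finset

namespace S9

def Norm (P : Finset Cell) : Prop :=
  (∀ c ∈ P, 0 ≤ c.1 ∧ 0 ≤ c.2) ∧ (∃ c ∈ P, c.1 = 0) ∧ (∃ c ∈ P, c.2 = 0)

lemma mem_cellTranslate {v : Cell} {P : Finset Cell} {c : Cell} :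
    c ∈ cellTranslate v P ↔ (c.1 - v.1, c.2 - v.2) ∈ P := by
  simp only [cellTranslate, Finset.mem_image]
  constructor
  · rintro ⟨d, hd, rfl⟩; simpa using hd
  · intro h; exact ⟨_, h, by simp⟩

lemma cellTranslate_cellTranslate (v w : Cell) (P : Finset Cell) :
    cellTranslate v (cellTranslate w P) = cellTranslate (w.1 + v.1, w.2 + v.2) P := by
  ext c
  simp only [mem_cellTranslate]
  constructor <;> intro h <;> convert h using 2 <;> ring

lemma cellTranslate_zero (P : Finset Cell) : cellTranslate (0, 0) P = P := by
  ext c; simp [mem_cellTranslate]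

lemma transClass_eq {P Q : Finset Cell} (v : Cell) (h : Q = cellTranslate v P) :
    transClass Q = transClass P := by
  ext R
  constructor
  · rintro ⟨w, rfl⟩
    exact ⟨(v.1 + w.1, v.2 + w.2), by rw [h, cellTranslate_cellTranslate]⟩
  · rintro ⟨w, rfl⟩
    refine ⟨(w.1 - v.1, w.2 - v.2), ?_⟩
    rw [h, cellTranslate_cellTranslate]
    congr 1
    apply Prod.ext <;> dsimp <;> ring

lemma norm_unique {P Q : Finset Cell} (v : Cell) (hQ : Q = cellTranslate v P)
    (hnP : Norm P) (hnQ : Norm Q) : Q = P := by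
  obtain ⟨hQpos, ⟨c, hc, hc1⟩, ⟨d, hd, hd2⟩⟩ := hnQ
  obtain ⟨hPpos, ⟨e, he, he1⟩, ⟨f, hf, hf2⟩⟩ := hnP
  have hv1le : v.1 ≤ 0 := by
    have := (mem_cellTranslate.1 (hQ ▸ hc))
    have := (hPpos _ this).1
    simp at this
    omega
  have hv2le : v.2 ≤ 0 := by
    have := (mem_cellTranslate.1 (hQ ▸ hd))
    have := (hPpos _ this).2
    simp at this
    omega
  have hv1ge : 0 ≤ v.1 := by
    have hmem : ((e.1 + v.1, e.2 + v.2) : Cell) ∈ Q := by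
      rw [hQ, mem_cellTranslate]; simpa using he
    have := (hQpos _ hmem).1
    omega
  have hv2ge : 0 ≤ v.2 := by
    have hmem : ((f.1 + v.1, f.2 + v.2) : Cell) ∈ Q := by
      rw [hQ, mem_cellTranslate]; simpa using hf
    have := (hQpos _ hmem).2
    omega
  have : v = (0, 0) := by
    have h1 : v.1 = 0 := le_antisymm hv1le hv1ge
    have h2 : v.2 = 0 := le_antisymm hv2le hv2ge
    exact Prod.ext h1 h2
  rw [hQ, this, cellTranslate_zero]

/-- every nonempty finite set of cells has a normalized translate -/
lemma exists_norm_translate {P : Finset Cell} (hne : P.Nonempty) :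
    ∃ v : Cell, Norm (cellTranslate v P) := by
  have hfst : (P.image Prod.fst).Nonempty := hne.image _
  have hsnd : (P.image Prod.snd).Nonempty := hne.image _
  set x0 := (P.image Prod.fst).min' hfst with hx0
  set y0 := (P.image Prod.snd).min' hsnd with hy0
  refine ⟨(-x0, -y0), ?_, ?_, ?_⟩
  · rintro ⟨i, j⟩ hc
    rw [mem_cellTranslate] at hc
    simp only [sub_neg_eq_add] at hc
    constructor
    · have hmem : i + x0 ∈ P.image Prod.fst := Finset.mem_image.2 ⟨_, hc, rfl⟩
      have := (P.image Prod.fst).min'_le _ hmem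
      simp only at this ⊢
      omega
    · have hmem : j + y0 ∈ P.image Prod.snd := Finset.mem_image.2 ⟨_, hc, rfl⟩
      have := (P.image Prod.snd).min'_le _ hmem
      simp only at this ⊢
      omega
  · obtain ⟨c, hc, hc1⟩ := Finset.mem_image.1 ((P.image Prod.fst).min'_mem hfst)
    refine ⟨(c.1 - x0, c.2 - y0), ?_, by simp [hx0, ← hc1]⟩
    rw [mem_cellTranslate]
    simp only [sub_neg_eq_add]
    convert hc using 2 <;> omega
  · obtain ⟨c, hc, hc2⟩ := Finset.mem_image.1 ((P.image Prod.snd).min'_mem hsnd)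
    refine ⟨(c.1 - x0, c.2 - y0), ?_, by simp [hy0, ← hc2]⟩
    rw [mem_cellTranslate]
    simp only [sub_neg_eq_add]
    convert hc using 2 <;> omega

lemma classCount_eq_card_norm (Φ : Finset Cell → Prop)
    (hinv : ∀ (v : Cell) (P : Finset Cell), Φ P → Φ (cellTranslate v P))
    (hne : ∀ P, Φ P → P.Nonempty) :
    classCount Φ = Nat.card {P : Finset Cell // Φ P ∧ Norm P} := by
  rw [classCount, ← Nat.card_coe_set_eq]
  symm
  apply Nat.card_eq_of_bijective
    (f := fun P => (⟨transClass P.1, P.1, P.2.1, rfl⟩ :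
      {O : Set (Finset Cell) | ∃ P : Finset Cell, Φ P ∧ O = transClass P}))
  constructor
  · rintro ⟨P, hP, hnP⟩ ⟨Q, hQ, hnQ⟩ h
    simp only [Subtype.mk.injEq] at h
    have hQP : Q ∈ transClass P := by
      rw [h]; exact ⟨(0, 0), (cellTranslate_zero Q).symm⟩
    obtain ⟨v, hv⟩ := hQP
    exact Subtype.ext (norm_unique v hv hnP hnQ).symm
  · rintro ⟨O, P, hP, rfl⟩
    obtain ⟨v, hnv⟩ := exists_norm_translate (hne P hP)
    refine ⟨⟨cellTranslate v P, hinv v P hP, hnv⟩, ?_⟩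
    simp only [Subtype.mk.injEq]
    exact transClass_eq v rfl

end S9
namespace S9

lemma cellTranslate_inj (v : Cell) : Function.Injective
    (fun c : Cell => (c.1 + v.1, c.2 + v.2)) := by
  rintro ⟨a1, a2⟩ ⟨b1, b2⟩ h
  simp only [Prod.mk.injEq] at h ⊢
  omega

lemma area_translate (v : Cell) (P : Finset Cell) : area (cellTranslate v P) = area P :=
  Finset.card_image_of_injective _ (cellTranslate_inj v)

lemma image_fst_translate (v : Cell) (P : Finset Cell) :
    (cellTranslate v P).image Prod.fst = (P.image Prod.fst).image (· + v.1) := by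
  rw [cellTranslate, Finset.image_image, Finset.image_image]
  rfl

lemma image_snd_translate (v : Cell) (P : Finset Cell) :
    (cellTranslate v P).image Prod.snd = (P.image Prod.snd).image (· + v.2) := by
  rw [cellTranslate, Finset.image_image, Finset.image_image]
  rfl

lemma width_translate (v : Cell) (P : Finset Cell) : width (cellTranslate v P) = width P := by
  rw [width, width, image_fst_translate]
  exact Finset.card_image_of_injective _ (add_left_injective _)

lemma height_translate (v : Cell) (P : Finset Cell) : height (cellTranslate v P) = height P := by
  rw [height, height, image_snd_translate]
  exact Finset.card_image_of_injective _ (add_left_injective _)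

lemma isPolyomino_translate (v : Cell) (P : Finset Cell) (h : IsPolyomino P) :
    IsPolyomino (cellTranslate v P) := by
  obtain ⟨hne, hconn⟩ := h
  constructor
  · exact hne.image _
  · intro a ha b hb
    rw [cellTranslate, Finset.mem_image] at ha hb
    obtain ⟨a', ha', rfl⟩ := ha
    obtain ⟨b', hb', rfl⟩ := hb
    refine Relation.ReflTransGen.lift (fun c : Cell => ((c.1 + v.1, c.2 + v.2) : Cell))
      ?_ _ _ (hconn a' ha' b' hb')
    rintro c d ⟨hc, hd, hadj⟩
    refine ⟨Finset.mem_image_of_mem _ hc, Finset.mem_image_of_mem _ hd, ?_⟩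
    simp only
    convert hadj using 3 <;> ring

lemma isConvexPoly_translate (v : Cell) (P : Finset Cell) (h : IsConvexPoly P) :
    IsConvexPoly (cellTranslate v P) := by
  obtain ⟨hc, hr⟩ := h
  constructor
  · intro x y₁ y₂ y h1 h2 hy1 hy2
    rw [mem_cellTranslate] at h1 h2 ⊢
    exact hc _ _ _ _ h1 h2 (by omega) (by omega)
  · intro y x₁ x₂ x h1 h2 hx1 hx2
    rw [mem_cellTranslate] at h1 h2 ⊢
    exact hr _ _ _ _ h1 h2 (by omega) (by omega)

lemma image_rot_translate (v : Cell) (Q : Finset Cell) :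
    (cellTranslate v Q).image rotMap = cellTranslate (rotMap v) (Q.image rotMap) := by
  ext c
  simp only [cellTranslate, Finset.image_image, Finset.mem_image, rotMap]
  constructor
  · rintro ⟨d, hd, rfl⟩
    exact ⟨d, hd, by apply Prod.ext <;> simp [rotMap] <;> ring⟩
  · rintro ⟨d, hd, rfl⟩
    exact ⟨d, hd, by apply Prod.ext <;> simp [rotMap] <;> ring⟩

lemma symBy_rot_translate (v : Cell) (P : Finset Cell) (h : SymBy rotMap P) :
    SymBy rotMap (cellTranslate v P) := by
  obtain ⟨u, hu⟩ := h
  refine ⟨(u.1 + (rotMap v).1 - v.1, u.2 + (rotMap v).2 - v.2), ?_⟩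
  rw [image_rot_translate, hu, cellTranslate_cellTranslate, cellTranslate_cellTranslate]
  congr 1
  apply Prod.ext <;> dsimp <;> ring

end S9
namespace S9
open Finset

noncomputable section
open scoped Classical

def MF (m : ℕ) (a : Fin m → ℕ) : ℤ := ((univ.sup a : ℕ) : ℤ)

def sF (m : ℕ) (a : Fin m → ℕ) : ℤ := 2 * MF m a + m - 1

def alf (m : ℕ) (a : Fin m → ℕ) (k : ℤ) : ℕ :=
  if h : 0 ≤ k ∧ k < (m : ℤ) then a ⟨k.toNat, by omega⟩ else 0

def inF (m : ℕ) (a : Fin m → ℕ) (x y : ℤ) : Prop :=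
  (MF m a ≤ x ∧ x ≤ sF m a - MF m a ∧
    MF m a - alf m a (sF m a - MF m a - x) ≤ y ∧ y ≤ sF m a - MF m a + alf m a (x - MF m a)) ∨
  (MF m a ≤ y ∧ y ≤ sF m a - MF m a ∧
    MF m a - alf m a (y - MF m a) ≤ x ∧ x ≤ sF m a - MF m a + alf m a (sF m a - MF m a - y))

def F (m : ℕ) (a : Fin m → ℕ) : Finset Cell :=
  (Finset.Icc (0:ℤ) (sF m a) ×ˢ Finset.Icc (0:ℤ) (sF m a)).filter (fun c => inF m a c.1 c.2)

variable {m : ℕ} {a : Fin m → ℕ}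

lemma MF_nonneg : 0 ≤ MF m a := by unfold MF; exact Int.natCast_nonneg _

lemma alf_le (k : ℤ) : (alf m a k : ℤ) ≤ MF m a := by
  rw [alf]
  split
  · unfold MF
    exact_mod_cast Finset.le_sup (Finset.mem_univ _)
  · exact MF_nonneg

lemma alf_eq (k : ℤ) (j : Fin m) (hj : (j : ℤ) = k) : alf m a k = a j := by
  rw [alf]
  have h0 : 0 ≤ k := by omega
  have h1 : k < (m : ℤ) := by have := j.2; omega
  rw [dif_pos ⟨h0, h1⟩]
  congr 1
  apply Fin.ext
  simp only
  omega

lemma exists_alf_max (hm : 1 ≤ m) : ∃ k : ℤ, 0 ≤ k ∧ k < (m : ℤ) ∧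
    (alf m a k : ℤ) = MF m a := by
  have hne : (univ : Finset (Fin m)).Nonempty := ⟨⟨0, hm⟩, mem_univ _⟩
  obtain ⟨j, _, hj⟩ := Finset.exists_mem_eq_sup univ hne a
  refine ⟨(j : ℤ), by omega, by have := j.2; omega, ?_⟩
  rw [alf_eq _ j rfl]
  unfold MF
  rw [hj]

lemma alf_quasi (hu : Unimodal a) {k1 k2 k3 : ℤ} (h12 : k1 ≤ k2) (h23 : k2 ≤ k3)
    {c : ℤ} (h1 : c ≤ alf m a k1) (h3 : c ≤ alf m a k3) (hc : 0 < c) :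
    c ≤ alf m a k2 := by
  obtain ⟨p, hup, hdown⟩ := hu
  have hk1 : 0 ≤ k1 ∧ k1 < (m:ℤ) := by
    by_contra h
    rw [alf, dif_neg h] at h1
    simp at h1
    omega
  have hk3 : 0 ≤ k3 ∧ k3 < (m:ℤ) := by
    by_contra h
    rw [alf, dif_neg h] at h3
    simp at h3
    omega
  have hk2 : 0 ≤ k2 ∧ k2 < (m:ℤ) := ⟨by omega, by omega⟩
  set j1 : Fin m := ⟨k1.toNat, by omega⟩
  set j2 : Fin m := ⟨k2.toNat, by omega⟩
  set j3 : Fin m := ⟨k3.toNat, by omega⟩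
  rw [alf_eq k1 j1 (by simp [j1]; omega)] at h1
  rw [alf_eq k3 j3 (by simp [j3]; omega)] at h3
  rw [alf_eq k2 j2 (by simp [j2]; omega)]
  rcases le_total j2 p with hp | hp
  · have : a j1 ≤ a j2 := hup j1 j2 (by simp [j1, j2, Fin.le_def]; omega) hp
    omega
  · have : a j3 ≤ a j2 := hdown j2 j3 hp (by simp [j2, j3, Fin.le_def]; omega)
    omega

section Char

variable (hm : 1 ≤ m)
include hm

lemma hMsM : MF m a ≤ sF m a - MF m a := by rw [sF]; omega

lemma inF_col_mid {x y : ℤ} (h1 : MF m a ≤ x) (h2 : x ≤ sF m a - MF m a) :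
    inF m a x y ↔ (MF m a - alf m a (sF m a - MF m a - x) ≤ y ∧
      y ≤ sF m a - MF m a + alf m a (x - MF m a)) := by
  have hA := alf_le (m := m) (a := a) (sF m a - MF m a - x)
  have hB := alf_le (m := m) (a := a) (x - MF m a)
  have hC := alf_le (m := m) (a := a) (y - MF m a)
  have hD := alf_le (m := m) (a := a) (sF m a - MF m a - y)
  have h0 := MF_nonneg (m := m) (a := a)
  have hs := hMsM (m := m) (a := a) hm
  constructor
  · rintro (h | h) <;> omega
  · intro h; left; omega

lemma inF_row_mid {x y : ℤ} (h1 : MF m a ≤ y) (h2 : y ≤ sF m a - MF m a) :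
    inF m a x y ↔ (MF m a - alf m a (y - MF m a) ≤ x ∧
      x ≤ sF m a - MF m a + alf m a (sF m a - MF m a - y)) := by
  have hA := alf_le (m := m) (a := a) (sF m a - MF m a - x)
  have hB := alf_le (m := m) (a := a) (x - MF m a)
  have hC := alf_le (m := m) (a := a) (y - MF m a)
  have hD := alf_le (m := m) (a := a) (sF m a - MF m a - y)
  have h0 := MF_nonneg (m := m) (a := a)
  have hs := hMsM (m := m) (a := a) hm
  constructor
  · rintro (h | h) <;> omega
  · intro h; right; omega

lemma inF_col_left {x y : ℤ} (h1 : x < MF m a) :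
    inF m a x y ↔ (MF m a ≤ y ∧ y ≤ sF m a - MF m a ∧
      MF m a - x ≤ alf m a (y - MF m a)) := by
  have hD := alf_le (m := m) (a := a) (sF m a - MF m a - y)
  have h0 := MF_nonneg (m := m) (a := a)
  have hs := hMsM (m := m) (a := a) hm
  constructor
  · rintro (h | h) <;> omega
  · intro h; right; omega

lemma inF_col_right {x y : ℤ} (h1 : sF m a - MF m a < x) :
    inF m a x y ↔ (MF m a ≤ y ∧ y ≤ sF m a - MF m a ∧
      x - (sF m a - MF m a) ≤ alf m a (sF m a - MF m a - y)) := by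
  have hC := alf_le (m := m) (a := a) (y - MF m a)
  have h0 := MF_nonneg (m := m) (a := a)
  have hs := hMsM (m := m) (a := a) hm
  constructor
  · rintro (h | h) <;> omega
  · intro h; right; omega

lemma inF_row_low {x y : ℤ} (h1 : y < MF m a) :
    inF m a x y ↔ (MF m a ≤ x ∧ x ≤ sF m a - MF m a ∧
      MF m a - y ≤ alf m a (sF m a - MF m a - x)) := by
  have hB := alf_le (m := m) (a := a) (x - MF m a)
  have h0 := MF_nonneg (m := m) (a := a)
  have hs := hMsM (m := m) (a := a) hm
  constructor
  · rintro (h | h) <;> omega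
  · intro h; left; omega

lemma inF_row_high {x y : ℤ} (h1 : sF m a - MF m a < y) :
    inF m a x y ↔ (MF m a ≤ x ∧ x ≤ sF m a - MF m a ∧
      y - (sF m a - MF m a) ≤ alf m a (x - MF m a)) := by
  have hA := alf_le (m := m) (a := a) (sF m a - MF m a - x)
  have h0 := MF_nonneg (m := m) (a := a)
  have hs := hMsM (m := m) (a := a) hm
  constructor
  · rintro (h | h) <;> omega
  · intro h; left; omega

lemma inF_rot {x y : ℤ} : inF m a x y ↔ inF m a (sF m a - y) x := by
  have e1 : alf m a (sF m a - MF m a - (sF m a - y)) = alf m a (y - MF m a) := by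
    congr 1; ring
  have e2 : alf m a ((sF m a - y) - MF m a) = alf m a (sF m a - MF m a - y) := by
    congr 1; ring
  rw [inF, inF, e1, e2]
  constructor
  · rintro (h | h)
    · right; omega
    · left; omega
  · rintro (h | h)
    · right; omega
    · left; omega

lemma mem_F {c : Cell} : c ∈ F m a ↔ inF m a c.1 c.2 := by
  rw [F, Finset.mem_filter, Finset.mem_product, Finset.mem_Icc, Finset.mem_Icc]
  have hA := alf_le (m := m) (a := a) (sF m a - MF m a - c.1)
  have hB := alf_le (m := m) (a := a) (c.1 - MF m a)
  have hC := alf_le (m := m) (a := a) (c.2 - MF m a)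
  have hD := alf_le (m := m) (a := a) (sF m a - MF m a - c.2)
  have h0 := MF_nonneg (m := m) (a := a)
  have hs := hMsM (m := m) (a := a) hm
  constructor
  · exact fun h => h.2
  · intro h
    refine ⟨?_, h⟩
    obtain (h | h) := h <;> exact ⟨by omega, by omega⟩

end Char

end
end S9
namespace S9
open Finset

/-- adjacency relation of a cell set -/
def adjR (Q : Finset Cell) : Cell → Cell → Prop :=
  fun c d => c ∈ Q ∧ d ∈ Q ∧ (c.1 - d.1).natAbs + (c.2 - d.2).natAbs = 1

lemma adjR_symm (Q : Finset Cell) : Symmetric (adjR Q) := by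
  rintro c d ⟨h1, h2, h3⟩
  exact ⟨h2, h1, by omega⟩

lemma path_horiz (Q : Finset Cell) (y x1 : ℤ) :
    ∀ x2, x1 ≤ x2 → (∀ x, x1 ≤ x → x ≤ x2 → ((x, y) : Cell) ∈ Q) →
    Relation.ReflTransGen (adjR Q) (x1, y) (x2, y) := by
  refine Int.le_induction ?_ ?_
  · intro _
    exact Relation.ReflTransGen.refl
  · intro n hn ih h
    refine Relation.ReflTransGen.tail (ih fun x h1 h2 => h x h1 (by omega)) ?_
    exact ⟨h n hn (by omega), h (n+1) (by omega) le_rfl, by simp⟩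

lemma path_vert (Q : Finset Cell) (x y1 : ℤ) :
    ∀ y2, y1 ≤ y2 → (∀ y, y1 ≤ y → y ≤ y2 → ((x, y) : Cell) ∈ Q) →
    Relation.ReflTransGen (adjR Q) (x, y1) (x, y2) := by
  refine Int.le_induction ?_ ?_
  · intro _
    exact Relation.ReflTransGen.refl
  · intro n hn ih h
    refine Relation.ReflTransGen.tail (ih fun z h1 h2 => h z h1 (by omega)) ?_
    exact ⟨h n hn (by omega), h (n+1) (by omega) le_rfl, by simp⟩

lemma path_horiz' (Q : Finset Cell) (y x1 x2 : ℤ)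
    (h : ∀ x, min x1 x2 ≤ x → x ≤ max x1 x2 → ((x, y) : Cell) ∈ Q) :
    Relation.ReflTransGen (adjR Q) (x1, y) (x2, y) := by
  rcases le_total x1 x2 with hle | hle
  · exact path_horiz Q y x1 x2 hle (fun x a b => h x (by omega) (by omega))
  · exact (haveI : Std.Symm (adjR Q) := ⟨fun a b h => adjR_symm Q h⟩; Relation.ReflTransGen.symmetric.symm _ _
      (path_horiz Q y x2 x1 hle (fun x a b => h x (by omega) (by omega))))

lemma path_vert' (Q : Finset Cell) (x y1 y2 : ℤ)
    (h : ∀ y, min y1 y2 ≤ y → y ≤ max y1 y2 → ((x, y) : Cell) ∈ Q) :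
    Relation.ReflTransGen (adjR Q) (x, y1) (x, y2) := by
  rcases le_total y1 y2 with hle | hle
  · exact path_vert Q x y1 y2 hle (fun z a b => h z (by omega) (by omega))
  · exact (haveI : Std.Symm (adjR Q) := ⟨fun a b h => adjR_symm Q h⟩; Relation.ReflTransGen.symmetric.symm _ _
      (path_vert Q x y2 y1 hle (fun z a b => h z (by omega) (by omega))))

noncomputable section
open scoped Classical

variable {m : ℕ} {a : Fin m → ℕ}

section Fwd

variable (hm : 1 ≤ m)
include hm

lemma F_convex (hu : Unimodal a) : IsConvexPoly (F m a) := by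
  have h0 := MF_nonneg (m := m) (a := a)
  have hs := hMsM (m := m) (a := a) hm
  constructor
  · intro x y1 y2 y h1 h2 hle1 hle2
    rw [mem_F hm] at h1 h2 ⊢
    simp only at h1 h2 ⊢
    rcases lt_or_ge x (MF m a) with hx | hx
    · rw [inF_col_left hm hx] at h1 h2 ⊢
      refine ⟨by omega, by omega, ?_⟩
      have := alf_quasi hu (by omega : y1 - MF m a ≤ y - MF m a)
        (by omega : y - MF m a ≤ y2 - MF m a) h1.2.2 h2.2.2 (by omega)
      exact this
    · rcases le_or_gt x (sF m a - MF m a) with hx2 | hx2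
      · rw [inF_col_mid hm hx hx2] at h1 h2 ⊢
        omega
      · rw [inF_col_right hm hx2] at h1 h2 ⊢
        refine ⟨by omega, by omega, ?_⟩
        exact alf_quasi hu (by omega : sF m a - MF m a - y2 ≤ sF m a - MF m a - y)
          (by omega) h2.2.2 h1.2.2 (by omega)
  · intro y x1 x2 x h1 h2 hle1 hle2
    rw [mem_F hm] at h1 h2 ⊢
    simp only at h1 h2 ⊢
    rcases lt_or_ge y (MF m a) with hy | hy
    · rw [inF_row_low hm hy] at h1 h2 ⊢
      refine ⟨by omega, by omega, ?_⟩
      exact alf_quasi hu (by omega : sF m a - MF m a - x2 ≤ sF m a - MF m a - x)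
        (by omega) h2.2.2 h1.2.2 (by omega)
    · rcases le_or_gt y (sF m a - MF m a) with hy2 | hy2
      · rw [inF_row_mid hm hy hy2] at h1 h2 ⊢
        omega
      · rw [inF_row_high hm hy2] at h1 h2 ⊢
        refine ⟨by omega, by omega, ?_⟩
        exact alf_quasi hu (by omega : x1 - MF m a ≤ x - MF m a)
          (by omega) h1.2.2 h2.2.2 (by omega)

lemma center_mem_F : ((MF m a, MF m a) : Cell) ∈ F m a := by
  have hA := alf_le (m := m) (a := a) (sF m a - MF m a - MF m a)
  have hB := alf_le (m := m) (a := a) (MF m a - MF m a)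
  have h0 := MF_nonneg (m := m) (a := a)
  have hs := hMsM (m := m) (a := a) hm
  rw [mem_F hm]
  left
  simp only
  omega

lemma mid_mem_F {x y : ℤ} (hx1 : MF m a ≤ x) (hx2 : x ≤ sF m a - MF m a)
    (hy1 : MF m a ≤ y) (hy2 : y ≤ sF m a - MF m a) : ((x, y) : Cell) ∈ F m a := by
  have hA := alf_le (m := m) (a := a) (sF m a - MF m a - x)
  have hB := alf_le (m := m) (a := a) (x - MF m a)
  rw [mem_F hm]
  left
  simp only
  omega

lemma F_conn_center : ∀ c ∈ F m a, Relation.ReflTransGen (adjR (F m a)) c (MF m a, MF m a) := by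
  have h0 := MF_nonneg (m := m) (a := a)
  have hs := hMsM (m := m) (a := a) hm
  rintro ⟨x, y⟩ hc
  have hin : inF m a x y := by rw [mem_F hm] at hc; exact hc
  rcases lt_or_ge x (MF m a) with hx | hx
  · -- left region: go right to (M, y), then vertical to (M, M)
    rw [inF_col_left hm hx] at hin
    have step1 : Relation.ReflTransGen (adjR (F m a)) (x, y) (MF m a, y) := by
      apply path_horiz' (F m a) y x (MF m a)
      intro x' h1 h2
      rcases lt_or_ge x' (MF m a) with hx' | hx'
      · rw [mem_F hm]
        simp only
        rw [inF_col_left hm hx']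
        refine ⟨hin.1, hin.2.1, by have := hin.2.2; omega⟩
      · have : x' = MF m a := by omega
        subst this
        exact mid_mem_F hm le_rfl hs hin.1 hin.2.1
    refine step1.trans ?_
    apply path_vert' (F m a) (MF m a) y (MF m a)
    intro y' h1 h2
    apply mid_mem_F hm le_rfl hs <;> omega
  · rcases le_or_gt x (sF m a - MF m a) with hx2 | hx2
    · -- middle: vertical to (x, M), then horizontal to (M, M)
      rw [inF_col_mid hm hx hx2] at hin
      have hA := alf_le (m := m) (a := a) (sF m a - MF m a - x)
      have hB := alf_le (m := m) (a := a) (x - MF m a)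
      have step1 : Relation.ReflTransGen (adjR (F m a)) (x, y) (x, MF m a) := by
        apply path_vert' (F m a) x y (MF m a)
        intro y' h1 h2
        rw [mem_F hm]
        simp only
        rw [inF_col_mid hm hx hx2]
        omega
      refine step1.trans ?_
      apply path_horiz' (F m a) (MF m a) x (MF m a)
      intro x' h1 h2
      apply mid_mem_F hm (by omega) (by omega) le_rfl hs
    · -- right region
      rw [inF_col_right hm hx2] at hin
      have step1 : Relation.ReflTransGen (adjR (F m a)) (x, y) (sF m a - MF m a, y) := by
        apply path_horiz' (F m a) y x (sF m a - MF m a)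
        intro x' h1 h2
        rcases lt_or_ge (sF m a - MF m a) x' with hx' | hx'
        · rw [mem_F hm]
          simp only
          rw [inF_col_right hm hx']
          refine ⟨hin.1, hin.2.1, by have := hin.2.2; omega⟩
        · have h3 : MF m a ≤ x' := by omega
          exact mid_mem_F hm h3 hx' hin.1 hin.2.1
      refine step1.trans ?_
      have step2 : Relation.ReflTransGen (adjR (F m a)) (sF m a - MF m a, y)
          (sF m a - MF m a, MF m a) := by
        apply path_vert' (F m a) (sF m a - MF m a) y (MF m a)
        intro y' h1 h2
        apply mid_mem_F hm hs le_rfl <;> omega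
      refine step2.trans ?_
      apply path_horiz' (F m a) (MF m a) (sF m a - MF m a) (MF m a)
      intro x' h1 h2
      apply mid_mem_F hm (by omega) (by omega) le_rfl hs

lemma F_poly (hu : Unimodal a) : IsPolyomino (F m a) := by
  constructor
  · exact ⟨_, center_mem_F hm⟩
  · intro c hc d hd
    have h1 := F_conn_center hm c hc
    have h2 := F_conn_center hm d hd
    have h2' := (haveI : Std.Symm (adjR (F m a)) := ⟨fun u w h => adjR_symm (F m a) h⟩; Relation.ReflTransGen.symmetric.symm _ _ h2)
    exact (h1.trans h2' : Relation.ReflTransGen (adjR (F m a)) c d)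

lemma F_sym : SymBy rotMap (F m a) := by
  refine ⟨(-(sF m a), 0), ?_⟩
  ext c
  rw [mem_cellTranslate]
  simp only [Finset.mem_image]
  constructor
  · rintro ⟨d, hd, rfl⟩
    rw [mem_F hm] at hd ⊢
    simp only [rotMap]
    have e : -d.2 - -sF m a = sF m a - d.2 := by ring
    rw [e, sub_zero]
    exact (inF_rot hm).mp hd
  · intro h
    rw [mem_F hm] at h
    refine ⟨(c.2, -c.1), ?_, ?_⟩
    · rw [mem_F hm]
      simp only
      have h' : inF m a (c.1 + sF m a) c.2 := by
        have e1 : c.1 - -sF m a = c.1 + sF m a := by ring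
        simpa [e1] using h
      have : inF m a c.2 (-c.1) ↔ inF m a (sF m a - -c.1) c.2 := inF_rot hm
      rw [this, show sF m a - -c.1 = c.1 + sF m a from by ring]
      exact h'
    · simp [rotMap]

end Fwd
end
end S9
namespace S9
open Finset

noncomputable section
open scoped Classical

variable {m : ℕ} {a : Fin m → ℕ}

section Fwd2

variable (hm : 1 ≤ m)
include hm

lemma image_fst_F : (F m a).image Prod.fst = Finset.Icc 0 (sF m a) := by
  have h0 := MF_nonneg (m := m) (a := a)
  have hs := hMsM (m := m) (a := a) hm
  have hsf : sF m a = 2 * MF m a + m - 1 := rfl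
  ext z
  simp only [Finset.mem_image, Finset.mem_Icc]
  constructor
  · rintro ⟨c, hc, rfl⟩
    have := (Finset.mem_product.1 (Finset.mem_filter.1 hc).1).1
    rw [Finset.mem_Icc] at this
    exact this
  · intro hz
    rcases lt_or_ge z (MF m a) with hx | hx
    · obtain ⟨k0, hk0, hk1, hk2⟩ := exists_alf_max (a := a) hm
      refine ⟨(z, MF m a + k0), ?_, rfl⟩
      rw [mem_F hm]
      simp only
      rw [inF_col_left hm hx]
      have e : MF m a + k0 - MF m a = k0 := by ring
      rw [e]
      omega
    · rcases le_or_gt z (sF m a - MF m a) with hx2 | hx2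
      · exact ⟨(z, MF m a), mid_mem_F hm hx hx2 le_rfl hs, rfl⟩
      · obtain ⟨k0, hk0, hk1, hk2⟩ := exists_alf_max (a := a) hm
        refine ⟨(z, sF m a - MF m a - k0), ?_, rfl⟩
        rw [mem_F hm]
        simp only
        rw [inF_col_right hm hx2]
        have e : sF m a - MF m a - (sF m a - MF m a - k0) = k0 := by ring
        rw [e]
        omega

lemma image_snd_F : (F m a).image Prod.snd = Finset.Icc 0 (sF m a) := by
  have h0 := MF_nonneg (m := m) (a := a)
  have hs := hMsM (m := m) (a := a) hm
  have hsf : sF m a = 2 * MF m a + m - 1 := rfl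
  ext z
  simp only [Finset.mem_image, Finset.mem_Icc]
  constructor
  · rintro ⟨c, hc, rfl⟩
    have := (Finset.mem_product.1 (Finset.mem_filter.1 hc).1).2
    rw [Finset.mem_Icc] at this
    exact this
  · intro hz
    rcases lt_or_ge z (MF m a) with hy | hy
    · obtain ⟨k0, hk0, hk1, hk2⟩ := exists_alf_max (a := a) hm
      refine ⟨(sF m a - MF m a - k0, z), ?_, rfl⟩
      rw [mem_F hm]
      simp only
      rw [inF_row_low hm hy]
      have e : sF m a - MF m a - (sF m a - MF m a - k0) = k0 := by ring
      rw [e]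
      omega
    · rcases le_or_gt z (sF m a - MF m a) with hy2 | hy2
      · exact ⟨(MF m a, z), mid_mem_F hm le_rfl hs hy hy2, rfl⟩
      · obtain ⟨k0, hk0, hk1, hk2⟩ := exists_alf_max (a := a) hm
        refine ⟨(MF m a + k0, z), ?_, rfl⟩
        rw [mem_F hm]
        simp only
        rw [inF_row_high hm hy2]
        have e : MF m a + k0 - MF m a = k0 := by ring
        rw [e]
        omega

lemma width_F : width (F m a) = 2 * (univ.sup a) + m := by
  rw [width, image_fst_F hm, Int.card_Icc]
  have : sF m a = 2 * ((univ.sup a : ℕ) : ℤ) + m - 1 := rfl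
  omega

lemma height_F : height (F m a) = 2 * (univ.sup a) + m := by
  rw [height, image_snd_F hm, Int.card_Icc]
  have : sF m a = 2 * ((univ.sup a : ℕ) : ℤ) + m - 1 := rfl
  omega

lemma norm_F : Norm (F m a) := by
  have h0 := MF_nonneg (m := m) (a := a)
  have hs := hMsM (m := m) (a := a) hm
  refine ⟨?_, ?_, ?_⟩
  · intro c hc
    have := Finset.mem_product.1 (Finset.mem_filter.1 hc).1
    rw [Finset.mem_Icc, Finset.mem_Icc] at this
    exact ⟨this.1.1, this.2.1⟩
  · have : (0 : ℤ) ∈ (F m a).image Prod.fst := by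
      rw [image_fst_F hm, Finset.mem_Icc]; omega
    obtain ⟨c, hc, hc1⟩ := Finset.mem_image.1 this
    exact ⟨c, hc, hc1⟩
  · have : (0 : ℤ) ∈ (F m a).image Prod.snd := by
      rw [image_snd_F hm, Finset.mem_Icc]; omega
    obtain ⟨c, hc, hc2⟩ := Finset.mem_image.1 this
    exact ⟨c, hc, hc2⟩

end Fwd2
end
end S9
namespace S9
open Finset

noncomputable section
open scoped Classical

def rotF (m : ℕ) (a : Fin m → ℕ) : Cell → Cell := fun c => (sF m a - c.2, c.1)

def Tt (m : ℕ) (a : Fin m → ℕ) : Finset Cell :=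
  univ.biUnion fun k : Fin m =>
    {((MF m a + (k : ℤ)) : ℤ)} ×ˢ Finset.Icc (sF m a - MF m a + 1) (sF m a - MF m a + (a k : ℤ))

def Sq (m : ℕ) (a : Fin m → ℕ) : Finset Cell :=
  Finset.Icc (MF m a) (sF m a - MF m a) ×ˢ Finset.Icc (MF m a) (sF m a - MF m a)

variable {m : ℕ} {a : Fin m → ℕ}

lemma rotF_inj : Function.Injective (rotF m a) := by
  rintro ⟨a1, a2⟩ ⟨b1, b2⟩ h
  simp only [rotF, Prod.mk.injEq] at h ⊢
  omega

lemma mem_image_rotF (Q : Finset Cell) (c : Cell) :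
    c ∈ Q.image (rotF m a) ↔ ((c.2, sF m a - c.1) : Cell) ∈ Q := by
  simp only [Finset.mem_image]
  constructor
  · rintro ⟨d, hd, rfl⟩
    simpa [rotF] using hd
  · intro h
    exact ⟨(c.2, sF m a - c.1), h, by simp [rotF]⟩

lemma mem_Sq {c : Cell} : c ∈ Sq m a ↔ MF m a ≤ c.1 ∧ c.1 ≤ sF m a - MF m a ∧
    MF m a ≤ c.2 ∧ c.2 ≤ sF m a - MF m a := by
  simp only [Sq, Finset.mem_product, Finset.mem_Icc]
  tauto

section Area

variable (hm : 1 ≤ m)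
include hm

lemma mem_Tt {c : Cell} : c ∈ Tt m a ↔ MF m a ≤ c.1 ∧ c.1 ≤ sF m a - MF m a ∧
    sF m a - MF m a + 1 ≤ c.2 ∧ c.2 ≤ sF m a - MF m a + alf m a (c.1 - MF m a) := by
  have hsf : sF m a = 2 * MF m a + m - 1 := rfl
  have h0 := MF_nonneg (m := m) (a := a)
  simp only [Tt, Finset.mem_biUnion, Finset.mem_product, Finset.mem_singleton,
    Finset.mem_Icc, Finset.mem_univ, true_and]
  constructor
  · rintro ⟨k, hk1, hk2, hk3⟩
    have hkm := k.2
    have he : alf m a (c.1 - MF m a) = a k := alf_eq _ k (by omega)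
    rw [he]
    omega
  · rintro ⟨h1, h2, h3, h4⟩
    have hk : 0 ≤ c.1 - MF m a ∧ c.1 - MF m a < (m : ℤ) := by omega
    set k : Fin m := ⟨(c.1 - MF m a).toNat, by omega⟩ with hkdef
    have hv : (k : ℤ) = c.1 - MF m a := by simp [hkdef]; omega
    have he : alf m a (c.1 - MF m a) = a k := alf_eq _ k hv
    exact ⟨k, by omega, by omega, by omega⟩

lemma card_Tt : (Tt m a).card = ∑ k, a k := by
  rw [Tt, Finset.card_biUnion]
  · refine Finset.sum_congr rfl fun k _ => ?_
    rw [Finset.card_product, Finset.card_singleton, Int.card_Icc, one_mul]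
    omega
  · intro k _ l _ hkl
    simp only [Function.onFun, Finset.disjoint_left]
    rintro c hc hc'
    rw [Finset.mem_product, Finset.mem_singleton] at hc hc'
    apply hkl
    apply Fin.ext
    have : (k : ℤ) = (l : ℤ) := by omega
    omega

lemma card_Sq : (Sq m a).card = m * m := by
  have hsf : sF m a = 2 * MF m a + m - 1 := rfl
  have h0 := MF_nonneg (m := m) (a := a)
  rw [Sq, Finset.card_product, Int.card_Icc]
  have : (sF m a - MF m a + 1 - MF m a).toNat = m := by omega
  rw [this]

lemma F_decomp : F m a =
    (((Sq m a ∪ Tt m a) ∪ (Tt m a).image (rotF m a)) ∪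
      ((Tt m a).image (rotF m a)).image (rotF m a)) ∪
      (((Tt m a).image (rotF m a)).image (rotF m a)).image (rotF m a) := by
  have hsf : sF m a = 2 * MF m a + m - 1 := rfl
  have h0 := MF_nonneg (m := m) (a := a)
  have hm' : (1 : ℤ) ≤ (m : ℤ) := by exact_mod_cast hm
  ext c
  obtain ⟨x, y⟩ := c
  have hA := alf_le (m := m) (a := a) (sF m a - MF m a - x)
  have hB := alf_le (m := m) (a := a) (x - MF m a)
  have hC := alf_le (m := m) (a := a) (y - MF m a)
  have hD := alf_le (m := m) (a := a) (sF m a - MF m a - y)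
  rw [mem_F hm]
  simp only [Finset.mem_union]
  rw [mem_Sq, mem_Tt hm, mem_image_rotF, mem_Tt hm, mem_image_rotF, mem_image_rotF,
    mem_Tt hm, mem_image_rotF, mem_image_rotF, mem_image_rotF, mem_Tt hm]
  simp only [inF]
  have e2 : sF m a - x - MF m a = sF m a - MF m a - x := by ring
  have e3 : sF m a - y - MF m a = sF m a - MF m a - y := by ring
  simp only [e2, e3]
  omega

lemma area_F : area (F m a) = m ^ 2 + 4 * ∑ k, a k := by
  have hsf : sF m a = 2 * MF m a + m - 1 := rfl
  have h0 := MF_nonneg (m := m) (a := a)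
  have hm' : (1 : ℤ) ≤ (m : ℤ) := by exact_mod_cast hm
  have hd1 : Disjoint (Sq m a) (Tt m a) := by
    rw [Finset.disjoint_left]
    intro c hc hc'
    rw [mem_Sq] at hc
    rw [mem_Tt hm] at hc'
    omega
  have hd2 : Disjoint (Sq m a ∪ Tt m a) ((Tt m a).image (rotF m a)) := by
    rw [Finset.disjoint_left]
    intro c hc hc'
    rw [mem_image_rotF, mem_Tt hm] at hc'
    rw [Finset.mem_union, mem_Sq, mem_Tt hm] at hc
    dsimp only at hc hc'
    omega
  have hd3 : Disjoint ((Sq m a ∪ Tt m a) ∪ (Tt m a).image (rotF m a))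
      (((Tt m a).image (rotF m a)).image (rotF m a)) := by
    rw [Finset.disjoint_left]
    intro c hc hc'
    rw [mem_image_rotF, mem_image_rotF, mem_Tt hm] at hc'
    rw [Finset.mem_union, Finset.mem_union, mem_Sq, mem_Tt hm, mem_image_rotF, mem_Tt hm] at hc
    dsimp only at hc hc'
    have e2 : sF m a - c.1 - MF m a = sF m a - MF m a - c.1 := by ring
    have e3 : sF m a - c.2 - MF m a = sF m a - MF m a - c.2 := by ring
    simp only [e2, e3] at hc hc'
    omega
  have hd4 : Disjoint (((Sq m a ∪ Tt m a) ∪ (Tt m a).image (rotF m a)) ∪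
      ((Tt m a).image (rotF m a)).image (rotF m a))
      ((((Tt m a).image (rotF m a)).image (rotF m a)).image (rotF m a)) := by
    rw [Finset.disjoint_left]
    intro c hc hc'
    rw [mem_image_rotF, mem_image_rotF, mem_image_rotF, mem_Tt hm] at hc'
    rw [Finset.mem_union, Finset.mem_union, Finset.mem_union, mem_Sq, mem_Tt hm,
      mem_image_rotF, mem_Tt hm, mem_image_rotF, mem_image_rotF, mem_Tt hm] at hc
    dsimp only at hc hc'
    have e2 : sF m a - c.1 - MF m a = sF m a - MF m a - c.1 := by ring
    have e3 : sF m a - c.2 - MF m a = sF m a - MF m a - c.2 := by ring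
    simp only [e2, e3] at hc hc'
    omega
  rw [area, F_decomp hm, Finset.card_union_of_disjoint hd4,
    Finset.card_union_of_disjoint hd3, Finset.card_union_of_disjoint hd2,
    Finset.card_union_of_disjoint hd1]
  simp only [Finset.card_image_of_injective _ (rotF_inj (m := m) (a := a))]
  rw [card_Tt hm, card_Sq hm]
  ring

end Area
end
end S9
namespace S9
open Finset

lemma path_iv_fst (P : Finset Cell) {p q : Cell}
    (h : Relation.ReflTransGen (adjR P) p q) (hp : p ∈ P) :
    ∀ x, p.1 ≤ x → x ≤ q.1 → ∃ c ∈ P, c.1 = x := by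
  induction h with
  | refl => intro x h1 h2; exact ⟨p, hp, by omega⟩
  | @tail b c hab hbc ih =>
    intro x h1 h2
    rcases le_or_gt x b.1 with hle | hlt
    · exact ih x h1 hle
    · obtain ⟨hbP, hcP, hadj⟩ := hbc
      have : c.1 = x := by omega
      exact ⟨c, hcP, this⟩

lemma path_iv_snd (P : Finset Cell) {p q : Cell}
    (h : Relation.ReflTransGen (adjR P) p q) (hp : p ∈ P) :
    ∀ y, p.2 ≤ y → y ≤ q.2 → ∃ c ∈ P, c.2 = y := by
  induction h with
  | refl => intro y h1 h2; exact ⟨p, hp, by omega⟩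
  | @tail b c hab hbc ih =>
    intro y h1 h2
    rcases le_or_gt y b.2 with hle | hlt
    · exact ih y h1 hle
    · obtain ⟨hbP, hcP, hadj⟩ := hbc
      have : c.2 = y := by omega
      exact ⟨c, hcP, this⟩

lemma cross_row (P : Finset Cell) {p q : Cell}
    (h : Relation.ReflTransGen (adjR P) p q) :
    ∀ y, p.2 ≤ y → y + 1 ≤ q.2 → ∃ x, ((x, y) : Cell) ∈ P ∧ ((x, y + 1) : Cell) ∈ P := by
  induction h with
  | refl => intro y h1 h2; omega
  | @tail b c hab hbc ih =>
    intro y h1 h2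
    rcases le_or_gt (y + 1) b.2 with hle | hlt
    · exact ih y h1 hle
    · obtain ⟨hbP, hcP, hadj⟩ := hbc
      have hb2 : b.2 = y := by omega
      have hc2 : c.2 = y + 1 := by omega
      have hbc1 : b.1 = c.1 := by omega
      refine ⟨b.1, ?_, ?_⟩
      · have : b = (b.1, y) := Prod.ext rfl hb2
        rwa [this] at hbP
      · have : c = (b.1, y + 1) := Prod.ext hbc1.symm hc2
        rwa [this] at hcP

lemma cross_col (P : Finset Cell) {p q : Cell}
    (h : Relation.ReflTransGen (adjR P) p q) :
    ∀ x, p.1 ≤ x → x + 1 ≤ q.1 → ∃ y, ((x, y) : Cell) ∈ P ∧ ((x + 1, y) : Cell) ∈ P := by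
  induction h with
  | refl => intro x h1 h2; omega
  | @tail b c hab hbc ih =>
    intro x h1 h2
    rcases le_or_gt (x + 1) b.1 with hle | hlt
    · exact ih x h1 hle
    · obtain ⟨hbP, hcP, hadj⟩ := hbc
      have hb1 : b.1 = x := by omega
      have hc1 : c.1 = x + 1 := by omega
      have hbc2 : b.2 = c.2 := by omega
      refine ⟨b.2, ?_, ?_⟩
      · have : b = (x, b.2) := Prod.ext hb1 rfl
        rwa [this] at hbP
      · have : c = (x + 1, b.2) := Prod.ext hc1 hbc2.symm
        rwa [this] at hcP

/-- Abstract corner-emptiness lemma. -/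
lemma corner_aux (Q : ℤ → ℤ → Prop) (s M : ℤ)
    (hrow : ∀ y x1 x2 x : ℤ, Q x1 y → Q x2 y → x1 ≤ x → x ≤ x2 → Q x y)
    (hcol : ∀ x y1 y2 y : ℤ, Q x y1 → Q x y2 → y1 ≤ y → y ≤ y2 → Q x y)
    (hDcol : ∀ x, 0 ≤ x → x < s → ∃ y, Q x y ∧ Q (x+1) y)
    (hDrow : ∀ y, 0 ≤ y → y < s → ∃ x, Q x y ∧ Q x (y+1))
    (hρ : ∀ x y, Q x y ↔ Q (s - y) x)
    (hdiag : ∀ c, Q c c → M ≤ c)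
    (hM2 : 2 * M ≤ s)
    (hcorner : Q (s - M) M)
    (hbound : ∀ x y, Q x y → 0 ≤ x ∧ 0 ≤ y) :
    ∀ y x : ℤ, x < y → y < M → ¬ Q x y := by
  have hrowlt : ∀ y, y < M → ∀ x, x < y → Q x y → ∀ u, Q u y → u < y := by
    intro y hyM x hxy hQ u hu
    by_contra hge
    have : Q y y := hrow y x u y hQ hu (by omega) (by omega)
    have := hdiag y this
    omega
  have aux : ∀ n : ℕ, ∀ x y : ℤ, y = M - 1 - n → x < y → ¬ Q x y := by
    intro n
    induction n with
    | zero =>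
      intro x y hy hxy hQ
      have hy' : y = M - 1 := by omega
      subst hy'
      have hx0 : 0 ≤ x := (hbound _ _ hQ).1
      have hM2' : 2 ≤ M := by omega
      have hall := hrowlt (M-1) (by omega) x hxy hQ
      have hcolQ : ∀ v, Q (s - M + 1) v → v < M - 1 := by
        intro v hv
        have h1 : Q (s - (M - 1)) v := by
          have e : s - (M - 1) = s - M + 1 := by ring
          rw [e]; exact hv
        have h2 : Q v (M - 1) := (hρ v (M - 1)).mpr h1
        exact hall v h2
      obtain ⟨v, hv1, hv2⟩ := hDcol (s - M) (by omega) (by omega)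
      have hvM : v < M - 1 := hcolQ v hv2
      have hQ2 : Q (s - M) (M - 1) := hcol (s - M) v M (M - 1) hv1 hcorner (by omega) (by omega)
      have := hall (s - M) hQ2
      omega
    | succ n ih =>
      intro x y hy hxy hQ
      have hx0 : 0 ≤ x := (hbound _ _ hQ).1
      have hyM : y < M := by omega
      have hall := hrowlt y hyM x hxy hQ
      obtain ⟨x', hx'1, hx'2⟩ := hDrow y (by omega) (by omega)
      have hx'y : x' < y := hall x' hx'1
      exact ih x' (y + 1) (by omega) (by omega) hx'2
  intro y x hxy hyM hQ
  have hx0 : 0 ≤ x := (hbound _ _ hQ).1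
  exact aux (M - 1 - y).toNat x y (by omega) hxy hQ

end S9
namespace S9
open Finset

noncomputable section
open scoped Classical

lemma image_neg_Icc (a b : ℤ) : (Finset.Icc a b).image (fun z => -z) = Finset.Icc (-b) (-a) := by
  ext z
  simp only [Finset.mem_image, Finset.mem_Icc]
  constructor
  · rintro ⟨w, hw, rfl⟩; omega
  · intro h; exact ⟨-z, by omega, by omega⟩

lemma image_add_Icc (a b t : ℤ) : (Finset.Icc a b).image (· + t) = Finset.Icc (a + t) (b + t) := by
  ext z
  simp only [Finset.mem_image, Finset.mem_Icc]
  constructor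
  · rintro ⟨w, hw, rfl⟩; omega
  · intro h; exact ⟨z - t, by omega, by omega⟩

lemma Icc_eq_Icc {a b c d : ℤ} (hab : a ≤ b) (h : Finset.Icc a b = Finset.Icc c d) :
    a = c ∧ b = d := by
  have h1 : a ∈ Finset.Icc c d := h ▸ (Finset.mem_Icc.2 ⟨le_rfl, hab⟩)
  have h2 : b ∈ Finset.Icc c d := h ▸ (Finset.mem_Icc.2 ⟨hab, le_rfl⟩)
  have h3 : c ∈ Finset.Icc a b := h.symm ▸ (Finset.mem_Icc.2 ⟨le_rfl, by
    rw [Finset.mem_Icc] at h1; omega⟩)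
  have h4 : d ∈ Finset.Icc a b := h.symm ▸ (Finset.mem_Icc.2 ⟨by
    rw [Finset.mem_Icc] at h1; omega, le_rfl⟩)
  rw [Finset.mem_Icc] at h1 h2 h3 h4
  omega

set_option maxHeartbeats 2000000 in
theorem extraction {P : Finset Cell} (hpoly : IsPolyomino P) (hconv : IsConvexPoly P)
    (hsym : SymBy rotMap P) (hnorm : Norm P) :
    ∃ (m : ℕ) (a : Fin m → ℕ), 1 ≤ m ∧ Unimodal a ∧ P = F m a := by
  obtain ⟨hpos, ⟨c0, hc0P, hc01⟩, ⟨d0, hd0P, hd02⟩⟩ := hnorm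
  have hne := hpoly.1
  have hXne : (P.image Prod.fst).Nonempty := hne.image _
  have hYne : (P.image Prod.snd).Nonempty := hne.image _
  set sx := (P.image Prod.fst).max' hXne with hsxdef
  set sy := (P.image Prod.snd).max' hYne with hsydef
  have hX : P.image Prod.fst = Finset.Icc 0 sx := by
    ext z
    simp only [Finset.mem_image, Finset.mem_Icc]
    constructor
    · rintro ⟨c, hc, rfl⟩
      exact ⟨(hpos c hc).1, Finset.le_max' _ _ (Finset.mem_image_of_mem _ hc)⟩
    · rintro ⟨h0, h1⟩
      obtain ⟨cm, hcm, hcm1⟩ := Finset.mem_image.1 ((P.image Prod.fst).max'_mem hXne)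
      obtain ⟨c, hc, hc1⟩ := path_iv_fst P (hpoly.2 c0 hc0P cm hcm) hc0P z (by omega) (by omega)
      exact ⟨c, hc, hc1⟩
  have hY : P.image Prod.snd = Finset.Icc 0 sy := by
    ext z
    simp only [Finset.mem_image, Finset.mem_Icc]
    constructor
    · rintro ⟨c, hc, rfl⟩
      exact ⟨(hpos c hc).2, Finset.le_max' _ _ (Finset.mem_image_of_mem _ hc)⟩
    · rintro ⟨h0, h1⟩
      obtain ⟨cm, hcm, hcm1⟩ := Finset.mem_image.1 ((P.image Prod.snd).max'_mem hYne)
      obtain ⟨c, hc, hc1⟩ := path_iv_snd P (hpoly.2 d0 hd0P cm hcm) hd0P z (by omega) (by omega)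
      exact ⟨c, hc, hc1⟩
  have hsx0 : 0 ≤ sx := by
    have : (0 : ℤ) ∈ P.image Prod.fst := Finset.mem_image.2 ⟨c0, hc0P, hc01⟩
    rw [hX, Finset.mem_Icc] at this
    exact this.2
  have hsy0 : 0 ≤ sy := by
    have : (0 : ℤ) ∈ P.image Prod.snd := Finset.mem_image.2 ⟨d0, hd0P, hd02⟩
    rw [hY, Finset.mem_Icc] at this
    exact this.2
  obtain ⟨v, hv⟩ := hsym
  have him1 : (P.image rotMap).image Prod.fst = (P.image Prod.snd).image (fun z => -z) := by
    rw [Finset.image_image, Finset.image_image]; rfl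
  have him2 : (P.image rotMap).image Prod.snd = P.image Prod.fst := by
    rw [Finset.image_image]; rfl
  have heq1 : Finset.Icc (-sy) 0 = Finset.Icc v.1 (sx + v.1) := by
    have e1 := him1
    rw [hv, image_fst_translate, hX, hY, image_neg_Icc, image_add_Icc] at e1
    simpa using e1.symm
  have heq2 : Finset.Icc 0 sx = Finset.Icc v.2 (sy + v.2) := by
    have e2 := him2
    rw [hv, image_snd_translate, hX, hY, image_add_Icc] at e2
    simpa using e2.symm
  obtain ⟨hv1, hv1'⟩ := Icc_eq_Icc (by omega) heq1
  obtain ⟨hv2, hv2'⟩ := Icc_eq_Icc (by omega) heq2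
  set s := sx with hsdef
  have hsxy : sy = s := by omega
  have hρ : ∀ x y : ℤ, ((x, y) : Cell) ∈ P ↔ ((s - y, x) : Cell) ∈ P := by
    intro x y
    constructor
    · intro h
      have h1 : rotMap (x, y) ∈ P.image rotMap := Finset.mem_image_of_mem _ h
      rw [hv, mem_cellTranslate] at h1
      have e : (((rotMap (x, y)).1 - v.1, (rotMap (x, y)).2 - v.2) : Cell) = ((s - y, x) : Cell) := by
        simp only [rotMap]
        apply Prod.ext <;> dsimp <;> omega
      rwa [e] at h1
    · intro h
      have h1 : rotMap (x, y) ∈ cellTranslate v P := by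
        rw [mem_cellTranslate]
        have e : (((rotMap (x, y)).1 - v.1, (rotMap (x, y)).2 - v.2) : Cell) = ((s - y, x) : Cell) := by
          simp only [rotMap]
          apply Prod.ext <;> dsimp <;> omega
        rwa [e]
      rw [← hv] at h1
      obtain ⟨d, hd, hde⟩ := Finset.mem_image.1 h1
      have : d = (x, y) := by
        simp only [rotMap, Prod.ext_iff] at hde
        apply Prod.ext <;> omega
      rwa [this] at hd
  have hbnd : ∀ c ∈ P, 0 ≤ c.1 ∧ c.1 ≤ s ∧ 0 ≤ c.2 ∧ c.2 ≤ s := by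
    intro c hc
    have h1 : c.1 ∈ P.image Prod.fst := Finset.mem_image_of_mem _ hc
    have h2 : c.2 ∈ P.image Prod.snd := Finset.mem_image_of_mem _ hc
    rw [hX, Finset.mem_Icc] at h1
    rw [hY, Finset.mem_Icc] at h2
    omega
  have hσ : ∀ x y : ℤ, ((x, y) : Cell) ∈ P ↔ ((s - x, s - y) : Cell) ∈ P :=
    fun x y => (hρ x y).trans (hρ (s - y) x)
  have hρ' : ∀ x y : ℤ, ((x, y) : Cell) ∈ P ↔ ((y, s - x) : Cell) ∈ P := by
    intro x y
    have h := hρ y (s - x)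
    have e : s - (s - x) = x := by ring
    rw [e] at h
    exact h.symm
  have hrowne : ∀ y : ℤ, 0 ≤ y → y ≤ s → ∃ x : ℤ, ((x, y) : Cell) ∈ P := by
    intro y h0 h1
    have : y ∈ P.image Prod.snd := by rw [hY, Finset.mem_Icc]; omega
    obtain ⟨⟨cx, cy⟩, hc, hc2⟩ := Finset.mem_image.1 this
    dsimp at hc2
    subst hc2
    exact ⟨cx, hc⟩
  have hcolne : ∀ x : ℤ, 0 ≤ x → x ≤ s → ∃ y : ℤ, ((x, y) : Cell) ∈ P := by
    intro x h0 h1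
    have : x ∈ P.image Prod.fst := by rw [hX, Finset.mem_Icc]; omega
    obtain ⟨⟨cx, cy⟩, hc, hc1⟩ := Finset.mem_image.1 this
    dsimp at hc1
    subst hc1
    exact ⟨cy, hc⟩
  have hDrow : ∀ y : ℤ, 0 ≤ y → y < s → ∃ x : ℤ, ((x, y) : Cell) ∈ P ∧ ((x, y + 1) : Cell) ∈ P := by
    intro y h0 h1
    obtain ⟨x1, hx1⟩ := hrowne y (by omega) (by omega)
    obtain ⟨x2, hx2⟩ := hrowne (y + 1) (by omega) (by omega)
    exact cross_row P (hpoly.2 _ hx1 _ hx2) y le_rfl le_rfl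
  have hDcol : ∀ x : ℤ, 0 ≤ x → x < s → ∃ y : ℤ, ((x, y) : Cell) ∈ P ∧ ((x + 1, y) : Cell) ∈ P := by
    intro x h0 h1
    obtain ⟨y1, hy1⟩ := hcolne x (by omega) (by omega)
    obtain ⟨y2, hy2⟩ := hcolne (x + 1) (by omega) (by omega)
    exact cross_col P (hpoly.2 _ hy1 _ hy2) x le_rfl le_rfl
  -- existence of a diagonal cell
  have hdiagex : ∃ c : ℤ, ((c, c) : Cell) ∈ P := by
    set y1 := s / 2 with hy1def
    set y2 := s - y1 with hy2def
    by_contra hno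
    push_neg at hno
    obtain ⟨u1, hu1⟩ := hrowne y1 (by omega) (by omega)
    have hnd1 : ((y1, y1) : Cell) ∉ P := hno y1
    have hnd2 : ((y2, y2) : Cell) ∉ P := hno y2
    have hsplit : (∀ u : ℤ, ((u, y1) : Cell) ∈ P → u < y1) ∨
        (∀ u : ℤ, ((u, y1) : Cell) ∈ P → y1 < u) := by
      by_cases hA : ∀ u : ℤ, ((u, y1) : Cell) ∈ P → u < y1
      · exact Or.inl hA
      · right
        push_neg at hA
        obtain ⟨u0, hu0, hu0'⟩ := hA
        intro u hu
        by_contra hle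
        push_neg at hle
        exact hnd1 (hconv.2 y1 u u0 y1 hu hu0 hle (by omega))
    rcases hsplit with hA | hB
    · have hB2 : ∀ u : ℤ, ((u, y2) : Cell) ∈ P → y2 < u := by
        intro u hu
        have h2 := (hσ u y2).1 hu
        have e : s - y2 = y1 := by omega
        rw [e] at h2
        have := hA _ h2
        omega
      rcases eq_or_lt_of_le (show y1 ≤ y2 by omega) with he | hlt
      · have h1 := hA u1 hu1
        have h2 := hB2 u1 (by rwa [← he])
        omega
      · have hy21 : y2 = y1 + 1 := by omega
        obtain ⟨x, hxa, hxb⟩ := hDrow y1 (by omega) (by omega)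
        have h1 := hA x hxa
        have h2 := hB2 x (by rwa [hy21])
        omega
    · have hA2 : ∀ u : ℤ, ((u, y2) : Cell) ∈ P → u < y2 := by
        intro u hu
        have h2 := (hσ u y2).1 hu
        have e : s - y2 = y1 := by omega
        rw [e] at h2
        have := hB _ h2
        omega
      rcases eq_or_lt_of_le (show y1 ≤ y2 by omega) with he | hlt
      · have h1 := hB u1 hu1
        have h2 := hA2 u1 (by rwa [← he])
        omega
      · have hy21 : y2 = y1 + 1 := by omega
        obtain ⟨x, hxa, hxb⟩ := hDrow y1 (by omega) (by omega)
        have h1 := hB x hxa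
        have h2 := hA2 x (by rwa [hy21])
        omega
  obtain ⟨cdg, hcdgP⟩ := hdiagex
  set Dg := (Finset.Icc (0:ℤ) s).filter (fun z => ((z, z) : Cell) ∈ P) with hDgdef
  have hDgne : Dg.Nonempty := by
    have hb := hbnd _ hcdgP
    exact ⟨cdg, Finset.mem_filter.2 ⟨Finset.mem_Icc.2 ⟨by omega, by omega⟩, hcdgP⟩⟩
  set M := Dg.min' hDgne with hMdef
  have hMP : ((M, M) : Cell) ∈ P := (Finset.mem_filter.1 (Dg.min'_mem hDgne)).2
  have hMmin : ∀ c : ℤ, ((c, c) : Cell) ∈ P → M ≤ c := by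
    intro c hc
    have hb := hbnd _ hc
    exact Dg.min'_le c (Finset.mem_filter.2 ⟨Finset.mem_Icc.2 ⟨by omega, by omega⟩, hc⟩)
  have hM0 : 0 ≤ M := (hbnd _ hMP).1
  have hM2 : 2 * M ≤ s := by
    have h1 := (hσ M M).1 hMP
    have := hMmin _ h1
    omega
  have hcorner1 : ((s - M, M) : Cell) ∈ P := (hρ M M).1 hMP
  have hcornerσ : ((s - M, s - M) : Cell) ∈ P := (hσ M M).1 hMP
  have hcorner2 : ((M, s - M) : Cell) ∈ P := by
    have h := (hρ (s - M) (s - M)).1 hcornerσ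
    have e : s - (s - M) = M := by ring
    rwa [e] at h
  have hsq : ∀ x y : ℤ, M ≤ x → x ≤ s - M → M ≤ y → y ≤ s - M → ((x, y) : Cell) ∈ P := by
    intro x y hx1 hx2 hy1 hy2
    have hrowM : ((x, M) : Cell) ∈ P := hconv.2 M M (s - M) x hMP hcorner1 hx1 hx2
    have hrowsM : ((x, s - M) : Cell) ∈ P := hconv.2 (s - M) M (s - M) x hcorner2 hcornerσ hx1 hx2
    exact hconv.1 x M (s - M) y hrowM hrowsM hy1 hy2
  -- corner emptiness
  have hC1a : ∀ y x : ℤ, x < y → y < M → ¬ ((x, y) : Cell) ∈ P := by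
    refine corner_aux (fun x y => ((x, y) : Cell) ∈ P) s M hconv.2 hconv.1 hDcol hDrow hρ
      hMmin hM2 hcorner1 ?_
    intro x y h
    have := hbnd _ h
    exact ⟨this.1, this.2.2.1⟩
  have hC1b : ∀ y x : ℤ, x < y → y < M → ¬ ((y, x) : Cell) ∈ P := by
    refine corner_aux (fun x y => ((y, x) : Cell) ∈ P) s M
      (fun y x1 x2 x h1 h2 a b => hconv.1 y x1 x2 x h1 h2 a b)
      (fun x y1 y2 y h1 h2 a b => hconv.2 x y1 y2 y h1 h2 a b)
      (fun x h0 h1 => by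
        obtain ⟨u, hu1, hu2⟩ := hDrow x h0 h1
        exact ⟨u, hu1, hu2⟩)
      (fun y h0 h1 => by
        obtain ⟨u, hu1, hu2⟩ := hDcol y h0 h1
        exact ⟨u, hu1, hu2⟩)
      (fun x y => hρ' y x)
      hMmin hM2 hcorner2 ?_
    intro x y h
    have := hbnd _ h
    exact ⟨this.2.2.1, this.1⟩
  have hC1 : ∀ x y : ℤ, x < M → y < M → ¬ ((x, y) : Cell) ∈ P := by
    intro x y hx hy hmem
    rcases lt_trichotomy x y with h | h | h
    · exact hC1a y x h hy hmem
    · subst h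
      have := hMmin x hmem
      omega
    · exact hC1b x y h hx hmem
  have hCall : ∀ x y : ℤ, ((x, y) : Cell) ∈ P →
      (M ≤ x ∧ x ≤ s - M) ∨ (M ≤ y ∧ y ≤ s - M) := by
    intro x y h
    by_contra hcon
    push_neg at hcon
    have hb := hbnd _ h
    rcases lt_or_ge x M with hx | hx
    · rcases lt_or_ge y M with hy | hy
      · exact hC1 x y hx hy h
      · have hy2 : s - M < y := by
          rcases hcon.2 (by omega) with h'
          omega
        -- C4 : apply ρ
        have h2 := (hρ x y).1 h
        exact hC1 (s - y) x (by omega) hx h2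
    · have hx2 : s - M < x := by
        rcases hcon.1 (by omega) with h'
        omega
      rcases lt_or_ge y M with hy | hy
      · have h2 := (hρ' x y).1 h
        exact hC1 y (s - x) hy (by omega) h2
      · have hy2 : s - M < y := by
          rcases hcon.2 (by omega) with h'
          omega
        have h2 := (hσ x y).1 h
        exact hC1 (s - x) (s - y) (by omega) (by omega) h2
  -- define m and the row-minimum function
  have hMs : M ≤ s - M := by omega
  set m : ℕ := (s + 1 - 2*M).toNat with hmdef
  have hm : 1 ≤ m := by omega
  have hmz : (m : ℤ) = s + 1 - 2*M := by omega
  have hex : ∀ y : ℤ, ∃ x0 : ℤ, (0 ≤ y ∧ y ≤ s) →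
      (((x0, y) : Cell) ∈ P ∧ ∀ x : ℤ, ((x, y) : Cell) ∈ P → x0 ≤ x) := by
    intro y
    by_cases hy : 0 ≤ y ∧ y ≤ s
    · obtain ⟨x1, hx1⟩ := hrowne y hy.1 hy.2
      have hne' : (P.filter (fun c => c.2 = y)).Nonempty :=
        ⟨(x1, y), Finset.mem_filter.2 ⟨hx1, rfl⟩⟩
      obtain ⟨b, hb, hbmin⟩ := Finset.exists_min_image (P.filter (fun c => c.2 = y))
        Prod.fst hne'
      obtain ⟨hbP, hby⟩ := Finset.mem_filter.1 hb
      refine ⟨b.1, fun _ => ⟨?_, ?_⟩⟩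
      · rwa [(Prod.ext rfl hby.symm : ((b.1, y) : Cell) = b)]
      · intro x hx
        exact hbmin (x, y) (Finset.mem_filter.2 ⟨hx, rfl⟩)
    · exact ⟨0, fun h => absurd h hy⟩
  choose l hl using hex
  have hlmem : ∀ y : ℤ, M ≤ y → y ≤ s - M → ((l y, y) : Cell) ∈ P := by
    intro y h1 h2
    exact (hl y ⟨by omega, by omega⟩).1
  have hlle : ∀ y x : ℤ, ((x, y) : Cell) ∈ P → l y ≤ x := by
    intro y x h
    have hb := hbnd _ h
    exact (hl y ⟨by omega, by omega⟩).2 x h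
  have hl0 : ∀ y : ℤ, M ≤ y → y ≤ s - M → 0 ≤ l y :=
    fun y h1 h2 => (hbnd _ (hlmem y h1 h2)).1
  have hlM : ∀ y : ℤ, M ≤ y → y ≤ s - M → l y ≤ M :=
    fun y h1 h2 => hlle y M (hsq M y le_rfl hMs h1 h2)
  have hrowchar : ∀ y x : ℤ, M ≤ y → y ≤ s - M →
      (((x, y) : Cell) ∈ P ↔ (l y ≤ x ∧ x ≤ s - l (s - y))) := by
    intro y x h1 h2
    have h1' : M ≤ s - y := by omega
    have h2' : s - y ≤ s - M := by omega
    constructor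
    · intro h
      refine ⟨hlle _ _ h, ?_⟩
      have h3 := (hσ x y).1 h
      have h4 := hlle (s - y) (s - x) h3
      omega
    · rintro ⟨ha, hb⟩
      have hL := hlmem y h1 h2
      have hR : ((s - l (s - y), y) : Cell) ∈ P := by
        have h5 := (hσ (l (s - y)) (s - y)).1 (hlmem (s - y) h1' h2')
        have e : s - (s - y) = y := by ring
        rwa [e] at h5
      exact hconv.2 y (l y) (s - l (s - y)) x hL hR ha hb
  have hcolchar : ∀ x y : ℤ, M ≤ x → x ≤ s - M →
      (((x, y) : Cell) ∈ P ↔ (l (s - x) ≤ y ∧ y ≤ s - l x)) := by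
    intro x y hx1 hx2
    rw [hρ x y]
    rw [hrowchar x (s - y) hx1 hx2]
    constructor
    · rintro ⟨h1, h2⟩; omega
    · rintro ⟨h1, h2⟩; omega
  -- the unimodal sequence
  set a : Fin m → ℕ := fun k => (M - l (M + (k : ℤ))).toNat with hadef
  have hrange : ∀ k : Fin m, M ≤ M + (k : ℤ) ∧ M + (k : ℤ) ≤ s - M := by
    intro k
    have hk := k.2
    have hk' : ((k : ℕ) : ℤ) < (m : ℤ) := by exact_mod_cast hk
    omega
  have hak : ∀ k : Fin m, ((a k : ℕ) : ℤ) = M - l (M + (k : ℤ)) := by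
    intro k
    obtain ⟨hr1, hr2⟩ := hrange k
    have h1 := hl0 _ hr1 hr2
    have h2 := hlM _ hr1 hr2
    rw [hadef]
    dsimp only
    omega
  have haM : ∀ k : Fin m, ((a k : ℕ) : ℤ) ≤ M := by
    intro k
    obtain ⟨hr1, hr2⟩ := hrange k
    have h1 := hl0 _ hr1 hr2
    have := hak k
    omega
  have hlevel : ∀ (k : Fin m) (c : ℤ), 0 ≤ c → c ≤ M →
      (((M - c, M + (k : ℤ)) : Cell) ∈ P ↔ c ≤ ((a k : ℕ) : ℤ)) := by
    intro k c h0 hc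
    obtain ⟨hr1, hr2⟩ := hrange k
    have he := hak k
    constructor
    · intro h
      have := hlle _ _ h
      omega
    · intro h
      exact hconv.2 (M + (k : ℤ)) (l (M + (k : ℤ))) M (M - c) (hlmem _ hr1 hr2)
        (hsq M (M + (k : ℤ)) le_rfl hMs hr1 hr2) (by omega) (by omega)
  have hunim : Unimodal a := by
    obtain ⟨p, _, hp⟩ := Finset.exists_max_image (univ : Finset (Fin m)) a
      ⟨⟨0, hm⟩, Finset.mem_univ _⟩
    refine ⟨p, ?_, ?_⟩
    · intro i j hij hjp
      have hiM := haM i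
      have hi0 : (0 : ℤ) ≤ (a i : ℤ) := Int.natCast_nonneg _
      have h1 : ((M - (a i : ℤ), M + (i : ℤ)) : Cell) ∈ P := (hlevel i _ hi0 hiM).2 le_rfl
      have h2 : ((M - (a i : ℤ), M + (p : ℤ)) : Cell) ∈ P :=
        (hlevel p _ hi0 hiM).2 (by exact_mod_cast hp i (Finset.mem_univ _))
      have hij' : (i : ℤ) ≤ (j : ℤ) := by exact_mod_cast hij
      have hjp' : (j : ℤ) ≤ (p : ℤ) := by exact_mod_cast hjp
      have h3 : ((M - (a i : ℤ), M + (j : ℤ)) : Cell) ∈ P :=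
        hconv.1 (M - (a i : ℤ)) (M + (i : ℤ)) (M + (p : ℤ)) (M + (j : ℤ)) h1 h2
          (by omega) (by omega)
      have := (hlevel j _ hi0 hiM).1 h3
      exact_mod_cast this
    · intro i j hpi hij
      have hjM := haM j
      have hj0 : (0 : ℤ) ≤ (a j : ℤ) := Int.natCast_nonneg _
      have h1 : ((M - (a j : ℤ), M + (j : ℤ)) : Cell) ∈ P := (hlevel j _ hj0 hjM).2 le_rfl
      have h2 : ((M - (a j : ℤ), M + (p : ℤ)) : Cell) ∈ P :=
        (hlevel p _ hj0 hjM).2 (by exact_mod_cast hp j (Finset.mem_univ _))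
      have hpi' : (p : ℤ) ≤ (i : ℤ) := by exact_mod_cast hpi
      have hij' : (i : ℤ) ≤ (j : ℤ) := by exact_mod_cast hij
      have h3 : ((M - (a j : ℤ), M + (i : ℤ)) : Cell) ∈ P :=
        hconv.1 (M - (a j : ℤ)) (M + (p : ℤ)) (M + (j : ℤ)) (M + (i : ℤ)) h2 h1
          (by omega) (by omega)
      have := (hlevel i _ hj0 hjM).1 h3
      exact_mod_cast this
  -- the sup of a is M
  have hsup_le : ((univ.sup a : ℕ) : ℤ) ≤ M := by
    obtain ⟨b, _, hb⟩ := Finset.exists_mem_eq_sup (univ : Finset (Fin m))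
      ⟨⟨0, hm⟩, Finset.mem_univ _⟩ a
    rw [hb]
    exact haM b
  have hsup_ge : M ≤ ((univ.sup a : ℕ) : ℤ) := by
    rcases eq_or_lt_of_le hM0 with h0 | h0
    · omega
    · obtain ⟨y0, hy0⟩ := hcolne 0 le_rfl (by omega)
      have hy0r : M ≤ y0 ∧ y0 ≤ s - M := by
        rcases hCall 0 y0 hy0 with h | h
        · omega
        · exact h
      set k0 : Fin m := ⟨(y0 - M).toNat, by omega⟩ with hk0def
      have hk0 : M + (k0 : ℤ) = y0 := by
        simp only [hk0def]
        omega
      have hly0 : l y0 = 0 := le_antisymm (hlle y0 0 hy0) (hl0 y0 hy0r.1 hy0r.2)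
      have hcalc := hak k0
      rw [hk0, hly0] at hcalc
      have hle : (a k0 : ℕ) ≤ univ.sup a := Finset.le_sup (Finset.mem_univ k0)
      have : ((a k0 : ℕ) : ℤ) ≤ ((univ.sup a : ℕ) : ℤ) := by exact_mod_cast hle
      omega
  refine ⟨m, a, hm, hunim, ?_⟩
  have hMF : MF m a = M := le_antisymm hsup_le hsup_ge
  have hsF : sF m a = s := by
    have : sF m a = 2 * MF m a + (m : ℤ) - 1 := rfl
    rw [this, hMF]
    omega
  have halve : ∀ k : ℤ, 0 ≤ k → k < (m : ℤ) → ((alf m a k : ℕ) : ℤ) = M - l (M + k) := by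
    intro k h0 h1
    set kf : Fin m := ⟨k.toNat, by omega⟩ with hkfdef
    have hcoe : ((kf : ℕ) : ℤ) = k := by
      simp only [hkfdef]
      omega
    rw [alf_eq k kf hcoe, hak kf, hcoe]
  ext ⟨x, y⟩
  rw [mem_F hm]
  dsimp only
  rcases lt_or_ge x M with hx | hx
  · rw [inF_col_left hm (by rw [hMF]; exact hx), hMF, hsF]
    constructor
    · intro hmem
      have hyr : M ≤ y ∧ y ≤ s - M := by
        rcases hCall x y hmem with h | h
        · omega
        · exact h
      have hll := hlle y x hmem
      have he := halve (y - M) (by omega) (by omega)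
      rw [show M + (y - M) = y from by ring] at he
      exact ⟨hyr.1, hyr.2, by omega⟩
    · rintro ⟨h1, h2, h3⟩
      have he := halve (y - M) (by omega) (by omega)
      rw [show M + (y - M) = y from by ring] at he
      rw [hrowchar y x h1 h2]
      have hlsy := hlM (s - y) (by omega) (by omega)
      exact ⟨by omega, by omega⟩
  · rcases le_or_gt x (s - M) with hx2 | hx2
    · rw [inF_col_mid hm (by rw [hMF]; exact hx) (by rw [hMF, hsF]; exact hx2), hMF, hsF]
      have he1 := halve (s - M - x) (by omega) (by omega)
      rw [show M + (s - M - x) = s - x from by ring] at he1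
      have he2 := halve (x - M) (by omega) (by omega)
      rw [show M + (x - M) = x from by ring] at he2
      rw [hcolchar x y hx hx2]
      omega
    · rw [inF_col_right hm (by rw [hMF, hsF]; exact hx2), hMF, hsF]
      constructor
      · intro hmem
        have hyr : M ≤ y ∧ y ≤ s - M := by
          rcases hCall x y hmem with h | h
          · omega
          · exact h
        have he := halve (s - M - y) (by omega) (by omega)
        rw [show M + (s - M - y) = s - y from by ring] at he
        have h5 := (hσ x y).1 hmem
        have hll := hlle (s - y) (s - x) h5
        exact ⟨hyr.1, hyr.2, by omega⟩
      · rintro ⟨h1, h2, h3⟩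
        have he := halve (s - M - y) (by omega) (by omega)
        rw [show M + (s - M - y) = s - y from by ring] at he
        rw [hrowchar y x h1 h2]
        have hlyM := hlM y h1 h2
        exact ⟨by omega, by omega⟩

end
end S9
namespace S9
open Finset

noncomputable section
open scoped Classical

lemma F_le_aux {m : ℕ} {a a' : Fin m → ℕ} (hm : 1 ≤ m)
    (hMM' : MF m a = MF m a') (hsub : ∀ c : Cell, c ∈ F m a → c ∈ F m a') :
    ∀ k : Fin m, a k ≤ a' k := by
  intro k
  have hsf : sF m a = 2 * MF m a + (m : ℤ) - 1 := rfl
  have hsfe : sF m a' = sF m a := by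
    have h1 : sF m a' = 2 * MF m a' + (m : ℤ) - 1 := rfl
    rw [h1, ← hMM', ← hsf]
  have hk := k.2
  have hk' : ((k : ℕ) : ℤ) < (m : ℤ) := by exact_mod_cast hk
  set x : ℤ := MF m a + (k : ℤ) with hxdef
  set y : ℤ := sF m a - MF m a + (a k : ℤ) with hydef
  have hx1 : MF m a ≤ x := by omega
  have hx2 : x ≤ sF m a - MF m a := by omega
  have halfk : alf m a (x - MF m a) = a k := alf_eq _ k (by omega)
  have halfk' : alf m a' (x - MF m a') = a' k := alf_eq _ k (by omega)
  have hA := alf_le (m := m) (a := a) (sF m a - MF m a - x)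
  have hmem : ((x, y) : Cell) ∈ F m a := by
    rw [mem_F hm]
    dsimp only
    rw [inF_col_mid hm hx1 hx2, halfk]
    omega
  have hmem' := hsub _ hmem
  rw [mem_F hm] at hmem'
  dsimp only at hmem'
  rw [inF_col_mid hm (by rw [← hMM']; exact hx1) (by rw [← hMM', hsfe]; exact hx2),
    halfk'] at hmem'
  have := hmem'.2
  rw [hsfe, ← hMM'] at this
  omega

lemma F_inj {m m' : ℕ} {a : Fin m → ℕ} {a' : Fin m' → ℕ} (hm : 1 ≤ m) (hm' : 1 ≤ m')
    (h : F m a = F m' a') : (⟨m, a⟩ : Σ n : ℕ, Fin n → ℕ) = ⟨m', a'⟩ := by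
  have hMle1 : MF m' a' ≤ MF m a := by
    have h1 := center_mem_F (m := m) (a := a) hm
    rw [h, mem_F hm'] at h1
    dsimp only at h1
    rcases h1 with h1 | h1
    · exact h1.1
    · exact h1.1
  have hMle2 : MF m a ≤ MF m' a' := by
    have h1 := center_mem_F (m := m') (a := a') hm'
    rw [← h, mem_F hm] at h1
    dsimp only at h1
    rcases h1 with h1 | h1
    · exact h1.1
    · exact h1.1
  have hMM' : MF m a = MF m' a' := le_antisymm hMle2 hMle1
  have hsup : univ.sup a = univ.sup a' := by
    have : ((univ.sup a : ℕ) : ℤ) = ((univ.sup a' : ℕ) : ℤ) := hMM'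
    exact_mod_cast this
  have hmm' : m = m' := by
    have w1 := width_F (m := m) (a := a) hm
    have w2 := width_F (m := m') (a := a') hm'
    rw [h] at w1
    rw [w2] at w1
    omega
  subst hmm'
  have haa' : a = a' := by
    funext k
    have h1 := F_le_aux hm hMM' (fun c hc => h ▸ hc) k
    have h2 := F_le_aux hm hMM'.symm (fun c hc => h.symm ▸ hc) k
    omega
  rw [haa']

end
end S9

/-- For `p, A ≥ 1`, the number of translation classes of `r`-symmetric convex
polyominoes with half-perimeter `p` and area `A` equals the number of pairs
`(m, (a₁,…,a_m))` with `m ≥ 1`, `(a₁,…,a_m)` a unimodal sequence of nonnegative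
integers, `p = 2m + 4·max_i a_i` and `A = m² + 4·Σ_i a_i`. -/
theorem stmt9 (p A : ℕ) (hp : 1 ≤ p) (hA : 1 ≤ A) :
    classCount (fun P => IsPolyomino P ∧ IsConvexPoly P ∧ SymBy rotMap P ∧
        width P + height P = p ∧ area P = A)
      = Nat.card {x : Σ m : ℕ, Fin m → ℕ //
          1 ≤ x.1 ∧ Unimodal x.2 ∧ p = 2 * x.1 + 4 * Finset.univ.sup x.2 ∧
          A = x.1 ^ 2 + 4 * ∑ i, x.2 i} := by
  classical
  set Φ : Finset Cell → Prop := fun P => IsPolyomino P ∧ IsConvexPoly P ∧ SymBy rotMap P ∧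
    width P + height P = p ∧ area P = A with hΦdef
  have hinv : ∀ (v : Cell) (P : Finset Cell), Φ P → Φ (cellTranslate v P) := by
    rintro v P ⟨h1, h2, h3, h4, h5⟩
    exact ⟨S9.isPolyomino_translate v P h1, S9.isConvexPoly_translate v P h2,
      S9.symBy_rot_translate v P h3,
      by rw [S9.width_translate, S9.height_translate]; exact h4,
      by rw [S9.area_translate]; exact h5⟩
  have hne : ∀ P, Φ P → P.Nonempty := fun P h => h.1.1
  rw [S9.classCount_eq_card_norm Φ hinv hne]
  symm
  apply Nat.card_eq_of_bijective (f := fun x : {x : Σ m : ℕ, Fin m → ℕ //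
      1 ≤ x.1 ∧ Unimodal x.2 ∧ p = 2 * x.1 + 4 * Finset.univ.sup x.2 ∧
      A = x.1 ^ 2 + 4 * ∑ i, x.2 i} =>
    (⟨S9.F x.1.1 x.1.2, by
      obtain ⟨⟨m, a⟩, hm, hu, hp', hA'⟩ := x
      dsimp only at hm hu hp' hA' ⊢
      refine ⟨⟨S9.F_poly hm hu, S9.F_convex hm hu, S9.F_sym hm, ?_, ?_⟩, S9.norm_F hm⟩
      · rw [S9.width_F hm, S9.height_F hm]
        omega
      · rw [S9.area_F hm]
        omega⟩ : {P : Finset Cell // Φ P ∧ S9.Norm P}))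
  constructor
  · rintro ⟨⟨m, a⟩, hm, hu, hp', hA'⟩ ⟨⟨m', a'⟩, hm', hu', hp'', hA''⟩ hfeq
    simp only [Subtype.mk.injEq] at hfeq
    exact Subtype.ext (S9.F_inj hm hm' hfeq)
  · rintro ⟨P, hΦP, hNP⟩
    obtain ⟨h1, h2, h3, h4, h5⟩ := hΦP
    obtain ⟨m, a, hm, hu, hPF⟩ := S9.extraction h1 h2 h3 hNP
    have hwidth : width P = 2 * Finset.univ.sup a + m := by rw [hPF]; exact S9.width_F hm
    have hheight : height P = 2 * Finset.univ.sup a + m := by rw [hPF]; exact S9.height_F hm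
    have harea : area P = m ^ 2 + 4 * ∑ k, a k := by rw [hPF]; exact S9.area_F hm
    refine ⟨⟨⟨m, a⟩, hm, hu, by dsimp only; omega, by dsimp only; omega⟩, ?_⟩
    exact Subtype.ext hPF.symm
end
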